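/- arXiv:1408.0847 — 11 statements merged into one kernel-verified Lean document; each statement's English description precedes it below -/
import Mathlib

section
/- Under the standing assumptions on f̃, the function Ψ is finite-valued and there exists a unique a̲ ∈ ℝ with a̲ < ā such that Ψ(a̲) = 0; moreover Ψ(x) < 0 for every x < a̲ and Ψ(x) > 0 for every x > a̲. -/
open MeasureTheory Filter Set

/-- `Ψ(s) = ∫_s^∞ e^{-Φ(y-s)} f̃'(y) dy`, where `g` plays the role of `f̃'`. -/
noncomputable def Psi (Φ : ℝ) (g : ℝ → ℝ) (s : ℝ) : ℝ :=
  ∫ y in Set.Ioi s, Real.exp (-(Φ * (y - s))) * g y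

open Topology


/-- poly times decaying exp tends to zero -/
lemma aux_tendsto_poly_exp (n : ℕ) {b : ℝ} (hb : 0 < b) (c : ℝ) :
    Tendsto (fun x : ℝ => (c + x) ^ n * Real.exp (-(b * x))) atTop (𝓝 0) := by
  have h1 : Tendsto (fun y : ℝ => y ^ n * Real.exp (-y)) atTop (𝓝 0) :=
    Real.tendsto_pow_mul_exp_neg_atTop_nhds_zero n
  have h2 : Tendsto (fun x : ℝ => b * (c + x)) atTop atTop :=
    (tendsto_atTop_add_const_left _ c tendsto_id).const_mul_atTop hb
  have h3 : Tendsto (fun x : ℝ => (b * (c + x)) ^ n * Real.exp (-(b * (c + x)))) atTop (𝓝 0) := by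
    exact h1.comp h2
  have h4 : Tendsto (fun x : ℝ =>
      (b ^ n)⁻¹ * Real.exp (b * c) * ((b * (c + x)) ^ n * Real.exp (-(b * (c + x))))) atTop
      (𝓝 ((b ^ n)⁻¹ * Real.exp (b * c) * 0)) := h3.const_mul _
  rw [mul_zero] at h4
  refine h4.congr fun x => ?_
  rw [mul_pow]
  have : Real.exp (-(b * (c + x))) = Real.exp (-(b * x)) / Real.exp (b * c) := by
    rw [← Real.exp_sub]; ring_nf
  rw [this]
  field_simp

/-- exponential times polynomial is integrable on `Ioi s`. -/
lemma aux_integrableOn_exp_poly {Φ : ℝ} (hΦ : 0 < Φ) (s C : ℝ) (n : ℕ) :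
    IntegrableOn (fun y => Real.exp (-(Φ * (y - s))) * (C * (1 + |y|) ^ n)) (Ioi s) := by
  apply integrable_of_isBigO_exp_neg (b := Φ / 2) (half_pos hΦ)
  · exact (((Real.continuous_exp.comp (by fun_prop)).mul (by fun_prop))).continuousOn
  · have hlim : Tendsto (fun y : ℝ =>
        (Real.exp (-(Φ * (y - s))) * (C * (1 + |y|) ^ n)) / Real.exp (-(Φ / 2) * y)) atTop
        (𝓝 0) := by
      have h0 : Tendsto (fun y : ℝ =>
          (C * Real.exp (Φ * s)) * ((1 + y) ^ n * Real.exp (-(Φ / 2 * y)))) atTop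
          (𝓝 ((C * Real.exp (Φ * s)) * 0)) :=
        (aux_tendsto_poly_exp n (half_pos hΦ) 1).const_mul _
    
      rw [mul_zero] at h0
      apply h0.congr'
      filter_upwards [eventually_ge_atTop (0 : ℝ)] with y hy
      rw [abs_of_nonneg hy, eq_div_iff (Real.exp_ne_zero _),
        show (-(Φ * (y - s))) = Φ * s + (-(Φ / 2 * y) + -(Φ / 2 * y)) by ring,
        Real.exp_add, Real.exp_add]
      ring_nf
    exact (Asymptotics.isLittleO_iff_tendsto fun y h =>
      absurd h (Real.exp_ne_zero _)).2 hlim |>.isBigO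

lemma aux_integrableOn_exp_mul {Φ : ℝ} (hΦ : 0 < Φ) {F : ℝ → ℝ} (s : ℝ)
    (hF : AEStronglyMeasurable F (volume.restrict (Ioi s)))
    {C : ℝ} {n : ℕ} (hbound : ∀ y, |F y| ≤ C * (1 + |y|) ^ n) :
    IntegrableOn (fun y => Real.exp (-(Φ * (y - s))) * F y) (Ioi s) := by
  refine (aux_integrableOn_exp_poly hΦ s C n).mono'
    ((Real.continuous_exp.comp (by fun_prop)).aestronglyMeasurable.mul hF) ?_
  refine Filter.Eventually.of_forall fun y => ?_
  have h1 : (0:ℝ) < Real.exp (-(Φ * (y - s))) := Real.exp_pos _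
  rw [Real.norm_eq_abs, abs_mul, abs_of_pos h1]
  exact mul_le_mul_of_nonneg_left (hbound y) h1.le

lemma aux_shift (F : ℝ → ℝ) (s : ℝ) :
    ∫ y in Ioi s, F y = ∫ t in Ioi (0:ℝ), F (t + s) := by
  have h := (measurePreserving_add_right volume s).setIntegral_preimage_emb
    (measurableEmbedding_addRight s) F (Ioi s)
  have hpre : (· + s) ⁻¹' (Ioi s) = Ioi (0:ℝ) := by
    ext x; simp [Set.mem_preimage]
  rw [hpre] at h
  exact h.symm

lemma aux_fourpt_core {S : Set ℝ} {f : ℝ → ℝ} (hf : ConvexOn ℝ S f) {a b t : ℝ}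
    (ha : a ∈ S) (hbt : b + t ∈ S) (hab : a ≤ b) (ht : 0 ≤ t) :
    f b + f (t + a) ≤ f a + f (t + b) := by
  rcases eq_or_lt_of_le (by linarith : a ≤ b + t) with heq | hlt
  · have hb : b = a := le_antisymm (by linarith) hab
    have ht0 : t = 0 := by linarith
    simp [hb, ht0]
  · set L : ℝ := b + t - a with hL
    have hL0 : 0 < L := by simp [hL]; linarith
    have hlam : (0:ℝ) ≤ t / L := div_nonneg ht hL0.le
    have hmu : (0:ℝ) ≤ (b - a) / L := div_nonneg (by linarith) hL0.le
    have hsum : t / L + (b - a) / L = 1 := by field_simp; rw [hL]; ring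
    have h1 := hf.2 ha hbt hlam hmu hsum
    have h2 := hf.2 ha hbt hmu hlam (by linarith)
    have e1 : (t / L) • a + ((b - a) / L) • (b + t) = b := by
      simp only [smul_eq_mul]; field_simp; ring
    have e2 : ((b - a) / L) • a + (t / L) • (b + t) = t + a := by
      simp only [smul_eq_mul]; field_simp; ring
    rw [e1] at h1; rw [e2] at h2
    simp only [smul_eq_mul] at h1 h2
    have : t + b = b + t := by ring
    rw [this]
    have e3 : t / L * f a + (b - a) / L * f (b + t) + ((b - a) / L * f a + t / L * f (b + t)) =
        f a + f (b + t) := by linear_combination (f a + f (b + t)) * hsum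
    linarith [h1, h2, e3]

lemma aux_seq_tendsto (x : ℝ) :
    Tendsto (fun n : ℕ => x - 1 / (n + 1)) atTop (𝓝 x) := by
  simpa using tendsto_const_nhds.sub (tendsto_one_div_add_atTop_nhds_zero_nat (𝕜 := ℝ))

lemma aux_seq_tendsto' (x : ℝ) :
    Tendsto (fun n : ℕ => x + 1 / (n + 1)) atTop (𝓝 x) := by
  simpa using tendsto_const_nhds.add (tendsto_one_div_add_atTop_nhds_zero_nat (𝕜 := ℝ))

lemma aux_eps_pos (n : ℕ) : (0:ℝ) < 1 / (n + 1) := by positivity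

lemma aux_fourpt {A : ℝ} {f : ℝ → ℝ} (hconv : ConvexOn ℝ (Iio A) f) (hc : Continuous f)
    {a b t : ℝ} (hab : a ≤ b) (ht : 0 ≤ t) (hbt : b + t ≤ A) :
    f b + f (t + a) ≤ f a + f (t + b) := by
  have key : ∀ n : ℕ, f (b - 1 / (n + 1)) + f (t + (a - 1 / (n + 1))) ≤
      f (a - 1 / (n + 1)) + f (t + (b - 1 / (n + 1))) := by
    intro n
    have hε := aux_eps_pos n
    exact aux_fourpt_core hconv (by simp only [mem_Iio]; linarith)
      (by simp only [mem_Iio]; linarith) (by linarith) ht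
  refine le_of_tendsto_of_tendsto'
    (((hc.tendsto b).comp (aux_seq_tendsto b)).add
      ((hc.tendsto (t + a)).comp (tendsto_const_nhds.add (aux_seq_tendsto a))))
    (((hc.tendsto a).comp (aux_seq_tendsto a)).add
      ((hc.tendsto (t + b)).comp (tendsto_const_nhds.add (aux_seq_tendsto b)))) key

lemma aux_antitoneOn {A : ℝ} {f : ℝ → ℝ} (hf : StrictAntiOn f (Iio A)) (hc : Continuous f) :
    AntitoneOn f (Iic A) := by
  intro a ha b hb hab
  have key : ∀ n : ℕ, f (b - 1 / (n + 1)) ≤ f (a - 1 / (n + 1)) := by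
    intro n
    have hε := aux_eps_pos n
    exact hf.antitoneOn (by simp only [mem_Iio]; have := mem_Iic.1 ha; linarith)
      (by simp only [mem_Iio]; have := mem_Iic.1 hb; linarith) (by linarith)
  exact le_of_tendsto_of_tendsto' ((hc.tendsto b).comp (aux_seq_tendsto b))
    ((hc.tendsto a).comp (aux_seq_tendsto a)) key

lemma aux_monotoneOn {A : ℝ} {f : ℝ → ℝ} (hf : StrictMonoOn f (Ioi A)) (hc : Continuous f) :
    MonotoneOn f (Ici A) := by
  intro a ha b hb hab
  have key : ∀ n : ℕ, f (a + 1 / (n + 1)) ≤ f (b + 1 / (n + 1)) := by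
    intro n
    have hε := aux_eps_pos n
    exact hf.monotoneOn (by simp only [mem_Ioi]; have := mem_Ici.1 ha; linarith)
      (by simp only [mem_Ioi]; have := mem_Ici.1 hb; linarith) (by linarith)
  exact le_of_tendsto_of_tendsto' ((hc.tendsto a).comp (aux_seq_tendsto' a))
    ((hc.tendsto b).comp (aux_seq_tendsto' b)) key

lemma aux_K {A : ℝ} {f : ℝ → ℝ} (hconv : ConvexOn ℝ (Iio A) f) (hc : Continuous f)
    (hMono : MonotoneOn f (Ici A)) (hAnti : AntitoneOn f (Iic A))
    {a b t : ℝ} (hab : a ≤ b) (hb : b ≤ A) (ht : 0 ≤ t) :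
    f (t + a) - f a ≤ f (t + b) - f b := by
  rcases le_or_gt (t + b) A with h1 | h1
  · have h := aux_fourpt hconv hc hab ht (by linarith : b + t ≤ A)
    linarith
  rcases le_or_gt A (t + a) with h2 | h2
  · have hm := hMono (mem_Ici.2 h2) (mem_Ici.2 (by linarith : A ≤ t + b)) (by linarith)
    have han := hAnti (mem_Iic.2 (hab.trans hb)) (mem_Iic.2 hb) hab
    linarith
  · set c := A - t with hcdef
    have hac : a ≤ c := by simp only [hcdef]; linarith
    have hcb : c ≤ b := by simp only [hcdef]; linarith
    have hcA : c ≤ A := by simp only [hcdef]; linarith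
    have htc : t + c = A := by simp only [hcdef]; ring
    have h3 : f (t + a) - f a ≤ f (t + c) - f c := by
      have h := aux_fourpt hconv hc hac ht (by rw [add_comm]; rw [htc])
      linarith
    rw [htc] at h3
    have h4 : f A ≤ f (t + b) := hMono (mem_Ici.2 le_rfl) (mem_Ici.2 h1.le) h1.le
    have h5 : f b ≤ f c := hAnti (mem_Iic.2 hcA) (mem_Iic.2 hb) hcb
    linarith

lemma aux_Ks {A : ℝ} {f : ℝ → ℝ} (hMonoS : StrictMonoOn f (Ioi A))
    (hAnti : AntitoneOn f (Iic A)) {a b t : ℝ} (hab : a < b) (hb : b ≤ A) (ht : A - a < t) :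
    f (t + a) - f a < f (t + b) - f b := by
  have h1 : A < t + a := by linarith
  have h2 := hMonoS (mem_Ioi.2 h1) (mem_Ioi.2 (by linarith : A < t + b)) (by linarith)
  have h3 := hAnti (mem_Iic.2 (hab.le.trans hb)) (mem_Iic.2 hb) hab.le
  linarith

lemma aux_pos_incr {A : ℝ} {f : ℝ → ℝ} (hMonoS : StrictMonoOn f (Ioi A))
    (hMono : MonotoneOn f (Ici A)) {x t : ℝ} (hx : A ≤ x) (ht : 0 < t) : f x < f (t + x) :=
  calc f x ≤ f (t / 2 + x) := hMono (mem_Ici.2 hx) (mem_Ici.2 (by linarith)) (by linarith)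
  _ < f (t + x) := hMonoS (mem_Ioi.2 (by linarith)) (mem_Ioi.2 (by linarith)) (by linarith)

lemma aux_poly_shift {F : ℝ → ℝ} {C : ℝ} {n : ℕ} (hF : ∀ x, |F x| ≤ C * (1 + |x|) ^ n)
    (s t : ℝ) : |F (t + s)| ≤ (C * (1 + |s|) ^ n) * (1 + |t|) ^ n := by
  have hC : 0 ≤ C := le_trans (abs_nonneg _) (by simpa using hF 0)
  calc |F (t + s)| ≤ C * (1 + |t + s|) ^ n := hF _
  _ ≤ C * ((1 + |t|) * (1 + |s|)) ^ n := by
      gcongr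
      · nlinarith [abs_add_le t s, abs_nonneg t, abs_nonneg s, mul_nonneg (abs_nonneg t) (abs_nonneg s)]
  _ = (C * (1 + |s|) ^ n) * (1 + |t|) ^ n := by rw [mul_pow]; ring

lemma aux_diff_bound {f : ℝ → ℝ} {C : ℝ} {n : ℕ} (hCf : ∀ x, |f x| ≤ C * (1 + |x|) ^ n)
    (s t : ℝ) : |f (t + s) - f s| ≤ (C * (1 + |s|) ^ n + |f s|) * (1 + |t|) ^ n := by
  have h1 := aux_poly_shift hCf s t
  have h2 : (1:ℝ) ≤ (1 + |t|) ^ n := one_le_pow₀ (by linarith [abs_nonneg t])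
  have h3 : |f (t + s) - f s| ≤ |f (t + s)| + |f s| := by
    simpa [sub_eq_add_neg] using abs_add_le (f (t + s)) (-(f s))
  nlinarith [abs_nonneg (f s)]

lemma aux_Ig {Φ : ℝ} (hΦ : 0 < Φ) {g : ℝ → ℝ} (hg_meas : Measurable g)
    {Cg : ℝ} {ng : ℕ} (hCg : ∀ x, |g x| ≤ Cg * (1 + |x|) ^ ng) (s : ℝ) :
    IntegrableOn (fun t => Real.exp (-(Φ * t)) * g (t + s)) (Ioi (0:ℝ)) := by
  have h := aux_integrableOn_exp_mul hΦ (F := fun t => g (t + s)) (0:ℝ)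
    ((hg_meas.comp (measurable_add_const s)).aestronglyMeasurable)
    (C := Cg * (1 + |s|) ^ ng) (n := ng) (fun y => aux_poly_shift hCg s y)
  simpa using h

lemma aux_If {Φ : ℝ} (hΦ : 0 < Φ) {f : ℝ → ℝ} (hf_cont : Continuous f)
    {Cf : ℝ} {nf : ℕ} (hCf : ∀ x, |f x| ≤ Cf * (1 + |x|) ^ nf) (s : ℝ) :
    IntegrableOn (fun t => Real.exp (-(Φ * t)) * (f (t + s) - f s)) (Ioi (0:ℝ)) := by
  have h := aux_integrableOn_exp_mul hΦ (F := fun t => f (t + s) - f s) (0:ℝ)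
    (((hf_cont.comp (continuous_add_right s)).sub continuous_const).aestronglyMeasurable)
    (C := Cf * (1 + |s|) ^ nf + |f s|) (n := nf) (fun y => aux_diff_bound hCf s y)
  simpa using h

lemma aux_identity {Φ : ℝ} (hΦ : 0 < Φ) {f g : ℝ → ℝ} {D : Set ℝ} (hD : D.Countable)
    (hfD : ∀ x ∉ D, HasDerivAt f (g x) x) (hf_cont : Continuous f) (hg_meas : Measurable g)
    {Cf : ℝ} {nf : ℕ} (hCf : ∀ x, |f x| ≤ Cf * (1 + |x|) ^ nf)
    {Cg : ℝ} {ng : ℕ} (hCg : ∀ x, |g x| ≤ Cg * (1 + |x|) ^ ng) (s : ℝ) :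
    Psi Φ g s = Φ * ∫ t in Ioi (0:ℝ), Real.exp (-(Φ * t)) * (f (t + s) - f s) := by
  have hIg := aux_Ig hΦ hg_meas hCg s
  have hIf := aux_If hΦ hf_cont hCf s
  have hshift : Psi Φ g s = ∫ t in Ioi (0:ℝ), Real.exp (-(Φ * t)) * g (t + s) := by
    rw [Psi, aux_shift (fun y => Real.exp (-(Φ * (y - s))) * g y) s]
    simp only [add_sub_cancel_right]
  set W : ℝ → ℝ := fun t => Real.exp (-(Φ * t)) * (f (t + s) - f s) with hW
  set W' : ℝ → ℝ := fun t =>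
    Real.exp (-(Φ * t)) * g (t + s) - Φ * (Real.exp (-(Φ * t)) * (f (t + s) - f s)) with hW'
  have hIW' : IntegrableOn W' (Ioi (0:ℝ)) := hIg.sub (hIf.const_mul Φ)
  have hDW : ∀ t : ℝ, (t + s) ∉ D → HasDerivAt W (W' t) t := by
    intro t hts
    have h1 : HasDerivAt (fun u : ℝ => -(Φ * u)) (-Φ) t := by
      simpa using ((hasDerivAt_id t).const_mul Φ).fun_neg
    have h2 : HasDerivAt (fun u : ℝ => Real.exp (-(Φ * u))) (Real.exp (-(Φ * t)) * (-Φ)) t :=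
      h1.exp
    have h3 : HasDerivAt (fun u : ℝ => u + s) 1 t := (hasDerivAt_id t).add_const s
    have h4 : HasDerivAt (fun u : ℝ => f (u + s)) (g (t + s)) t := by
      have := (hfD _ hts).comp t h3; rw [mul_one] at this; exact this
    have h5 : HasDerivAt (fun u : ℝ => f (u + s) - f s) (g (t + s)) t := h4.sub_const _
    have h6 := h2.fun_mul h5
    refine h6.congr_deriv ?_
    simp only [hW']
    ring
  have hWcont : Continuous W := by
    exact (Real.continuous_exp.comp (by fun_prop)).mul
      ((hf_cont.comp (continuous_add_right s)).sub continuous_const)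
  have hFTC : ∀ T : ℝ, 0 ≤ T → ∫ t in (0:ℝ)..T, W' t = W T := by
    intro T hT
    have hDc : ((fun u : ℝ => u + s) ⁻¹' D).Countable := hD.preimage (add_left_injective s)
    have h := MeasureTheory.integral_eq_of_hasDerivAt_off_countable_of_le W W' hT hDc
      hWcont.continuousOn
      (fun x hx => hDW x (by simpa using hx.2))
      ((intervalIntegrable_iff_integrableOn_Ioc_of_le hT).2 (hIW'.mono_set Ioc_subset_Ioi_self))
    rw [h]
    simp [hW]
  have hlim1 : Tendsto (fun T => ∫ t in (0:ℝ)..T, W' t) atTop (𝓝 (∫ t in Ioi (0:ℝ), W' t)) :=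
    intervalIntegral_tendsto_integral_Ioi 0 hIW' tendsto_id
  have hlim2 : Tendsto W atTop (𝓝 0) := by
    have hb : Tendsto (fun T : ℝ =>
        (Cf * (1 + |s|) ^ nf + |f s|) * ((1 + T) ^ nf * Real.exp (-(Φ * T)))) atTop
        (𝓝 ((Cf * (1 + |s|) ^ nf + |f s|) * 0)) :=
      (aux_tendsto_poly_exp nf hΦ 1).const_mul _
    rw [mul_zero] at hb
    apply squeeze_zero_norm' _ hb
    filter_upwards [eventually_ge_atTop (0:ℝ)] with T hT
    have h1 := aux_diff_bound hCf s T
    rw [abs_of_nonneg hT] at h1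
    have h2 : ‖W T‖ = Real.exp (-(Φ * T)) * |f (T + s) - f s| := by
      rw [hW]; rw [Real.norm_eq_abs, abs_mul, abs_of_pos (Real.exp_pos _)]
    rw [h2]
    calc Real.exp (-(Φ * T)) * |f (T + s) - f s|
        ≤ Real.exp (-(Φ * T)) * ((Cf * (1 + |s|) ^ nf + |f s|) * (1 + T) ^ nf) :=
          mul_le_mul_of_nonneg_left h1 (Real.exp_pos _).le
      _ = (Cf * (1 + |s|) ^ nf + |f s|) * ((1 + T) ^ nf * Real.exp (-(Φ * T))) := by ring
  have hzero : ∫ t in Ioi (0:ℝ), W' t = 0 := by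
    have heq : (fun T => ∫ t in (0:ℝ)..T, W' t) =ᶠ[atTop] W := by
      filter_upwards [eventually_ge_atTop (0:ℝ)] with T hT
      exact hFTC T hT
    exact tendsto_nhds_unique (hlim1.congr' heq) hlim2
  have hsub : ∫ t in Ioi (0:ℝ), W' t =
      (∫ t in Ioi (0:ℝ), Real.exp (-(Φ * t)) * g (t + s)) -
        Φ * ∫ t in Ioi (0:ℝ), Real.exp (-(Φ * t)) * (f (t + s) - f s) := by
    rw [hW']
    rw [integral_sub hIg (hIf.const_mul Φ), MeasureTheory.integral_const_mul]
  rw [hshift]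
  rw [hsub] at hzero
  linarith

lemma aux_Hcont {Φ : ℝ} (hΦ : 0 < Φ) {f : ℝ → ℝ} (hf_cont : Continuous f)
    {Cf : ℝ} {nf : ℕ} (hCf : ∀ x, |f x| ≤ Cf * (1 + |x|) ^ nf) :
    Continuous (fun s => ∫ t in Ioi (0:ℝ), Real.exp (-(Φ * t)) * (f (t + s) - f s)) := by
  have hCf0 : 0 ≤ Cf := le_trans (abs_nonneg _) (by simpa using hCf 0)
  rw [continuous_iff_continuousAt]
  intro s0
  apply continuousAt_of_dominated
    (bound := fun t => Real.exp (-(Φ * t)) * ((2 * Cf * (2 + |s0|) ^ nf) * (1 + |t|) ^ nf))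
  · exact Eventually.of_forall fun s =>
      ((Real.continuous_exp.comp (by fun_prop)).mul
        ((hf_cont.comp (continuous_add_right s)).sub continuous_const)).aestronglyMeasurable
  · filter_upwards [Metric.closedBall_mem_nhds s0 one_pos] with s hs
    refine Eventually.of_forall fun t => ?_
    have hdist : |s - s0| ≤ 1 := by
      have := Metric.mem_closedBall.1 hs
      rwa [Real.dist_eq] at this
    have hss0 : |s| ≤ 1 + |s0| := by
      have := abs_sub_abs_le_abs_sub s s0
      linarith
    have h1 := aux_diff_bound hCf s t
    have h2 : Cf * (1 + |s|) ^ nf + |f s| ≤ 2 * Cf * (2 + |s0|) ^ nf := by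
      have h3 : (1 + |s|) ^ nf ≤ (2 + |s0|) ^ nf :=
        pow_le_pow_left₀ (by linarith [abs_nonneg s]) (by linarith) nf
      have h4 : |f s| ≤ Cf * (1 + |s|) ^ nf := hCf s
      nlinarith
    have h5 : (0:ℝ) < Real.exp (-(Φ * t)) := Real.exp_pos _
    rw [Real.norm_eq_abs, abs_mul, abs_of_pos h5]
    have h6 : (0:ℝ) ≤ (1 + |t|) ^ nf := by positivity
    calc Real.exp (-(Φ * t)) * |f (t + s) - f s|
        ≤ Real.exp (-(Φ * t)) * ((Cf * (1 + |s|) ^ nf + |f s|) * (1 + |t|) ^ nf) :=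
          mul_le_mul_of_nonneg_left h1 h5.le
      _ ≤ Real.exp (-(Φ * t)) * ((2 * Cf * (2 + |s0|) ^ nf) * (1 + |t|) ^ nf) := by
          apply mul_le_mul_of_nonneg_left _ h5.le
          exact mul_le_mul_of_nonneg_right h2 h6
  · have h := aux_integrableOn_exp_poly hΦ (0:ℝ) (2 * Cf * (2 + |s0|) ^ nf) nf
    simpa [IntegrableOn] using h
  · refine Eventually.of_forall fun t => ?_
    exact (continuous_const.mul
      ((hf_cont.comp (continuous_const.add continuous_id)).sub hf_cont)).continuousAt

lemma aux_integral_pos {φ : ℝ → ℝ} (hint : IntegrableOn φ (Ioi (0:ℝ)))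
    (hnonneg : ∀ t ∈ Ioi (0:ℝ), 0 ≤ φ t) (T : ℝ) (hpos : ∀ t, T < t → 0 < φ t) :
    0 < ∫ t in Ioi (0:ℝ), φ t := by
  rw [setIntegral_pos_iff_support_of_nonneg_ae
    ((ae_restrict_iff' measurableSet_Ioi).2 (Eventually.of_forall hnonneg)) hint]
  have hsub : Ioi (max T 0) ⊆ Function.support φ ∩ Ioi 0 := by
    intro t ht
    have ht' : T < t := lt_of_le_of_lt (le_max_left _ _) ht
    have ht0 : 0 < t := lt_of_le_of_lt (le_max_right _ _) ht
    exact ⟨ne_of_gt (hpos t ht'), ht0⟩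
  calc (0:ENNReal) < ⊤ := by simp
  _ = volume (Ioi (max T 0)) := (Real.volume_Ioi).symm
  _ ≤ volume (Function.support φ ∩ Ioi 0) := measure_mono hsub

lemma aux_int_poly0 {Φ : ℝ} (hΦ : 0 < Φ) (C : ℝ) (n : ℕ) :
    IntegrableOn (fun t => Real.exp (-(Φ * t)) * (C * (1 + |t|) ^ n)) (Ioi (0:ℝ)) := by
  simpa using aux_integrableOn_exp_poly hΦ 0 C n

lemma aux_Hneg {Φ : ℝ} (hΦ : 0 < Φ) {f : ℝ → ℝ} {abar : ℝ} (hf_cont : Continuous f)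
    (hf_inc : StrictMonoOn f (Ioi abar)) (hf_dec : StrictAntiOn f (Iio abar))
    (hf_conv : ConvexOn ℝ (Iio abar) f)
    {Cf : ℝ} {nf : ℕ} (hCf : ∀ x, |f x| ≤ Cf * (1 + |x|) ^ nf) :
    ∃ s, s < abar ∧ (∫ t in Ioi (0:ℝ), Real.exp (-(Φ * t)) * (f (t + s) - f s)) < 0 := by
  have hCf0 : 0 ≤ Cf := le_trans (abs_nonneg _) (by simpa using hCf 0)
  have hMono := aux_monotoneOn hf_inc hf_cont
  have hAnti := aux_antitoneOn hf_dec hf_cont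
  set δ0 : ℝ := f (abar - 2) - f (abar - 1) with hδ0def
  have hδ0 : 0 < δ0 := by
    have := hf_dec (show abar - 2 ∈ Iio abar by simp only [mem_Iio]; linarith)
      (show abar - 1 ∈ Iio abar by simp only [mem_Iio]; linarith) (by linarith)
    simp only [hδ0def]; linarith
  set K0 : ℝ := ∫ t in Ioi (0:ℝ), Real.exp (-(Φ / 2 * t)) * (1 + |t|) ^ nf with hK0def
  have hK0int : IntegrableOn (fun t => Real.exp (-(Φ / 2 * t)) * (1 + |t|) ^ nf)
      (Ioi (0:ℝ)) := by
    have h := aux_int_poly0 (half_pos hΦ) 1 nf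
    simpa using h
  have hK0 : 0 ≤ K0 := by
    rw [hK0def]
    apply setIntegral_nonneg measurableSet_Ioi
    intro t _
    positivity
  -- the decay bound G
  set G : ℝ → ℝ := fun r =>
    Real.exp (-(Φ / 2 * r)) * (2 * Cf * ((1 + |abar|) + r) ^ nf * K0) with hGdef
  have hG : Tendsto G atTop (𝓝 0) := by
    have h := (aux_tendsto_poly_exp nf (half_pos hΦ) (1 + |abar|)).const_mul (2 * Cf * K0)
    rw [mul_zero] at h
    refine h.congr fun r => ?_
    simp only [hGdef]; ring
  have hε : (0:ℝ) < δ0 * Real.exp (-(Φ * 2)) := by positivity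
  obtain ⟨r, hr⟩ := ((hG.eventually (gt_mem_nhds hε)).and (eventually_ge_atTop (3:ℝ))).exists
  obtain ⟨hGr, hr3⟩ := hr
  set s : ℝ := abar - r with hsdef
  refine ⟨s, by simp only [hsdef]; linarith, ?_⟩
  set φ : ℝ → ℝ := fun t => Real.exp (-(Φ * t)) * (f (t + s) - f s) with hφdef
  have hIφ : IntegrableOn φ (Ioi (0:ℝ)) := aux_If hΦ hf_cont hCf s
  -- split the integral
  have hsplit : ∫ t in Ioi (0:ℝ), φ t =
      (∫ t in Ioc (0:ℝ) 1, φ t) + (∫ t in Ioc (1:ℝ) 2, φ t) + (∫ t in Ioc (2:ℝ) r, φ t) +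
        ∫ t in Ioi r, φ t := by
    have e1 : Ioi (0:ℝ) = Ioc (0:ℝ) r ∪ Ioi r := (Ioc_union_Ioi_eq_Ioi (by linarith)).symm
    have e2 : Ioc (0:ℝ) r = Ioc (0:ℝ) 2 ∪ Ioc (2:ℝ) r := (Ioc_union_Ioc_eq_Ioc (by norm_num)
      (by linarith)).symm
    have e3 : Ioc (0:ℝ) 2 = Ioc (0:ℝ) 1 ∪ Ioc (1:ℝ) 2 := (Ioc_union_Ioc_eq_Ioc (by norm_num)
      (by norm_num)).symm
    rw [e1, setIntegral_union Ioc_disjoint_Ioi_same measurableSet_Ioi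
      (hIφ.mono_set (by rw [e1]; exact subset_union_left))
      (hIφ.mono_set (by rw [e1]; exact subset_union_right))]
    rw [e2, setIntegral_union (Ioc_disjoint_Ioc_of_le le_rfl) measurableSet_Ioc
      (hIφ.mono_set (by rw [e1, e2]; exact subset_union_left.trans subset_union_left))
      (hIφ.mono_set (by rw [e1, e2]; exact subset_union_right.trans subset_union_left))]
    rw [e3, setIntegral_union (Ioc_disjoint_Ioc_of_le le_rfl) measurableSet_Ioc
      (hIφ.mono_set (fun x hx => by rw [e1, e2, e3]; exact Or.inl (Or.inl (Or.inl hx))))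
      (hIφ.mono_set (fun x hx => by rw [e1, e2, e3]; exact Or.inl (Or.inl (Or.inr hx))))]
  
  have hsle : s ≤ abar - 3 := by simp only [hsdef]; linarith
  have hB1 : (∫ t in Ioc (0:ℝ) 1, φ t) ≤ 0 := by
    apply setIntegral_nonpos measurableSet_Ioc
    intro t ht
    obtain ⟨ht0, ht1⟩ := ht
    have hle : f (t + s) ≤ f s := hAnti (mem_Iic.2 (by linarith))
      (mem_Iic.2 (by linarith)) (by linarith)
    have h := mul_le_mul_of_nonneg_left (sub_nonpos.2 hle) (Real.exp_pos (-(Φ * t))).le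
    simpa [hφdef] using h
  have hB3 : (∫ t in Ioc (2:ℝ) r, φ t) ≤ 0 := by
    apply setIntegral_nonpos measurableSet_Ioc
    intro t ht
    obtain ⟨ht0, ht1⟩ := ht
    have hle : f (t + s) ≤ f s := hAnti (mem_Iic.2 (by linarith))
      (mem_Iic.2 (by simp only [hsdef]; linarith)) (by linarith)
    have h := mul_le_mul_of_nonneg_left (sub_nonpos.2 hle) (Real.exp_pos (-(Φ * t))).le
    simpa [hφdef] using h
  have hB2 : (∫ t in Ioc (1:ℝ) 2, φ t) ≤ -(δ0 * Real.exp (-(Φ * 2))) := by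
    have hpt : ∀ t ∈ Ioc (1:ℝ) 2, φ t ≤ -(δ0 * Real.exp (-(Φ * 2))) := by
      intro t ht
      obtain ⟨ht1, ht2⟩ := ht
      have h1 : f (t + s) ≤ f (1 + s) := hAnti (mem_Iic.2 (by linarith))
        (mem_Iic.2 (by linarith)) (by linarith)
      have h2 := aux_K hf_conv hf_cont hMono hAnti (a := s) (b := abar - 2) (t := 1)
        (by linarith) (by linarith) zero_le_one
      have h3 : (1:ℝ) + (abar - 2) = abar - 1 := by ring
      rw [h3] at h2
      have h4 : f (t + s) - f s ≤ -δ0 := by simp only [hδ0def]; linarith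
      have h5 : Real.exp (-(Φ * 2)) ≤ Real.exp (-(Φ * t)) := Real.exp_le_exp.2 (by nlinarith)
      calc φ t = Real.exp (-(Φ * t)) * (f (t + s) - f s) := rfl
        _ ≤ Real.exp (-(Φ * t)) * (-δ0) :=
            mul_le_mul_of_nonneg_left h4 (Real.exp_pos _).le
        _ ≤ -(δ0 * Real.exp (-(Φ * 2))) := by nlinarith [Real.exp_pos (-(Φ * t))]
    calc (∫ t in Ioc (1:ℝ) 2, φ t) ≤ ∫ _t in Ioc (1:ℝ) 2, -(δ0 * Real.exp (-(Φ * 2))) :=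
        setIntegral_mono_on
          (hIφ.mono_set (fun x hx => lt_trans zero_lt_one hx.1))
          (integrableOn_const (by simp [Real.volume_Ioc]))
          measurableSet_Ioc hpt
      _ = -(δ0 * Real.exp (-(Φ * 2))) := by
        rw [setIntegral_const]
        simp [Real.volume_Ioc]
        norm_num
  have hr0 : (0:ℝ) < r := by linarith
  have hB4 : (∫ t in Ioi r, φ t) ≤ G r := by
    set Ds : ℝ := Cf * (1 + |s|) ^ nf + |f s| with hDsdef
    have hDs0 : 0 ≤ Ds := by positivity
    have hIψ : IntegrableOn
        (fun t => Real.exp (-(Φ / 2 * r)) * (Real.exp (-(Φ / 2 * t)) * (Ds * (1 + |t|) ^ nf)))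
        (Ioi (0:ℝ)) := (aux_int_poly0 (half_pos hΦ) Ds nf).const_mul _
    have step1 : (∫ t in Ioi r, φ t) ≤
        ∫ t in Ioi r, Real.exp (-(Φ / 2 * r)) * (Real.exp (-(Φ / 2 * t)) * (Ds * (1 + |t|) ^ nf)) := by
      refine setIntegral_mono_on (hIφ.mono_set (Ioi_subset_Ioi hr0.le))
        (hIψ.mono_set (Ioi_subset_Ioi hr0.le)) measurableSet_Ioi ?_
      intro t ht
      have htr : r ≤ t := (mem_Ioi.1 ht).le
      have ha : f (t + s) - f s ≤ Ds * (1 + |t|) ^ nf :=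
        le_trans (le_abs_self _) (aux_diff_bound hCf s t)
      have hb : Real.exp (-(Φ * t)) ≤ Real.exp (-(Φ / 2 * r)) * Real.exp (-(Φ / 2 * t)) := by
        rw [← Real.exp_add]
        apply Real.exp_le_exp.2
        nlinarith
      calc φ t ≤ Real.exp (-(Φ * t)) * (Ds * (1 + |t|) ^ nf) :=
            mul_le_mul_of_nonneg_left ha (Real.exp_pos _).le
        _ ≤ (Real.exp (-(Φ / 2 * r)) * Real.exp (-(Φ / 2 * t))) * (Ds * (1 + |t|) ^ nf) :=
            mul_le_mul_of_nonneg_right hb (by positivity)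
        _ = Real.exp (-(Φ / 2 * r)) * (Real.exp (-(Φ / 2 * t)) * (Ds * (1 + |t|) ^ nf)) := by
            ring
    have step2 : (∫ t in Ioi r,
          Real.exp (-(Φ / 2 * r)) * (Real.exp (-(Φ / 2 * t)) * (Ds * (1 + |t|) ^ nf))) ≤
        ∫ t in Ioi (0:ℝ),
          Real.exp (-(Φ / 2 * r)) * (Real.exp (-(Φ / 2 * t)) * (Ds * (1 + |t|) ^ nf)) := by
      refine setIntegral_mono_set hIψ (Eventually.of_forall fun t => by positivity)
        (HasSubset.Subset.eventuallyLE (Ioi_subset_Ioi hr0.le))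
    have step3 : (∫ t in Ioi (0:ℝ),
          Real.exp (-(Φ / 2 * r)) * (Real.exp (-(Φ / 2 * t)) * (Ds * (1 + |t|) ^ nf))) =
        Real.exp (-(Φ / 2 * r)) * (Ds * K0) := by
      rw [MeasureTheory.integral_const_mul]
      congr 1
      have heq : (fun t => Real.exp (-(Φ / 2 * t)) * (Ds * (1 + |t|) ^ nf)) =
          fun t => Ds * (Real.exp (-(Φ / 2 * t)) * (1 + |t|) ^ nf) := by
        funext t; ring
      rw [heq, MeasureTheory.integral_const_mul]
    have step4 : Real.exp (-(Φ / 2 * r)) * (Ds * K0) ≤ G r := by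
      have habs : |s| ≤ |abar| + r := by
        rw [hsdef, sub_eq_add_neg]
        refine le_trans (abs_add_le _ _) ?_
        simp [abs_of_nonneg hr0.le]
      have hpow : (1 + |s|) ^ nf ≤ ((1 + |abar|) + r) ^ nf :=
        pow_le_pow_left₀ (by linarith [abs_nonneg s]) (by linarith) nf
      have hfs : |f s| ≤ Cf * (1 + |s|) ^ nf := hCf s
      have hDsle : Ds ≤ 2 * Cf * ((1 + |abar|) + r) ^ nf := by
        have h1 : Cf * (1 + |s|) ^ nf ≤ Cf * (((1 + |abar|) + r) ^ nf) :=
          mul_le_mul_of_nonneg_left hpow hCf0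
        simp only [hDsdef]
        linarith
      simp only [hGdef]
      have h2 := mul_le_mul_of_nonneg_right hDsle hK0
      exact mul_le_mul_of_nonneg_left h2 (Real.exp_pos _).le
    linarith
  rw [hsplit]
  linarith


/-- Under the standing assumptions on `f̃`, the function `Ψ` is finite-valued and there exists
a unique `a̲ < ā` such that `Ψ(a̲) = 0`; moreover `Ψ < 0` below `a̲` and `Ψ > 0` above `a̲`. -/
theorem stmt0
    (Φ : ℝ) (hΦ : 0 < Φ)
    (f g : ℝ → ℝ) (abar c₀ x₀ : ℝ)
    (hf_cont : Continuous f)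
    (hf_pw : ∃ D : Set ℝ, D.Countable ∧ ∀ x ∉ D, HasDerivAt f (g x) x ∧ ContinuousAt g x)
    (hg_meas : Measurable g)
    (hf_poly : ∃ C : ℝ, ∃ n : ℕ, ∀ x : ℝ, |f x| ≤ C * (1 + |x|) ^ n)
    (hg_poly : ∃ C : ℝ, ∃ n : ℕ, ∀ x : ℝ, |g x| ≤ C * (1 + |x|) ^ n)
    (hf_inc : StrictMonoOn f (Set.Ioi abar))
    (hf_dec : StrictAntiOn f (Set.Iio abar))
    (hf_conv : ConvexOn ℝ (Set.Iio abar) f)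
    (hc₀ : 0 < c₀) (hx₀ : abar ≤ x₀)
    (hg_ge : ∀ x, x₀ ≤ x → c₀ ≤ g x) :
    (∀ s : ℝ, IntegrableOn (fun y => Real.exp (-(Φ * (y - s))) * g y) (Set.Ioi s)) ∧
    ∃ aund : ℝ, aund < abar ∧ Psi Φ g aund = 0 ∧
      (∀ x, x < aund → Psi Φ g x < 0) ∧
      (∀ x, aund < x → 0 < Psi Φ g x) ∧
      (∀ a' : ℝ, Psi Φ g a' = 0 → a' = aund) := by
  obtain ⟨D, hD, hfD'⟩ := hf_pw
  have hfD : ∀ x ∉ D, HasDerivAt f (g x) x := fun x hx => (hfD' x hx).1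
  obtain ⟨Cf, nf, hCf⟩ := hf_poly
  obtain ⟨Cg, ng, hCg⟩ := hg_poly
  have hMono := aux_monotoneOn hf_inc hf_cont
  have hAnti := aux_antitoneOn hf_dec hf_cont
  set H : ℝ → ℝ := fun s => ∫ t in Ioi (0:ℝ), Real.exp (-(Φ * t)) * (f (t + s) - f s)
    with hHdef
  have hPsiH : ∀ s, Psi Φ g s = Φ * H s := fun s =>
    aux_identity hΦ hD hfD hf_cont hg_meas hCf hCg s
  have hHmono : ∀ s1 ∈ Iic abar, ∀ s2 ∈ Iic abar, s1 < s2 → H s1 < H s2 := by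
    intro s1 hs1 s2 hs2 h12
    have hI1 := aux_If hΦ hf_cont hCf s1
    have hI2 := aux_If hΦ hf_cont hCf s2
    have hpos : 0 < ∫ t in Ioi (0:ℝ),
        (Real.exp (-(Φ * t)) * (f (t + s2) - f s2) -
          Real.exp (-(Φ * t)) * (f (t + s1) - f s1)) := by
      apply aux_integral_pos (hI2.sub hI1) _ (abar - s1) _
      · intro t ht
        have hK := aux_K hf_conv hf_cont hMono hAnti h12.le (mem_Iic.1 hs2)
          (le_of_lt (mem_Ioi.1 ht))
        have h := mul_le_mul_of_nonneg_left hK (Real.exp_pos (-(Φ * t))).le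
        simp only [Pi.sub_apply]
        linarith
      · intro t ht
        have hKs := aux_Ks hf_inc hAnti h12 (mem_Iic.1 hs2) ht
        have h := mul_lt_mul_of_pos_left hKs (Real.exp_pos (-(Φ * t)))
        simp only [Pi.sub_apply]
        linarith
    rw [integral_sub hI2 hI1] at hpos
    simp only [hHdef]
    linarith
  have hHcont := aux_Hcont hΦ hf_cont hCf
  have hHposA : ∀ x, abar ≤ x → 0 < H x := by
    intro x hx
    apply aux_integral_pos (aux_If hΦ hf_cont hCf x) _ 0 _
    · intro t ht
      exact mul_nonneg (Real.exp_pos _).le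
        (sub_nonneg.2 (aux_pos_incr hf_inc hMono hx (mem_Ioi.1 ht)).le)
    · intro t ht
      exact mul_pos (Real.exp_pos _) (sub_pos.2 (aux_pos_incr hf_inc hMono hx ht))
  obtain ⟨sneg, hsneg_lt, hsnegH⟩ := aux_Hneg hΦ hf_cont hf_inc hf_dec hf_conv hCf
  have hsnegH' : H sneg < 0 := hsnegH
  have hivt : ∃ aund ∈ Ioo sneg abar, H aund = 0 := by
    have h3 : (0:ℝ) ∈ Ioo (H sneg) (H abar) := ⟨hsnegH', hHposA abar le_rfl⟩
    obtain ⟨x, hx, hx0⟩ := intermediate_value_Ioo hsneg_lt.le hHcont.continuousOn h3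
    exact ⟨x, hx, hx0⟩
  obtain ⟨aund, ⟨haund1, haund2⟩, haundH⟩ := hivt
  have hneg : ∀ x, x < aund → Psi Φ g x < 0 := by
    intro x hx
    have h := hHmono x (mem_Iic.2 (by linarith)) aund (mem_Iic.2 haund2.le) hx
    rw [hPsiH x]
    exact mul_neg_of_pos_of_neg hΦ (by linarith [haundH])
  have hpos : ∀ x, aund < x → 0 < Psi Φ g x := by
    intro x hx
    have hx0 : 0 < H x := by
      rcases le_or_gt x abar with h | h
      · have := hHmono aund (mem_Iic.2 haund2.le) x (mem_Iic.2 h) hx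
        linarith [haundH]
      · exact hHposA x h.le
    rw [hPsiH x]
    exact mul_pos hΦ hx0
  refine ⟨fun s => aux_integrableOn_exp_mul hΦ s hg_meas.aestronglyMeasurable hCg,
    aund, haund2, by rw [hPsiH aund, haundH, mul_zero], hneg, hpos, ?_⟩
  intro a' ha'
  rcases lt_trichotomy a' aund with h | h | h
  · exact absurd ha' (ne_of_lt (hneg a' h))
  · exact h
  · exact absurd ha' (ne_of_gt (hpos a' h))
end

section
/- Under the standing assumptions on f̃, the function Ψ is strictly increasing on (−∞, ā]; that is, Ψ(x₁) < Ψ(x₂) whenever x₁ < x₂ ≤ ā. -/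
open MeasureTheory Filter Set Topology

/-- Integrability of `e^{-Φ(y-s)} g(y)` on `(s, ∞)` for measurable `g` of polynomial growth. -/
lemma aux_integrable (Φ C : ℝ) (hΦ : 0 < Φ) (n : ℕ) (g : ℝ → ℝ) (hg : Measurable g)
    (hgb : ∀ y, |g y| ≤ C * (1 + |y|) ^ n) (s : ℝ) :
    IntegrableOn (fun y => Real.exp (-(Φ * (y - s))) * g y) (Set.Ioi s) := by
  have hC : 0 ≤ C := le_trans (abs_nonneg (g 0)) (by simpa using hgb 0)
  set ε : ℝ := min 1 (Φ / (2 * ((n : ℝ) + 1))) with hεdef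
  have hε : 0 < ε := lt_min one_pos (by positivity)
  have hε1 : ε ≤ 1 := min_le_left _ _
  have hεn : (n : ℝ) * ε ≤ Φ / 2 := by
    have h1 : ε ≤ Φ / (2 * ((n : ℝ) + 1)) := min_le_right _ _
    have h2 : (n : ℝ) * ε ≤ (n : ℝ) * (Φ / (2 * ((n : ℝ) + 1))) :=
      mul_le_mul_of_nonneg_left h1 (Nat.cast_nonneg n)
    have h3 : (n : ℝ) * (Φ / (2 * ((n : ℝ) + 1))) ≤ Φ / 2 := by
      rw [← mul_div_assoc, div_le_div_iff₀ (by positivity) two_pos]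
      nlinarith [Nat.cast_nonneg (α := ℝ) n, hΦ.le]
    linarith
  have hdom : Integrable
      (fun y => (C * (ε⁻¹) ^ n * Real.exp (Φ * |s| + Φ * s)) * Real.exp (-(Φ / 2) * y))
      (volume.restrict (Set.Ioi s)) := (exp_neg_integrableOn_Ioi s (by positivity)).const_mul _
  refine hdom.mono' ?_ ?_
  · exact ((Real.measurable_exp.comp (by fun_prop)).mul hg).aestronglyMeasurable
  · filter_upwards [ae_restrict_mem measurableSet_Ioi] with y hy
    have hys : s ≤ y := (le_of_lt hy)
    have habs : |y| ≤ y + 2 * |s| := by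
      rcases abs_cases y with ⟨h1, _⟩ | ⟨h1, _⟩ <;> rcases abs_cases s with ⟨h2, _⟩ | ⟨h2, _⟩ <;>
        linarith
    have h1 : 1 + |y| ≤ ε⁻¹ * Real.exp (ε * |y|) := by
      have e1 : 1 + ε * |y| ≤ Real.exp (ε * |y|) := by
        have := Real.add_one_le_exp (ε * |y|); linarith
      have e2 : ε * (1 + |y|) ≤ 1 + ε * |y| := by nlinarith [abs_nonneg y]
      calc 1 + |y| = ε⁻¹ * (ε * (1 + |y|)) := by field_simp
        _ ≤ ε⁻¹ * Real.exp (ε * |y|) :=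
            mul_le_mul_of_nonneg_left (e2.trans e1) (by positivity)
    have h2 : (1 + |y|) ^ n ≤ (ε⁻¹) ^ n * Real.exp ((n : ℝ) * (ε * |y|)) := by
      calc (1 + |y|) ^ n ≤ (ε⁻¹ * Real.exp (ε * |y|)) ^ n :=
            pow_le_pow_left₀ (by positivity) h1 n
        _ = (ε⁻¹) ^ n * Real.exp ((n : ℝ) * (ε * |y|)) := by
            rw [mul_pow, Real.exp_nat_mul]
    have h3 : (n : ℝ) * (ε * |y|) ≤ Φ / 2 * (y + 2 * |s|) := by
      calc (n : ℝ) * (ε * |y|) = ((n : ℝ) * ε) * |y| := by ring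
        _ ≤ (Φ / 2) * |y| := mul_le_mul_of_nonneg_right hεn (abs_nonneg y)
        _ ≤ (Φ / 2) * (y + 2 * |s|) := mul_le_mul_of_nonneg_left habs (by positivity)
    have h4 : (1 + |y|) ^ n ≤ (ε⁻¹) ^ n * Real.exp (Φ / 2 * (y + 2 * |s|)) :=
      h2.trans (mul_le_mul_of_nonneg_left (Real.exp_le_exp.2 h3) (by positivity))
    calc ‖Real.exp (-(Φ * (y - s))) * g y‖
        = Real.exp (-(Φ * (y - s))) * |g y| := by
          rw [norm_mul, Real.norm_eq_abs, Real.norm_eq_abs, abs_of_pos (Real.exp_pos _)]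
      _ ≤ Real.exp (-(Φ * (y - s))) * (C * ((ε⁻¹) ^ n * Real.exp (Φ / 2 * (y + 2 * |s|)))) := by
          refine mul_le_mul_of_nonneg_left ?_ (Real.exp_pos _).le
          exact (hgb y).trans (mul_le_mul_of_nonneg_left h4 hC)
      _ = (C * (ε⁻¹) ^ n) * (Real.exp (-(Φ * (y - s))) * Real.exp (Φ / 2 * (y + 2 * |s|))) := by
          ring
      _ = (C * (ε⁻¹) ^ n * Real.exp (Φ * |s| + Φ * s)) * Real.exp (-(Φ / 2) * y) := by
          rw [← Real.exp_add,
            show -(Φ * (y - s)) + Φ / 2 * (y + 2 * |s|)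
              = (Φ * |s| + Φ * s) + -(Φ / 2) * y from by ring,
            Real.exp_add]
          ring

/-- The derivative of a function strictly decreasing on `(-∞, a)` is nonpositive there. -/
lemma aux_deriv_nonpos {f : ℝ → ℝ} {a y d : ℝ} (hf : StrictAntiOn f (Set.Iio a))
    (hy : y < a) (hd : HasDerivAt f d y) : d ≤ 0 := by
  have ht : Tendsto (slope f y) (𝓝[>] y) (𝓝 d) :=
    (hasDerivAt_iff_tendsto_slope.mp hd).mono_left
      (nhdsWithin_mono y fun z hz => Set.mem_compl_singleton_iff.mpr (ne_of_gt hz))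
  refine le_of_tendsto ht ?_
  filter_upwards [Ioo_mem_nhdsGT_of_mem (Set.mem_Ico.mpr ⟨le_rfl, hy⟩)] with z hz
  rw [slope_def_field]
  have hfz : f z < f y := hf (Set.mem_Iio.mpr hy) (Set.mem_Iio.mpr hz.2) hz.1
  have h1 : f z - f y ≤ 0 := by linarith
  have h2 : 0 ≤ z - y := by linarith [hz.1]
  exact div_nonpos_iff.mpr (Or.inr ⟨h1, h2⟩)

/-- The derivative of a function strictly increasing on `(a, ∞)` is nonnegative there. -/
lemma aux_deriv_nonneg {f : ℝ → ℝ} {a y d : ℝ} (hf : StrictMonoOn f (Set.Ioi a))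
    (hy : a < y) (hd : HasDerivAt f d y) : 0 ≤ d := by
  have ht : Tendsto (slope f y) (𝓝[>] y) (𝓝 d) :=
    (hasDerivAt_iff_tendsto_slope.mp hd).mono_left
      (nhdsWithin_mono y fun z hz => Set.mem_compl_singleton_iff.mpr (ne_of_gt hz))
  refine ge_of_tendsto ht ?_
  filter_upwards [self_mem_nhdsWithin] with z hz
  rw [slope_def_field]
  have hfz : f y < f z := hf (Set.mem_Ioi.mpr hy) (Set.mem_Ioi.mpr (hy.trans hz)) hz
  exact div_nonneg (by linarith) (by linarith [Set.mem_Ioi.mp hz])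

theorem stmt1
    (Φ : ℝ) (hΦ : 0 < Φ)
    (f g : ℝ → ℝ) (abar c₀ x₀ : ℝ)
    (hf_cont : Continuous f)
    (hf_pw : ∃ D : Set ℝ, D.Countable ∧ ∀ x ∉ D, HasDerivAt f (g x) x ∧ ContinuousAt g x)
    (hg_meas : Measurable g)
    (hf_poly : ∃ C : ℝ, ∃ n : ℕ, ∀ x : ℝ, |f x| ≤ C * (1 + |x|) ^ n)
    (hg_poly : ∃ C : ℝ, ∃ n : ℕ, ∀ x : ℝ, |g x| ≤ C * (1 + |x|) ^ n)
    (hf_inc : StrictMonoOn f (Set.Ioi abar))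
    (hf_dec : StrictAntiOn f (Set.Iio abar))
    (hf_conv : ConvexOn ℝ (Set.Iio abar) f)
    (hc₀ : 0 < c₀) (hx₀ : abar ≤ x₀)
    (hg_ge : ∀ x, x₀ ≤ x → c₀ ≤ g x) :
    ∀ x₁ x₂ : ℝ, x₁ < x₂ → x₂ ≤ abar → Psi Φ g x₁ < Psi Φ g x₂ := by
  intro x₁ x₂ h12 h2a
  obtain ⟨D, hDc, hDf⟩ := hf_pw
  obtain ⟨C, n, hgC⟩ := hg_poly
  have h1a : x₁ < abar := lt_of_lt_of_le h12 h2a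
  set δ : ℝ := x₂ - x₁ with hδdef
  have hδ : 0 < δ := by rw [hδdef]; linarith
  have hC : 0 ≤ C := le_trans (abs_nonneg (g 0)) (by simpa using hgC 0)
  have key : ∀ s : ℝ, IntegrableOn (fun y => Real.exp (-(Φ * (y - s))) * g y) (Set.Ioi s) :=
    fun s => aux_integrable Φ C hΦ n g hg_meas hgC s
  -- a.e. facts
  have hDae : ∀ᵐ (y : ℝ), y ∉ D := measure_eq_zero_iff_ae_notMem.mp (hDc.measure_zero _)
  have hDae' : ∀ᵐ (y : ℝ), y - δ ∉ D := by
    refine measure_eq_zero_iff_ae_notMem.mp ?_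
    exact ((hDc.preimage (f := fun z : ℝ => z - δ)
      (fun a b h => by dsimp at h; linarith)).measure_zero _)
  have habarae : ∀ᵐ (y : ℝ), y ≠ abar := by
    have := measure_eq_zero_iff_ae_notMem.mp
      ((Set.countable_singleton abar).measure_zero (volume : Measure ℝ))
    filter_upwards [this] with y hy
    simpa using hy
  -- positivity of the tail constant K = Psi Φ g abar
  set x₃ : ℝ := max x₀ abar with hx₃def
  have h3 : abar ≤ x₃ := le_max_right _ _
  have hsplitK : Psi Φ g abar
      = (∫ y in Set.Ioc abar x₃, Real.exp (-(Φ * (y - abar))) * g y)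
        + ∫ y in Set.Ioi x₃, Real.exp (-(Φ * (y - abar))) * g y := by
    rw [Psi, ← Set.Ioc_union_Ioi_eq_Ioi h3,
      setIntegral_union Set.Ioc_disjoint_Ioi_same measurableSet_Ioi
        ((key abar).mono_set Set.Ioc_subset_Ioi_self)
        ((key abar).mono_set (Set.Ioi_subset_Ioi h3))]
  have hpart1 : 0 ≤ ∫ y in Set.Ioc abar x₃, Real.exp (-(Φ * (y - abar))) * g y := by
    refine setIntegral_nonneg_ae measurableSet_Ioc ?_
    filter_upwards [hDae] with y hyD hy
    have hgy : 0 ≤ g y := aux_deriv_nonneg hf_inc hy.1 (hDf y hyD).1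
    exact mul_nonneg (Real.exp_pos _).le hgy
  have hcomp : IntegrableOn (fun y => Real.exp (-(Φ * (y - abar))) * c₀) (Set.Ioi x₃) := by
    have := aux_integrable Φ |c₀| hΦ 0 (fun _ => c₀) measurable_const (fun y => by simp) abar
    exact this.mono_set (Set.Ioi_subset_Ioi h3)
  have hpart2 : 0 < ∫ y in Set.Ioi x₃, Real.exp (-(Φ * (y - abar))) * g y := by
    have hlow : 0 < ∫ y in Set.Ioi x₃, Real.exp (-(Φ * (y - abar))) * c₀ := by
      rw [setIntegral_pos_iff_support_of_nonneg_ae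
        (ae_of_all _ fun y => by positivity) hcomp]
      have hsupp : (Function.support fun y => Real.exp (-(Φ * (y - abar))) * c₀) = Set.univ := by
        ext y
        simp only [Function.mem_support, Set.mem_univ, iff_true]
        exact (mul_pos (Real.exp_pos _) hc₀).ne'
      rw [hsupp, Set.univ_inter, Real.volume_Ioi]
      simp
    refine lt_of_lt_of_le hlow
      (setIntegral_mono_on hcomp ((key abar).mono_set (Set.Ioi_subset_Ioi h3))
        measurableSet_Ioi ?_)
    intro y hy
    have : c₀ ≤ g y := hg_ge y (le_trans (le_max_left _ _) (le_of_lt hy))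
    exact mul_le_mul_of_nonneg_left this (Real.exp_pos _).le
  have hKpos : 0 < Psi Φ g abar := by rw [hsplitK]; linarith
  -- splitting of Psi at abar
  have hsplit : ∀ s : ℝ, s ≤ abar → Psi Φ g s
      = (∫ y in Set.Ioc s abar, Real.exp (-(Φ * (y - s))) * g y)
        + Real.exp (-(Φ * (abar - s))) * Psi Φ g abar := by
    intro s hs
    have htail : (∫ y in Set.Ioi abar, Real.exp (-(Φ * (y - s))) * g y)
        = Real.exp (-(Φ * (abar - s))) * Psi Φ g abar := by
      have hpt : ∀ y : ℝ, Real.exp (-(Φ * (y - s))) * g y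
          = Real.exp (-(Φ * (abar - s))) * (Real.exp (-(Φ * (y - abar))) * g y) := by
        intro y
        rw [← mul_assoc, ← Real.exp_add]
        congr 2
        ring
      simp_rw [hpt]
      rw [integral_const_mul, Psi]
    rw [Psi, ← Set.Ioc_union_Ioi_eq_Ioi hs,
      setIntegral_union Set.Ioc_disjoint_Ioi_same measurableSet_Ioi
        ((key s).mono_set Set.Ioc_subset_Ioi_self)
        ((key s).mono_set (Set.Ioi_subset_Ioi hs)), htail]
  -- split the body for x₁
  have hx1split : (∫ y in Set.Ioc x₁ abar, Real.exp (-(Φ * (y - x₁))) * g y)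
      = (∫ y in Set.Ioc x₁ (abar - δ), Real.exp (-(Φ * (y - x₁))) * g y)
        + ∫ y in Set.Ioc (abar - δ) abar, Real.exp (-(Φ * (y - x₁))) * g y := by
    rw [← Set.Ioc_union_Ioc_eq_Ioc (by simp only [hδdef]; linarith : x₁ ≤ abar - δ)
        (by linarith : abar - δ ≤ abar),
      setIntegral_union (Set.Ioc_disjoint_Ioc_of_le le_rfl) measurableSet_Ioc
        ((key x₁).mono_set Set.Ioc_subset_Ioi_self)
        ((key x₁).mono_set (fun y hy =>
          lt_of_le_of_lt (by simp only [hδdef]; linarith) hy.1))]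
  have hneg : (∫ y in Set.Ioc (abar - δ) abar, Real.exp (-(Φ * (y - x₁))) * g y) ≤ 0 := by
    refine setIntegral_nonpos_of_ae_restrict ?_
    filter_upwards [ae_restrict_of_ae hDae, ae_restrict_of_ae habarae,
      ae_restrict_mem measurableSet_Ioc] with y h1 h2 h3'
    have hya : y < abar := lt_of_le_of_ne h3'.2 h2
    have hgy : g y ≤ 0 := aux_deriv_nonpos hf_dec hya (hDf y h1).1
    have := mul_le_mul_of_nonneg_left hgy (Real.exp_pos (-(Φ * (y - x₁)))).le
    simpa using this
  -- change of variables
  have hcv : (∫ y in Set.Ioc x₁ (abar - δ), Real.exp (-(Φ * (y - x₁))) * g y)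
      = ∫ z in Set.Ioc x₂ abar, Real.exp (-(Φ * (z - x₂))) * g (z - δ) := by
    rw [← integral_indicator measurableSet_Ioc, ← integral_indicator measurableSet_Ioc]
    rw [show (∫ y, Set.indicator (Set.Ioc x₁ (abar - δ))
          (fun y => Real.exp (-(Φ * (y - x₁))) * g y) y)
        = ∫ z, Set.indicator (Set.Ioc x₁ (abar - δ))
          (fun y => Real.exp (-(Φ * (y - x₁))) * g y) (z + (-δ)) from
        (integral_add_right_eq_self _ (-δ)).symm]
    congr 1
    funext z
    by_cases hz : z ∈ Set.Ioc x₂ abar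
    · have hz' : z + (-δ) ∈ Set.Ioc x₁ (abar - δ) :=
        ⟨by simp only [hδdef]; linarith [hz.1], by linarith [hz.2]⟩
      rw [Set.indicator_of_mem hz', Set.indicator_of_mem hz]
      simp only [hδdef]
      rw [show z + -(x₂ - x₁) = z - (x₂ - x₁) from by ring,
        show z - (x₂ - x₁) - x₁ = z - x₂ from by ring]
    · have hz' : z + (-δ) ∉ Set.Ioc x₁ (abar - δ) := by
        intro hc
        simp only [hδdef] at hc
        exact hz ⟨by linarith [hc.1], by linarith [hc.2]⟩
      rw [Set.indicator_of_notMem hz', Set.indicator_of_notMem hz]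
  -- integrability of the shifted integrand
  have hshift_int : IntegrableOn (fun z => Real.exp (-(Φ * (z - x₂))) * g (z - δ))
      (Set.Ioc x₂ abar) := by
    have hb : ∀ z : ℝ, |g (z - δ)| ≤ (C * (1 + δ) ^ n) * (1 + |z|) ^ n := by
      intro z
      have h1 : |z - δ| ≤ |z| + δ := by
        have := abs_add_le z (-δ)
        simpa [abs_of_pos hδ, sub_eq_add_neg] using this
      calc |g (z - δ)| ≤ C * (1 + |z - δ|) ^ n := hgC _
        _ ≤ C * ((1 + δ) * (1 + |z|)) ^ n := by
            refine mul_le_mul_of_nonneg_left ?_ hC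
            refine pow_le_pow_left₀ (by positivity) ?_ n
            nlinarith [abs_nonneg z]
        _ = (C * (1 + δ) ^ n) * (1 + |z|) ^ n := by rw [mul_pow]; ring
    exact (aux_integrable Φ (C * (1 + δ) ^ n) hΦ n (fun z => g (z - δ))
      (hg_meas.comp (by fun_prop)) hb x₂).mono_set Set.Ioc_subset_Ioi_self
  -- pointwise comparison via convexity
  have hmono : (∫ z in Set.Ioc x₂ abar, Real.exp (-(Φ * (z - x₂))) * g (z - δ))
      ≤ ∫ z in Set.Ioc x₂ abar, Real.exp (-(Φ * (z - x₂))) * g z := by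
    refine integral_mono_ae hshift_int ((key x₂).mono_set Set.Ioc_subset_Ioi_self) ?_
    filter_upwards [ae_restrict_of_ae hDae, ae_restrict_of_ae hDae',
      ae_restrict_of_ae habarae, ae_restrict_mem measurableSet_Ioc] with z h1 h2 h3' h4
    have hza : z < abar := lt_of_le_of_ne h4.2 h3'
    have hz1 : z - δ ∈ Set.Iio abar := Set.mem_Iio.mpr (by simp only [hδdef]; linarith)
    have hz2 : z ∈ Set.Iio abar := Set.mem_Iio.mpr hza
    have hlt : z - δ < z := by linarith
    have e1 : g (z - δ) ≤ slope f (z - δ) z :=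
      hf_conv.le_slope_of_hasDerivAt hz1 hz2 hlt (hDf _ h2).1
    have e2 : slope f (z - δ) z ≤ g z :=
      hf_conv.slope_le_of_hasDerivAt hz1 hz2 hlt (hDf _ h1).1
    exact mul_le_mul_of_nonneg_left (e1.trans e2) (Real.exp_pos _).le
  -- conclusion
  have hbody : (∫ y in Set.Ioc x₁ abar, Real.exp (-(Φ * (y - x₁))) * g y)
      ≤ ∫ z in Set.Ioc x₂ abar, Real.exp (-(Φ * (z - x₂))) * g z := by
    rw [hx1split, hcv]
    linarith
  have hexp : Real.exp (-(Φ * (abar - x₁))) < Real.exp (-(Φ * (abar - x₂))) := by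
    apply Real.exp_lt_exp.2
    nlinarith
  rw [hsplit x₁ (le_of_lt h1a), hsplit x₂ h2a]
  nlinarith [mul_lt_mul_of_pos_right hexp hKpos]
end

section
/- For every a ∈ ℝ, Γ(a, b)/W(b − a) → Ψ(a) as b → ∞. Consequently Γ(a, b) → +∞ as b → ∞ whenever Ψ(a) > 0 (in particular for a > a̲), and Γ(a, b) → −∞ as b → ∞ whenever Ψ(a) < 0 (in particular for a < a̲). -/
open MeasureTheory Filter Set

namespace Stmt3Aux

lemma tendsto_poly_exp (n : ℕ) {c : ℝ} (hc : 0 < c) :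
    Tendsto (fun y : ℝ => (1 + |y|) ^ n * Real.exp (-(c * y))) atTop (nhds 0) := by
  have h1 : (fun x : ℝ => x ^ n) =o[atTop] fun x => Real.exp (c * x) :=
    isLittleO_pow_exp_pos_mul_atTop n hc
  have h2 : Tendsto (fun x : ℝ => x ^ n / Real.exp (c * x)) atTop (nhds 0) := by
    refine h1.tendsto_div_nhds_zero
  have h3 : Tendsto (fun y : ℝ => (1 + y) ^ n / Real.exp (c * (1 + y))) atTop (nhds 0) :=
    h2.comp (tendsto_atTop_add_const_left _ 1 tendsto_id)
  have h4 : Tendsto (fun y : ℝ => Real.exp c * ((1 + y) ^ n / Real.exp (c * (1 + y)))) atTop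
      (nhds 0) := by simpa using h3.const_mul (Real.exp c)
  have h5 : Tendsto (fun y : ℝ => (1 + y) ^ n * Real.exp (-(c * y))) atTop (nhds 0) := by
    refine h4.congr' ?_
    filter_upwards [eventually_ge_atTop (0:ℝ)] with y _
    rw [Real.exp_neg, div_eq_mul_inv, ← mul_assoc, mul_comm (Real.exp c), mul_assoc,
      ← Real.exp_neg, ← Real.exp_add]
    ring_nf
    rw [Real.exp_neg]
  refine h5.congr' ?_
  filter_upwards [eventually_ge_atTop (0:ℝ)] with y hy
  rw [abs_of_nonneg hy]

lemma integrableOn_exp_poly {g : ℝ → ℝ} (hg : Measurable g)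
    {C : ℝ} {n : ℕ} (hb : ∀ x, |g x| ≤ C * (1 + |x|) ^ n) {Φ : ℝ} (hΦ : 0 < Φ) (a : ℝ) :
    IntegrableOn (fun y => Real.exp (-(Φ * y)) * g y) (Set.Ioi a) := by
  have hΦ2 : 0 < Φ / 2 := by linarith
  set u : ℝ → ℝ := fun y => |C| * ((1 + |y|) ^ n * Real.exp (-(Φ / 2 * y))) with hu
  have hucont : Continuous u := by
    continuity
  have hut : Tendsto u atTop (nhds 0) := by
    simpa using (tendsto_poly_exp n hΦ2).const_mul |C|
  -- u is bounded on [a, ∞)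
  obtain ⟨R, hR⟩ := (hut.eventually (eventually_le_nhds (by norm_num : (0:ℝ) < 1))).exists_forall_of_atTop
  obtain ⟨K1, hK1⟩ := isCompact_Icc.exists_bound_of_continuousOn
    (s := Icc a R) hucont.continuousOn
  set K := max K1 1 with hK
  have hKb : ∀ y ∈ Ioi a, u y ≤ K := by
    intro y hy
    rcases le_total y R with h | h
    · exact le_trans (le_trans (le_abs_self _) (hK1 y ⟨le_of_lt hy, h⟩)) (le_max_left _ _)
    · exact le_trans (hR y h) (le_max_right _ _)
  have hmeas : AEStronglyMeasurable (fun y => Real.exp (-(Φ * y)) * g y)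
      (volume.restrict (Ioi a)) := by
    exact ((Real.measurable_exp.comp (measurable_const_mul Φ).neg).mul hg).aestronglyMeasurable
  refine Integrable.mono' ((exp_neg_integrableOn_Ioi a hΦ2).const_mul K) hmeas ?_
  rw [ae_restrict_iff' measurableSet_Ioi]
  refine ae_of_all _ fun y hy => ?_
  have h1 : ‖Real.exp (-(Φ * y)) * g y‖ ≤ Real.exp (-(Φ * y)) * (C * (1 + |y|) ^ n) := by
    rw [norm_mul, Real.norm_eq_abs, Real.norm_eq_abs, abs_of_pos (Real.exp_pos _)]
    exact mul_le_mul_of_nonneg_left (hb y) (Real.exp_pos _).le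
  refine h1.trans ?_
  have hsplit : Real.exp (-(Φ * y)) = Real.exp (-(Φ / 2 * y)) * Real.exp (-(Φ / 2 * y)) := by
    rw [← Real.exp_add]; ring_nf
  have h2 : Real.exp (-(Φ * y)) * (C * (1 + |y|) ^ n) ≤ u y * Real.exp (-(Φ / 2 * y)) := by
    rw [hsplit, hu]
    have hCle : C ≤ |C| := le_abs_self C
    have hppos : (0:ℝ) ≤ (1 + |y|) ^ n := by positivity
    have : C * (1 + |y|) ^ n ≤ |C| * (1 + |y|) ^ n :=
      mul_le_mul_of_nonneg_right hCle hppos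
    calc Real.exp (-(Φ / 2 * y)) * Real.exp (-(Φ / 2 * y)) * (C * (1 + |y|) ^ n)
        ≤ Real.exp (-(Φ / 2 * y)) * Real.exp (-(Φ / 2 * y)) * (|C| * (1 + |y|) ^ n) := by
          exact mul_le_mul_of_nonneg_left this (by positivity)
      _ = |C| * ((1 + |y|) ^ n * Real.exp (-(Φ / 2 * y))) * Real.exp (-(Φ / 2 * y)) := by ring
  refine h2.trans ?_
  have h3 : u y * Real.exp (-(Φ / 2 * y)) ≤ K * Real.exp (-(Φ / 2 * y)) :=
    mul_le_mul_of_nonneg_right (hKb y hy) (Real.exp_pos _).le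
  refine h3.trans (le_of_eq ?_)
  rw [neg_mul]

end Stmt3Aux

namespace Stmt3AuxC

lemma deriv_nonneg_of_strictMono {f : ℝ → ℝ} {abar x d : ℝ}
    (hf_inc : StrictMonoOn f (Set.Ioi abar)) (hx : abar < x) (hd : HasDerivAt f d x) :
    0 ≤ d := by
  have ht : Tendsto (slope f x) (nhdsWithin x (Set.Ioi x)) (nhds d) :=
    (hasDerivAt_iff_tendsto_slope.mp hd).mono_left
      (nhdsWithin_mono x fun y hy => ne_of_gt (mem_Ioi.mp hy))
  refine ge_of_tendsto ht ?_
  refine eventually_nhdsWithin_of_forall fun y hy => ?_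
  have hxy : x < y := hy
  have hfy : f x < f y := hf_inc (mem_Ioi.mpr hx) (mem_Ioi.mpr (hx.trans hxy)) hxy
  rw [slope_def_field]
  exact div_nonneg (by linarith) (by linarith)

lemma deriv_nonpos_of_strictAnti {f : ℝ → ℝ} {abar x d : ℝ}
    (hf_dec : StrictAntiOn f (Set.Iio abar)) (hx : x < abar) (hd : HasDerivAt f d x) :
    d ≤ 0 := by
  have ht : Tendsto (slope f x) (nhdsWithin x (Set.Iio x)) (nhds d) :=
    (hasDerivAt_iff_tendsto_slope.mp hd).mono_left
      (nhdsWithin_mono x fun y hy => ne_of_lt (mem_Iio.mp hy))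
  refine le_of_tendsto ht ?_
  refine eventually_nhdsWithin_of_forall fun y hy => ?_
  have hxy : y < x := hy
  have hfy : f x < f y := hf_dec (mem_Iio.mpr (hxy.trans hx)) (mem_Iio.mpr hx) hxy
  rw [slope_def_field]
  exact le_of_lt (div_neg_of_pos_of_neg (by linarith) (by linarith))

lemma zero_of_ae_zero {g : ℝ → ℝ} {u v p : ℝ} (hp : p ∈ Set.Ioo u v)
    (hc : ContinuousAt g p)
    (hae : ∀ᵐ y, y ∈ Set.Ioc u v → g y = 0) : g p = 0 := by
  by_contra hne
  have h1 : ∀ᶠ y in nhds p, g y ≠ 0 := hc.eventually_ne hne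
  have h2 : ∀ᶠ y in nhds p, y ∈ Set.Ioc u v := by
    filter_upwards [Ioo_mem_nhds hp.1 hp.2] with y hy
    exact Ioo_subset_Ioc_self hy
  have h3 : ∀ᶠ y in nhds p, ¬(y ∈ Set.Ioc u v → g y = 0) := by
    filter_upwards [h1, h2] with y hy1 hy2
    intro h; exact hy1 (h hy2)
  obtain ⟨ε, hε, hball⟩ := Metric.eventually_nhds_iff.mp h3
  have hsub : Metric.ball p ε ⊆ {y | ¬(y ∈ Set.Ioc u v → g y = 0)} := by
    intro y hy; exact hball (by simpa [Metric.mem_ball, dist_eq_norm] using hy)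
  have hnull : volume {y | ¬(y ∈ Set.Ioc u v → g y = 0)} = 0 := hae
  have : volume (Metric.ball p ε) = 0 :=
    le_antisymm (hnull ▸ measure_mono hsub) zero_le
  exact absurd this (ne_of_gt (Metric.measure_ball_pos volume p hε))

lemma nonempty_diff_countable {u v : ℝ} (huv : u < v) {D : Set ℝ} (hD : D.Countable) :
    (Set.Ioo u v \ D).Nonempty := by
  rw [Set.nonempty_iff_ne_empty]
  intro h
  have hsub : Set.Ioo u v ⊆ D := by
    intro x hx
    by_contra hxD
    have : x ∈ Set.Ioo u v \ D := ⟨hx, hxD⟩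
    rw [h] at this
    exact this
  have h1 : volume (Set.Ioo u v) = 0 :=
    le_antisymm (le_trans (measure_mono hsub) (le_of_eq (hD.measure_zero volume))) zero_le
  rw [Real.volume_Ioo] at h1
  simp only [ENNReal.ofReal_eq_zero] at h1
  linarith

lemma integral_Ioc_neg {Φ : ℝ} {f g : ℝ → ℝ} {abar : ℝ} {D : Set ℝ}
    (hD : D.Countable) (hder : ∀ x ∉ D, HasDerivAt f (g x) x ∧ ContinuousAt g x)
    (hf_dec : StrictAntiOn f (Set.Iio abar)) (hf_conv : ConvexOn ℝ (Set.Iio abar) f)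
    {u v : ℝ} (huv : u < v) (hv : v ≤ abar)
    (hint : IntegrableOn (fun y => Real.exp (-(Φ * y)) * g y) (Set.Ioc u v)) :
    ∫ y in Set.Ioc u v, Real.exp (-(Φ * y)) * g y < 0 := by
  have hDnull : volume D = 0 := hD.measure_zero volume
  have hDae : ∀ᵐ (y : ℝ), y ∉ D := by
    rw [ae_iff]; simpa using hDnull
  have habar : ∀ᵐ (y : ℝ), y ≠ abar := by
    rw [ae_iff]
    have : {y : ℝ | ¬y ≠ abar} = {abar} := by ext y; simp
    rw [this]; exact measure_singleton abar
  have hae_np : ∀ᵐ y ∂(volume.restrict (Set.Ioc u v)),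
      Real.exp (-(Φ * y)) * g y ≤ 0 := by
    rw [ae_restrict_iff' measurableSet_Ioc]
    filter_upwards [hDae, habar] with y hyD hyne hy
    have hylt : y < abar := lt_of_le_of_ne (hy.2.trans hv) hyne
    have hgy : g y ≤ 0 := deriv_nonpos_of_strictAnti hf_dec hylt (hder y hyD).1
    exact mul_nonpos_of_nonneg_of_nonpos (Real.exp_pos _).le hgy
  have le0 : ∫ y in Set.Ioc u v, Real.exp (-(Φ * y)) * g y ≤ 0 :=
    integral_nonpos_of_ae hae_np
  rcases lt_or_eq_of_le le0 with hlt | heq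
  · exact hlt
  exfalso
  have hnn : 0 ≤ᵐ[volume.restrict (Set.Ioc u v)]
      (fun y => -(Real.exp (-(Φ * y)) * g y)) := by
    filter_upwards [hae_np] with y hy
    simp only [Pi.zero_apply]
    linarith
  have hzero : ∫ y in Set.Ioc u v, -(Real.exp (-(Φ * y)) * g y) = 0 := by
    rw [integral_neg, heq, neg_zero]
  have hae0 := (integral_eq_zero_iff_of_nonneg_ae hnn hint.neg).mp hzero
  have hg0 : ∀ᵐ (y : ℝ), y ∈ Set.Ioc u v → g y = 0 := by
    rw [← ae_restrict_iff' measurableSet_Ioc]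
    filter_upwards [hae0] with y hy
    have h0 : Real.exp (-(Φ * y)) * g y = 0 := by
      have : -(Real.exp (-(Φ * y)) * g y) = 0 := hy
      linarith
    rcases mul_eq_zero.mp h0 with h1 | h2
    · exact absurd h1 (Real.exp_ne_zero _)
    · exact h2
  set m := (u + v) / 2 with hm
  have hum : u < m := by rw [hm]; linarith
  have hmv : m < v := by rw [hm]; linarith
  obtain ⟨p, hp⟩ := nonempty_diff_countable hum hD
  obtain ⟨q, hq⟩ := nonempty_diff_countable hmv hD
  have hpq : p < q := lt_trans hp.1.2 hq.1.1
  have hpv : p < v := lt_trans hp.1.2 hmv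
  have hqv : q < v := hq.1.2
  have hps : p ∈ Set.Iio abar := mem_Iio.mpr (lt_of_lt_of_le hpv hv)
  have hqs : q ∈ Set.Iio abar := mem_Iio.mpr (lt_of_lt_of_le hqv hv)
  have hgp : g p = 0 := zero_of_ae_zero ⟨hp.1.1, hpv⟩ (hder p hp.2).2 hg0
  have hgq : g q = 0 := zero_of_ae_zero ⟨lt_trans hum hq.1.1, hqv⟩ (hder q hq.2).2 hg0
  have h1 : g p ≤ slope f p q := hf_conv.le_slope_of_hasDerivAt hps hqs hpq (hder p hp.2).1
  have h2 : slope f p q ≤ g q := hf_conv.slope_le_of_hasDerivAt hps hqs hpq (hder q hq.2).1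
  have hslope : slope f p q = 0 := le_antisymm (hgq ▸ h2) (hgp ▸ h1)
  rw [slope_def_field] at hslope
  have hqp : q - p ≠ 0 := by intro h; exact absurd (by linarith : p = q) (ne_of_lt hpq)
  have hfeq : f q = f p := by
    have := (div_eq_zero_iff.mp hslope).resolve_right hqp
    linarith
  have := hf_dec hps hqs hpq
  linarith

lemma integral_Ioi_pos {Φ : ℝ} (hΦ : 0 < Φ) {f g : ℝ → ℝ} {abar c₀ x₀ : ℝ} {D : Set ℝ}
    (hD : D.Countable) (hder : ∀ x ∉ D, HasDerivAt f (g x) x ∧ ContinuousAt g x)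
    (hf_inc : StrictMonoOn f (Set.Ioi abar))
    (hc₀ : 0 < c₀) (hg_ge : ∀ x, x₀ ≤ x → c₀ ≤ g x)
    {s : ℝ} (hs : abar ≤ s)
    (hint : IntegrableOn (fun y => Real.exp (-(Φ * y)) * g y) (Set.Ioi s)) :
    0 < ∫ y in Set.Ioi s, Real.exp (-(Φ * y)) * g y := by
  have hDnull : volume D = 0 := hD.measure_zero volume
  have hDae : ∀ᵐ (y : ℝ), y ∉ D := by rw [ae_iff]; simpa using hDnull
  set t := max s x₀ with ht
  have hst : s ≤ t := le_max_left _ _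
  have hsplit : Set.Ioc s t ∪ Set.Ioi t = Set.Ioi s := Set.Ioc_union_Ioi_eq_Ioi hst
  have hdisj : Disjoint (Set.Ioc s t) (Set.Ioi t) := by
    rw [Set.disjoint_left]
    intro y hy1 hy2
    exact absurd hy1.2 (not_le.mpr hy2)
  have hint1 : IntegrableOn (fun y => Real.exp (-(Φ * y)) * g y) (Set.Ioc s t) :=
    hint.mono_set (fun y hy => mem_Ioi.mpr hy.1)
  have hint2 : IntegrableOn (fun y => Real.exp (-(Φ * y)) * g y) (Set.Ioi t) :=
    hint.mono_set (Set.Ioi_subset_Ioi hst)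
  have heq : ∫ y in Set.Ioi s, Real.exp (-(Φ * y)) * g y
      = (∫ y in Set.Ioc s t, Real.exp (-(Φ * y)) * g y)
        + ∫ y in Set.Ioi t, Real.exp (-(Φ * y)) * g y := by
    rw [← hsplit, setIntegral_union hdisj measurableSet_Ioi hint1 hint2]
  have hpart1 : 0 ≤ ∫ y in Set.Ioc s t, Real.exp (-(Φ * y)) * g y := by
    refine setIntegral_nonneg_ae measurableSet_Ioc ?_
    filter_upwards [hDae] with y hyD hy
    have hgy : 0 ≤ g y := deriv_nonneg_of_strictMono hf_inc (lt_of_le_of_lt hs hy.1)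
      (hder y hyD).1
    positivity
  have hexp_int : IntegrableOn (fun y => c₀ * Real.exp (-(Φ * y))) (Set.Ioi t) := by
    have h := (exp_neg_integrableOn_Ioi t hΦ).const_mul c₀
    simp only [neg_mul] at h
    exact h
  have hpart2 : (∫ y in Set.Ioi t, c₀ * Real.exp (-(Φ * y)))
      ≤ ∫ y in Set.Ioi t, Real.exp (-(Φ * y)) * g y := by
    refine setIntegral_mono_on hexp_int hint2 measurableSet_Ioi ?_
    intro y hy
    have : c₀ ≤ g y := hg_ge y (le_of_lt (lt_of_le_of_lt (le_max_right s x₀) hy))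
    have he := (Real.exp_pos (-(Φ * y))).le
    nlinarith
  have hpos : 0 < ∫ y in Set.Ioi t, c₀ * Real.exp (-(Φ * y)) := by
    rw [integral_const_mul]
    refine mul_pos hc₀ ?_
    rw [setIntegral_pos_iff_support_of_nonneg_ae]
    · have : Function.support (fun y : ℝ => Real.exp (-(Φ * y))) = Set.univ := by
        ext y; simp [Real.exp_ne_zero]
      rw [this, Set.univ_inter]
      simp [Real.volume_Ioi]
    · filter_upwards with y
      exact (Real.exp_pos _).le
    · simpa only [neg_mul] using exp_neg_integrableOn_Ioi t hΦ
  linarith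

end Stmt3AuxC

/-- `Γ(a,b) = C_D + C_U + ∫_a^b W(b-y) f̃'(y) dy`, where `g` plays the role of `f̃'`. -/
noncomputable def Gam (W g : ℝ → ℝ) (CU CD a b : ℝ) : ℝ :=
  CD + CU + ∫ y in a..b, W (b - y) * g y

/-- `Γ(a,b)/W(b-a) → Ψ(a)` as `b → ∞`; consequently `Γ(a,b) → +∞` when `Ψ(a) > 0`
(in particular for `a > a̲`) and `Γ(a,b) → -∞` when `Ψ(a) < 0` (in particular for `a < a̲`). -/


theorem stmt3
    (Φ : ℝ) (hΦ : 0 < Φ)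
    (f g : ℝ → ℝ) (abar c₀ x₀ : ℝ)
    (hf_cont : Continuous f)
    (hf_pw : ∃ D : Set ℝ, D.Countable ∧ ∀ x ∉ D, HasDerivAt f (g x) x ∧ ContinuousAt g x)
    (hg_meas : Measurable g)
    (hf_poly : ∃ C : ℝ, ∃ n : ℕ, ∀ x : ℝ, |f x| ≤ C * (1 + |x|) ^ n)
    (hg_poly : ∃ C : ℝ, ∃ n : ℕ, ∀ x : ℝ, |g x| ≤ C * (1 + |x|) ^ n)
    (hf_inc : StrictMonoOn f (Set.Ioi abar))
    (hf_dec : StrictAntiOn f (Set.Iio abar))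
    (hf_conv : ConvexOn ℝ (Set.Iio abar) f)
    (hc₀ : 0 < c₀) (hx₀ : abar ≤ x₀)
    (hg_ge : ∀ x, x₀ ≤ x → c₀ ≤ g x)
    (W : ℝ → ℝ)
    (hW_neg : ∀ x, x < 0 → W x = 0)
    (hW_cont : ContinuousOn W (Set.Ici 0))
    (hW_mono : StrictMonoOn W (Set.Ici 0))
    (hW_pos : ∀ x, 0 < x → 0 < W x)
    (hW_exp : MonotoneOn (fun x => Real.exp (-(Φ * x)) * W x) (Set.Ici 0))
    (hW_lim : ∃ L : ℝ, 0 < L ∧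
      Tendsto (fun x => Real.exp (-(Φ * x)) * W x) atTop (nhds L))
    (CU CD : ℝ) (hC : 0 < CU + CD)
    (aund : ℝ) (h_aund_lt : aund < abar) (h_aund : Psi Φ g aund = 0) :
    ∀ a : ℝ,
      Tendsto (fun b => Gam W g CU CD a b / W (b - a)) atTop (nhds (Psi Φ g a)) ∧
      (0 < Psi Φ g a → Tendsto (fun b => Gam W g CU CD a b) atTop atTop) ∧
      (Psi Φ g a < 0 → Tendsto (fun b => Gam W g CU CD a b) atTop atBot) ∧
      (aund < a → Tendsto (fun b => Gam W g CU CD a b) atTop atTop) ∧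
      (a < aund → Tendsto (fun b => Gam W g CU CD a b) atTop atBot) := by
  intro a
  obtain ⟨L, hL, hLt⟩ := hW_lim
  obtain ⟨D, hD, hder⟩ := hf_pw

  -- measurability of W
  have hWc : Continuous (fun x : ℝ => W (max x 0)) := by
    refine ContinuousOn.comp_continuous hW_cont (continuous_id.max continuous_const) ?_
    intro x; exact le_max_right x 0
  have hWeq : W = Set.indicator (Set.Ici 0) (fun x => W (max x 0)) := by
    funext x
    rcases le_or_gt 0 x with h | h
    · rw [Set.indicator_of_mem (mem_Ici.mpr h), max_eq_left h]
    · rw [Set.indicator_of_notMem (by simpa using h), hW_neg x h]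
  have hWmeas : Measurable W := by
    rw [hWeq]; exact hWc.measurable.indicator measurableSet_Ici
  -- W 0 ≥ 0
  have hW0 : 0 ≤ W 0 := by
    have hcw : Tendsto W (nhdsWithin 0 (Set.Ioi 0)) (nhds (W 0)) :=
      ((hW_cont 0 (mem_Ici.mpr le_rfl)).mono_left (nhdsWithin_mono 0 Ioi_subset_Ici_self))
    refine ge_of_tendsto hcw ?_
    refine eventually_nhdsWithin_of_forall fun y hy => (hW_pos y hy).le
  have hWnonneg : ∀ x, 0 ≤ W x := by
    intro x
    rcases lt_trichotomy x 0 with h | h | h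
    · rw [hW_neg x h]
    · rw [h]; exact hW0
    · exact (hW_pos x h).le
  -- upper bound  e^{-Φx} W x ≤ L
  have hEle : ∀ x : ℝ, Real.exp (-(Φ * x)) * W x ≤ L := by
    intro x
    rcases le_or_gt 0 x with h | h
    · refine ge_of_tendsto hLt ?_
      filter_upwards [eventually_ge_atTop x] with z hz
      simpa using hW_exp (mem_Ici.mpr h) (mem_Ici.mpr (le_trans h hz)) hz
    · rw [hW_neg x h, mul_zero]; exact hL.le
  have hWupper : ∀ x : ℝ, W x ≤ L * Real.exp (Φ * x) := by
    intro x
    have key : Real.exp (Φ * x) * (Real.exp (-(Φ * x)) * W x) = W x := by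
      rw [← mul_assoc, ← Real.exp_add, add_neg_cancel, Real.exp_zero, one_mul]
    nlinarith [mul_le_mul_of_nonneg_left (hEle x) (Real.exp_pos (Φ * x)).le, key]
  set m := Real.exp (-(Φ * 1)) * W 1 with hm
  have hmpos : 0 < m := mul_pos (Real.exp_pos _) (hW_pos 1 one_pos)
  have hWlower : ∀ x : ℝ, 1 ≤ x → m * Real.exp (Φ * x) ≤ W x := by
    intro x hx
    have h1 : m ≤ Real.exp (-(Φ * x)) * W x := by
      rw [hm]
      exact hW_exp (mem_Ici.mpr (by norm_num : (0:ℝ) ≤ 1)) (mem_Ici.mpr (by linarith)) hx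
    have key : Real.exp (Φ * x) * (Real.exp (-(Φ * x)) * W x) = W x := by
      rw [← mul_assoc, ← Real.exp_add, add_neg_cancel, Real.exp_zero, one_mul]
    nlinarith [mul_le_mul_of_nonneg_left h1 (Real.exp_pos (Φ * x)).le, key]
  have hsub : Tendsto (fun b : ℝ => b - a) atTop atTop := by
    simpa [sub_eq_add_neg] using tendsto_atTop_add_const_right atTop (-a) (tendsto_id (α := ℝ))
  have hWtop : Tendsto (fun b : ℝ => W (b - a)) atTop atTop := by
    refine tendsto_atTop_mono' atTop ?_
      ((Real.tendsto_exp_atTop.comp (hsub.const_mul_atTop hΦ)).const_mul_atTop hmpos)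
    filter_upwards [eventually_ge_atTop (a + 1)] with b hb
    exact hWlower (b - a) (by linarith)
  obtain ⟨C, n, hgb⟩ := hg_poly
  have hInt : ∀ s : ℝ, IntegrableOn (fun y => Real.exp (-(Φ * y)) * g y) (Set.Ioi s) :=
    fun s => Stmt3Aux.integrableOn_exp_poly hg_meas hgb hΦ s
  have hIntW : ∀ b : ℝ, IntegrableOn (fun y => W (b - y) * g y) (Set.Ioi a) := by
    intro b
    refine Integrable.mono' ((hInt a).norm.const_mul (L * Real.exp (Φ * b))) ?_ ?_
    · exact ((hWmeas.comp (measurable_const.sub measurable_id)).mul hg_meas).aestronglyMeasurable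
    · rw [ae_restrict_iff' measurableSet_Ioi]
      refine ae_of_all _ fun y _ => ?_
      rw [norm_mul, norm_mul, Real.norm_eq_abs, Real.norm_eq_abs, Real.norm_eq_abs,
        abs_of_nonneg (hWnonneg _), abs_of_pos (Real.exp_pos _)]
      have h1 : W (b - y) * |g y| ≤ L * Real.exp (Φ * (b - y)) * |g y| :=
        mul_le_mul_of_nonneg_right (hWupper (b - y)) (abs_nonneg _)
      have h2 : Real.exp (Φ * (b - y)) = Real.exp (Φ * b) * Real.exp (-(Φ * y)) := by
        rw [← Real.exp_add]; ring_nf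
      calc W (b - y) * |g y| ≤ L * Real.exp (Φ * (b - y)) * |g y| := h1
        _ = L * Real.exp (Φ * b) * (Real.exp (-(Φ * y)) * |g y|) := by rw [h2]; ring
  have hdisjIoc : ∀ s t : ℝ, Disjoint (Set.Ioc s t) (Set.Ioi t) := by
    intro s t
    rw [Set.disjoint_left]
    intro y hy1 hy2
    exact absurd hy1.2 (not_le.mpr hy2)
  have hGamEq : ∀ b : ℝ, a ≤ b →
      CD + CU + (∫ y in a..b, W (b - y) * g y)
        = CD + CU + ∫ y in Set.Ioi a, W (b - y) * g y := by
    intro b hab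
    congr 1
    rw [intervalIntegral.integral_of_le hab]
    have hzero : ∫ y in Set.Ioi b, W (b - y) * g y = 0 := by
      refine setIntegral_eq_zero_of_forall_eq_zero fun y hy => ?_
      rw [hW_neg (b - y) (by simp only [mem_Ioi] at hy; linarith), zero_mul]
    have hsp : ∫ y in Set.Ioi a, W (b - y) * g y
        = (∫ y in Set.Ioc a b, W (b - y) * g y) + ∫ y in Set.Ioi b, W (b - y) * g y := by
      rw [← Set.Ioc_union_Ioi_eq_Ioi hab,
        setIntegral_union (hdisjIoc a b) measurableSet_Ioi
          ((hIntW b).mono_set fun y hy => mem_Ioi.mpr hy.1)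
          ((hIntW b).mono_set (Set.Ioi_subset_Ioi hab))]
    rw [hsp, hzero, add_zero]
  have hsplitInt : ∀ s t : ℝ, s ≤ t →
      (∫ y in Set.Ioi s, Real.exp (-(Φ * y)) * g y)
        = (∫ y in Set.Ioc s t, Real.exp (-(Φ * y)) * g y)
          + ∫ y in Set.Ioi t, Real.exp (-(Φ * y)) * g y := by
    intro s t hst
    rw [← Set.Ioc_union_Ioi_eq_Ioi hst,
      setIntegral_union (hdisjIoc s t) measurableSet_Ioi
        ((hInt s).mono_set fun y hy => mem_Ioi.mpr hy.1)
        ((hInt s).mono_set (Set.Ioi_subset_Ioi hst))]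
  set F : ℝ → ℝ → ℝ := fun b y => W (b - y) * g y / W (b - a) with hF
  have hDCT : Tendsto (fun b => ∫ y in Set.Ioi a, F b y) atTop
      (nhds (∫ y in Set.Ioi a, Real.exp (-(Φ * (y - a))) * g y)) := by
    refine tendsto_integral_filter_of_dominated_convergence
      (fun y => L / m * Real.exp (Φ * a) * ‖Real.exp (-(Φ * y)) * g y‖) ?_ ?_ ?_ ?_
    · refine Eventually.of_forall fun b => ?_
      exact (((hWmeas.comp (measurable_const.sub measurable_id)).mul hg_meas).div_const
        _).aestronglyMeasurable
    · filter_upwards [eventually_ge_atTop (a + 1)] with b hb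
      refine ae_of_all _ fun y => ?_
      have hba : (1:ℝ) ≤ b - a := by linarith
      have hWba : 0 < W (b - a) := hW_pos _ (by linarith)
      simp only [hF]
      rw [norm_div, norm_mul, Real.norm_eq_abs, Real.norm_eq_abs, Real.norm_eq_abs,
        abs_of_nonneg (hWnonneg _), abs_of_pos hWba, norm_mul, Real.norm_eq_abs,
        Real.norm_eq_abs, abs_of_pos (Real.exp_pos _)]
      have hlow : m * Real.exp (Φ * (b - a)) ≤ W (b - a) := hWlower _ hba
      have hup : W (b - y) ≤ L * Real.exp (Φ * (b - y)) := hWupper _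
      have hd : W (b - y) * |g y| / W (b - a)
          ≤ L * Real.exp (Φ * (b - y)) * |g y| / (m * Real.exp (Φ * (b - a))) :=
        div_le_div₀ (by positivity) (mul_le_mul_of_nonneg_right hup (abs_nonneg _))
          (by positivity) hlow
      refine hd.trans (le_of_eq ?_)
      have key : Real.exp (Φ * (b - y))
          = Real.exp (Φ * (b - a)) * Real.exp (Φ * a) * Real.exp (-(Φ * y)) := by
        rw [← Real.exp_add, ← Real.exp_add]; congr 1; ring
      rw [key]
      field_simp
    · exact (hInt a).norm.const_mul _
    · refine ae_of_all _ fun y => ?_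
      have hEy : Tendsto (fun b : ℝ => Real.exp (-(Φ * (b - y))) * W (b - y)) atTop (nhds L) := by
        have hsy : Tendsto (fun b : ℝ => b - y) atTop atTop := by
          simpa [sub_eq_add_neg] using tendsto_atTop_add_const_right atTop (-y) (tendsto_id (α := ℝ))
        exact hLt.comp hsy
      have hEa : Tendsto (fun b : ℝ => Real.exp (-(Φ * (b - a))) * W (b - a)) atTop (nhds L) :=
        hLt.comp hsub
      have hquot : Tendsto (fun b : ℝ =>
          (Real.exp (-(Φ * (b - y))) * W (b - y)) / (Real.exp (-(Φ * (b - a))) * W (b - a))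
            * (Real.exp (-(Φ * (y - a))) * g y)) atTop
          (nhds (Real.exp (-(Φ * (y - a))) * g y)) := by
        have h1 := (hEy.div hEa (ne_of_gt hL)).mul_const (Real.exp (-(Φ * (y - a))) * g y)
        simpa [div_self (ne_of_gt hL)] using h1
      refine hquot.congr' ?_
      filter_upwards [eventually_ge_atTop (a + 1), eventually_ge_atTop (y + 1)] with b hb1 hb2
      have hWba : 0 < W (b - a) := hW_pos _ (by linarith)
      simp only [hF]
      have key : Real.exp (-(Φ * (b - y))) * Real.exp (-(Φ * (y - a)))
          = Real.exp (-(Φ * (b - a))) := by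
        rw [← Real.exp_add]; congr 1; ring
      calc (Real.exp (-(Φ * (b - y))) * W (b - y))
            / (Real.exp (-(Φ * (b - a))) * W (b - a)) * (Real.exp (-(Φ * (y - a))) * g y)
          = (Real.exp (-(Φ * (b - y))) * Real.exp (-(Φ * (y - a))) / Real.exp (-(Φ * (b - a))))
            * (W (b - y) / W (b - a)) * g y := by
            field_simp
        _ = W (b - y) * g y / W (b - a) := by
            rw [key, div_self (Real.exp_ne_zero _), one_mul, div_mul_eq_mul_div,
              mul_div_assoc]
  have hPsiInt : Psi Φ g a = ∫ y in Set.Ioi a, Real.exp (-(Φ * (y - a))) * g y := rfl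
  have part1 : Tendsto (fun b => Gam W g CU CD a b / W (b - a)) atTop (nhds (Psi Φ g a)) := by
    have hzero : Tendsto (fun b : ℝ => (CD + CU) / W (b - a)) atTop (nhds 0) :=
      tendsto_const_nhds.div_atTop hWtop
    have hsum := hzero.add hDCT
    rw [zero_add] at hsum
    rw [hPsiInt]
    refine hsum.congr' ?_
    filter_upwards [eventually_ge_atTop (a + 1)] with b hb
    have hWba : 0 < W (b - a) := hW_pos _ (by linarith)
    have h1 : ∫ y in Set.Ioi a, F b y = (∫ y in Set.Ioi a, W (b - y) * g y) / W (b - a) := by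
      simp only [hF]
      rw [integral_div]
    show (CD + CU) / W (b - a) + (∫ y in Set.Ioi a, F b y) = Gam W g CU CD a b / W (b - a)
    rw [h1, Gam, hGamEq b (by linarith)]
    ring
  have part2 : 0 < Psi Φ g a → Tendsto (fun b => Gam W g CU CD a b) atTop atTop := by
    intro hpos
    have h2 : Tendsto (fun b => Gam W g CU CD a b / W (b - a) * W (b - a)) atTop atTop :=
      Tendsto.pos_mul_atTop hpos part1 hWtop
    refine h2.congr' ?_
    filter_upwards [eventually_ge_atTop (a + 1)] with b hb
    have hWba : 0 < W (b - a) := hW_pos _ (by linarith)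
    rw [div_mul_cancel₀ _ (ne_of_gt hWba)]
  have part3 : Psi Φ g a < 0 → Tendsto (fun b => Gam W g CU CD a b) atTop atBot := by
    intro hneg
    have h2 : Tendsto (fun b => Gam W g CU CD a b / W (b - a) * W (b - a)) atTop atBot :=
      Tendsto.neg_mul_atTop hneg part1 hWtop
    refine h2.congr' ?_
    filter_upwards [eventually_ge_atTop (a + 1)] with b hb
    have hWba : 0 < W (b - a) := hW_pos _ (by linarith)
    rw [div_mul_cancel₀ _ (ne_of_gt hWba)]
  have hPsiH : ∀ s : ℝ, Psi Φ g s
      = Real.exp (Φ * s) * ∫ y in Set.Ioi s, Real.exp (-(Φ * y)) * g y := by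
    intro s
    rw [Psi, ← integral_const_mul]
    refine setIntegral_congr_fun measurableSet_Ioi fun y hy => ?_
    rw [← mul_assoc, ← Real.exp_add]
    congr 2
    ring
  have haund0 : ∫ y in Set.Ioi aund, Real.exp (-(Φ * y)) * g y = 0 := by
    have h0 := h_aund
    rw [hPsiH] at h0
    rcases mul_eq_zero.mp h0 with h1 | h2
    · exact absurd h1 (Real.exp_ne_zero _)
    · exact h2
  have hPsipos : aund < a → 0 < Psi Φ g a := by
    intro ha
    rw [hPsiH]
    refine mul_pos (Real.exp_pos _) ?_
    rcases le_or_gt abar a with hcase | hcase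
    · exact Stmt3AuxC.integral_Ioi_pos hΦ hD hder hf_inc hc₀ hg_ge hcase (hInt a)
    · have hsp := hsplitInt aund a (le_of_lt ha)
      rw [haund0] at hsp
      have hneg : ∫ y in Set.Ioc aund a, Real.exp (-(Φ * y)) * g y < 0 :=
        Stmt3AuxC.integral_Ioc_neg hD hder hf_dec hf_conv ha (le_of_lt hcase)
          ((hInt aund).mono_set fun y hy => mem_Ioi.mpr hy.1)
      linarith
  have hPsineg : a < aund → Psi Φ g a < 0 := by
    intro ha
    rw [hPsiH]
    have hneg : ∫ y in Set.Ioc a aund, Real.exp (-(Φ * y)) * g y < 0 :=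
      Stmt3AuxC.integral_Ioc_neg hD hder hf_dec hf_conv ha (le_of_lt h_aund_lt)
        ((hInt a).mono_set fun y hy => mem_Ioi.mpr hy.1)
    have hsp := hsplitInt a aund (le_of_lt ha)
    have hlt : (∫ y in Set.Ioi a, Real.exp (-(Φ * y)) * g y) < 0 := by
      rw [hsp, haund0, add_zero]; exact hneg
    exact mul_neg_of_pos_of_neg (Real.exp_pos _) hlt
  exact ⟨part1, part2, part3, fun ha => part2 (hPsipos ha), fun ha => part3 (hPsineg ha)⟩
end

section
/- Let a′ < a < ā and suppose inf_{b ≥ a} Γ(a, b) > −∞. Then inf_{b ≥ a′} Γ(a′, b) ≤ inf_{b ≥ a} Γ(a, b) + W((a − a′)/2) · ∫_{a′}^{(a+a′)/2} f̃′(y) dy < inf_{b ≥ a} Γ(a, b). In particular, the map a ↦ inf_{b ≥ a} Γ(a, b) is strictly increasing on any subinterval of (−∞, ā) on which it is finite. -/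
open MeasureTheory Filter Set

/-- `inf_{b ≥ a} Γ(a, b)`, computed in the extended reals. -/
noncomputable def GamInf (W g : ℝ → ℝ) (CU CD a : ℝ) : EReal :=
  ⨅ b ∈ Set.Ici a, ((Gam W g CU CD a b : ℝ) : EReal)

lemma abs_mem_uIoc {u v x : ℝ} (hx : x ∈ Set.uIoc u v) : |x| ≤ max |u| |v| := by
  obtain ⟨h1, h2⟩ := hx
  rw [abs_le]
  constructor
  · have hmin : -(max |u| |v|) ≤ min u v :=
      le_min (le_trans (neg_le_neg (le_max_left _ _)) (neg_abs_le u))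
        (le_trans (neg_le_neg (le_max_right _ _)) (neg_abs_le v))
    have := h1.le
    have : min u v ≤ x := le_of_lt h1
    linarith
  · exact h2.trans (max_le_max (le_abs_self u) (le_abs_self v))

lemma gBound {g : ℝ → ℝ} {C : ℝ} {n : ℕ} (hC : ∀ x : ℝ, |g x| ≤ C * (1 + |x|) ^ n)
    {u v x : ℝ} (hx : x ∈ Set.uIoc u v) : |g x| ≤ |C| * (1 + max |u| |v|) ^ n := by
  have hxle : |x| ≤ max |u| |v| := abs_mem_uIoc hx
  have h1 : (1 + |x|) ^ n ≤ (1 + max |u| |v|) ^ n :=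
    pow_le_pow_left₀ (by positivity) (by linarith) n
  calc |g x| ≤ C * (1 + |x|) ^ n := hC x
    _ ≤ |C| * (1 + |x|) ^ n := mul_le_mul_of_nonneg_right (le_abs_self C) (by positivity)
    _ ≤ |C| * (1 + max |u| |v|) ^ n := mul_le_mul_of_nonneg_left h1 (abs_nonneg C)

lemma gInt (g : ℝ → ℝ) (hg_meas : Measurable g)
    (hg_poly : ∃ C : ℝ, ∃ n : ℕ, ∀ x : ℝ, |g x| ≤ C * (1 + |x|) ^ n)
    (u v : ℝ) : IntervalIntegrable g volume u v := by
  obtain ⟨C, n, hC⟩ := hg_poly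
  rw [intervalIntegrable_iff]
  haveI : IsFiniteMeasure (volume.restrict (Set.uIoc u v)) :=
    ⟨by rw [Measure.restrict_apply_univ]; simp [Set.uIoc, Real.volume_Ioc]⟩
  refine Integrable.mono' (integrable_const (|C| * (1 + max |u| |v|) ^ n))
    (hg_meas.aestronglyMeasurable.restrict) ?_
  filter_upwards [ae_restrict_mem measurableSet_uIoc] with x hx
  exact gBound hC hx

lemma WgInt (W g : ℝ → ℝ) (hW_cont : ContinuousOn W (Set.Ici 0))
    (hg_meas : Measurable g)
    (hg_poly : ∃ C : ℝ, ∃ n : ℕ, ∀ x : ℝ, |g x| ≤ C * (1 + |x|) ^ n)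
    (b u v : ℝ) (hu : u ≤ b) (hv : v ≤ b) :
    IntervalIntegrable (fun y => W (b - y) * g y) volume u v := by
  obtain ⟨C, n, hC⟩ := hg_poly
  have hmaxb : max u v ≤ b := max_le hu hv
  have hWc : ContinuousOn (fun y => W (b - y)) (Set.uIcc u v) := by
    apply hW_cont.comp ((continuous_sub_left b).continuousOn)
    intro y hy
    have h2 : y ≤ max u v := hy.2
    simp only [Set.mem_Ici]
    linarith
  obtain ⟨M₁, hM₁⟩ := isCompact_uIcc.exists_bound_of_continuousOn hWc
  have hM₁0 : 0 ≤ M₁ := le_trans (norm_nonneg _) (hM₁ u left_mem_uIcc)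
  rw [intervalIntegrable_iff]
  haveI : IsFiniteMeasure (volume.restrict (Set.uIoc u v)) :=
    ⟨by rw [Measure.restrict_apply_univ]; simp [Set.uIoc, Real.volume_Ioc]⟩
  refine Integrable.mono' (integrable_const (M₁ * (|C| * (1 + max |u| |v|) ^ n))) ?_ ?_
  · have h1 : AEMeasurable (fun y => W (b - y)) (volume.restrict (Set.uIoc u v)) :=
      (hWc.mono uIoc_subset_uIcc).aemeasurable measurableSet_uIoc
    exact (h1.mul hg_meas.aemeasurable).aestronglyMeasurable
  · filter_upwards [ae_restrict_mem measurableSet_uIoc] with x hx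
    have h1 : |W (b - x)| ≤ M₁ := hM₁ x (uIoc_subset_uIcc hx)
    calc ‖W (b - x) * g x‖ = |W (b - x)| * |g x| := abs_mul _ _
      _ ≤ M₁ * (|C| * (1 + max |u| |v|) ^ n) :=
        mul_le_mul h1 (gBound hC hx) (abs_nonneg _) hM₁0

lemma keyLemma
    (g : ℝ → ℝ) (abar : ℝ)
    (hg_meas : Measurable g)
    (hg_poly : ∃ C : ℝ, ∃ n : ℕ, ∀ x : ℝ, |g x| ≤ C * (1 + |x|) ^ n)
    (hg_neg : ∀ᵐ x ∂(volume : Measure ℝ), x < abar → g x < 0)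
    (W : ℝ → ℝ)
    (hW_cont : ContinuousOn W (Set.Ici 0))
    (hW_mono : StrictMonoOn W (Set.Ici 0))
    (hW_pos : ∀ x, 0 < x → 0 < W x)
    (CU CD : ℝ)
    (a' a : ℝ) (ha' : a' < a) (ha : a < abar)
    (hfin : ⊥ < GamInf W g CU CD a) :
    GamInf W g CU CD a' ≤ GamInf W g CU CD a +
        ((W ((a - a') / 2) * ∫ y in a'..((a + a') / 2), g y : ℝ) : EReal) ∧
    GamInf W g CU CD a' < GamInf W g CU CD a := by
  set m : ℝ := (a + a') / 2 with hm
  have ha'm : a' < m := by rw [hm]; linarith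
  have hma : m < a := by rw [hm]; linarith
  set W₀ : ℝ := W ((a - a') / 2) with hW₀
  have hW₀pos : 0 < W₀ := hW_pos _ (by linarith)
  set I : ℝ := ∫ y in a'..m, g y with hI
  -- nonnegativity of W on [0,∞)
  have hW0 : 0 ≤ W 0 := by
    have ht : Filter.Tendsto W (nhdsWithin 0 (Set.Ioi (0:ℝ))) (nhds (W 0)) :=
      ((hW_cont 0 Set.self_mem_Ici).tendsto).mono_left (nhdsWithin_mono 0 Set.Ioi_subset_Ici_self)
    exact ge_of_tendsto ht (eventually_mem_nhdsWithin.mono (fun x hx => (hW_pos x hx).le))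
  have hWnn : ∀ t : ℝ, 0 ≤ t → 0 ≤ W t := fun t ht =>
    hW0.trans (hW_mono.monotoneOn (Set.self_mem_Ici) ht ht)
  -- strict negativity of I
  have hIneg : I < 0 := by
    have h0 : (0:ℝ) < ∫ y in a'..m, (-g) y := by
      rw [intervalIntegral.integral_pos_iff_support_of_nonneg_ae']
      · refine ⟨ha'm, ?_⟩
        have hnull : volume {x : ℝ | ¬ (x < abar → g x < 0)} = 0 := ae_iff.mp hg_neg
        have hsub : Set.Ioc a' m \ (Function.support (-g) ∩ Set.Ioc a' m) ⊆
            {x : ℝ | ¬ (x < abar → g x < 0)} := by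
          intro x hx
          obtain ⟨hx1, hx2⟩ := hx
          simp only [Set.mem_setOf_eq, not_forall, not_lt]
          refine ⟨by linarith [hx1.2], ?_⟩
          by_contra hgx
          push_neg at hgx
          exact hx2 ⟨by simp [Function.mem_support]; linarith, hx1⟩
        have hmono : volume (Set.Ioc a' m) ≤
            volume (Function.support (-g) ∩ Set.Ioc a' m) :=
          measure_mono_ae (by rw [ae_le_set]; exact measure_mono_null hsub hnull)
        have hpos : (0 : ENNReal) < volume (Set.Ioc a' m) := by
          rw [Real.volume_Ioc]
          simp only [ENNReal.ofReal_pos]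
          linarith
        exact lt_of_lt_of_le hpos hmono
      · rw [uIoc_of_le ha'm.le]
        filter_upwards [ae_restrict_of_ae hg_neg, ae_restrict_mem measurableSet_Ioc] with x hx hmem
        have : g x < 0 := hx (by linarith [hmem.2])
        simp only [Pi.neg_apply, Pi.zero_apply]
        linarith
      · exact (gInt g hg_meas hg_poly a' m).neg
    have heq : ∫ y in a'..m, (-g) y = -I := by
      rw [hI]
      simp [intervalIntegral.integral_neg]
    linarith [heq ▸ h0]
  -- the key pointwise estimate on Gam
  have hkey : ∀ b : ℝ, a ≤ b →
      Gam W g CU CD a' b ≤ Gam W g CU CD a b + W₀ * I := by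
    intro b hb
    have ha'b : a' ≤ b := by linarith
    have hmb : m ≤ b := by linarith
    have hWi1 : IntervalIntegrable (fun y => W (b - y) * g y) volume a' a :=
      WgInt W g hW_cont hg_meas hg_poly b a' a ha'b hb
    have hWi2 : IntervalIntegrable (fun y => W (b - y) * g y) volume a b :=
      WgInt W g hW_cont hg_meas hg_poly b a b hb le_rfl
    have hWi3 : IntervalIntegrable (fun y => W (b - y) * g y) volume a' m :=
      WgInt W g hW_cont hg_meas hg_poly b a' m ha'b hmb
    have hWi4 : IntervalIntegrable (fun y => W (b - y) * g y) volume m a :=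
      WgInt W g hW_cont hg_meas hg_poly b m a hmb hb
    have hsplit : (∫ y in a'..b, W (b - y) * g y) =
        (∫ y in a'..a, W (b - y) * g y) + ∫ y in a..b, W (b - y) * g y :=
      (intervalIntegral.integral_add_adjacent_intervals hWi1 hWi2).symm
    have hsplit2 : (∫ y in a'..a, W (b - y) * g y) =
        (∫ y in a'..m, W (b - y) * g y) + ∫ y in m..a, W (b - y) * g y :=
      (intervalIntegral.integral_add_adjacent_intervals hWi3 hWi4).symm
    have hI2 : (∫ y in m..a, W (b - y) * g y) ≤ 0 := by
      have h := intervalIntegral.integral_mono_ae_restrict hma.le hWi4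
        (intervalIntegrable_const (c := (0:ℝ))) ?_
      · simpa using h
      · filter_upwards [ae_restrict_of_ae hg_neg, ae_restrict_mem measurableSet_Icc]
          with x hx hmem
        have hgx : g x < 0 := hx (by linarith [hmem.2])
        have hWx : 0 ≤ W (b - x) := hWnn _ (by linarith [hmem.2])
        exact mul_nonpos_of_nonneg_of_nonpos hWx hgx.le
    have hI1 : (∫ y in a'..m, W (b - y) * g y) ≤ W₀ * I := by
      have h := intervalIntegral.integral_mono_ae_restrict ha'm.le hWi3
        ((gInt g hg_meas hg_poly a' m).const_mul W₀) ?_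
      · calc (∫ y in a'..m, W (b - y) * g y) ≤ ∫ y in a'..m, W₀ * g y := h
          _ = W₀ * I := by rw [hI, intervalIntegral.integral_const_mul]
      · filter_upwards [ae_restrict_of_ae hg_neg, ae_restrict_mem measurableSet_Icc]
          with x hx hmem
        have hgx : g x < 0 := hx (by linarith [hmem.2])
        have harg : (a - a') / 2 ≤ b - x := by
          have := hmem.2
          rw [hm] at this
          linarith
        have hle : W₀ ≤ W (b - x) := by
          rcases eq_or_lt_of_le harg with h | h
          · rw [hW₀, h]
          · exact (hW_mono (by simp only [Set.mem_Ici]; linarith)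
              (by simp only [Set.mem_Ici]; linarith) h).le
        exact mul_le_mul_of_nonpos_right hle hgx.le
    simp only [Gam]
    rw [hsplit, hsplit2]
    linarith
  -- EReal bookkeeping
  have hTop : GamInf W g CU CD a ≠ ⊤ := by
    have h1 : GamInf W g CU CD a ≤ ((Gam W g CU CD a a : ℝ) : EReal) :=
      iInf₂_le a Set.self_mem_Ici
    exact (lt_of_le_of_lt h1 (EReal.coe_lt_top _)).ne
  set r : ℝ := (GamInf W g CU CD a).toReal with hrdef
  have hr : GamInf W g CU CD a = ((r : ℝ) : EReal) :=
    (EReal.coe_toReal hTop hfin.ne').symm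
  have hmain : ∀ ε : ℝ, 0 < ε →
      GamInf W g CU CD a' ≤ ((r + W₀ * I + ε : ℝ) : EReal) := by
    intro ε hε
    have hlt : GamInf W g CU CD a < (((r + ε : ℝ)) : EReal) := by
      rw [hr]
      exact_mod_cast (by linarith : r < r + ε)
    rw [GamInf, iInf_lt_iff] at hlt
    obtain ⟨b, hb'⟩ := hlt
    rw [iInf_lt_iff] at hb'
    obtain ⟨hb, hblt⟩ := hb'
    have hb : a ≤ b := hb
    have hreal : Gam W g CU CD a b < r + ε := by exact_mod_cast hblt
    calc GamInf W g CU CD a' ≤ ((Gam W g CU CD a' b : ℝ) : EReal) :=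
          iInf₂_le b (le_trans ha'.le hb)
      _ ≤ ((r + W₀ * I + ε : ℝ) : EReal) := by
          have := hkey b hb
          exact_mod_cast (by linarith : Gam W g CU CD a' b ≤ r + W₀ * I + ε)
  have hA : GamInf W g CU CD a' ≤ ((r + W₀ * I : ℝ) : EReal) := by
    by_contra hcon
    push_neg at hcon
    obtain ⟨s, hs1, hs2⟩ := EReal.exists_between_coe_real hcon
    have hs1' : r + W₀ * I < s := by exact_mod_cast hs1
    have := hmain (s - (r + W₀ * I)) (by linarith)
    rw [show r + W₀ * I + (s - (r + W₀ * I)) = s by ring] at this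
    exact absurd hs2 this.not_gt
  constructor
  · rw [hr, ← EReal.coe_add]
    exact hA
  · have hc : W₀ * I < 0 := mul_neg_of_pos_of_neg hW₀pos hIneg
    refine lt_of_le_of_lt hA ?_
    rw [hr]
    exact_mod_cast (by linarith : r + W₀ * I < r)

theorem stmt4
    (Φ : ℝ) (hΦ : 0 < Φ)
    (f g : ℝ → ℝ) (abar c₀ x₀ : ℝ)
    (hf_cont : Continuous f)
    (hf_pw : ∃ D : Set ℝ, D.Countable ∧ ∀ x ∉ D, HasDerivAt f (g x) x ∧ ContinuousAt g x)
    (hg_meas : Measurable g)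
    (hf_poly : ∃ C : ℝ, ∃ n : ℕ, ∀ x : ℝ, |f x| ≤ C * (1 + |x|) ^ n)
    (hg_poly : ∃ C : ℝ, ∃ n : ℕ, ∀ x : ℝ, |g x| ≤ C * (1 + |x|) ^ n)
    (hf_inc : StrictMonoOn f (Set.Ioi abar))
    (hf_dec : StrictAntiOn f (Set.Iio abar))
    (hf_conv : ConvexOn ℝ (Set.Iio abar) f)
    (hc₀ : 0 < c₀) (hx₀ : abar ≤ x₀)
    (hg_ge : ∀ x, x₀ ≤ x → c₀ ≤ g x)
    (hg_neg : ∀ᵐ x ∂(volume : Measure ℝ), x < abar → g x < 0)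
    (W : ℝ → ℝ)
    (hW_neg : ∀ x, x < 0 → W x = 0)
    (hW_cont : ContinuousOn W (Set.Ici 0))
    (hW_mono : StrictMonoOn W (Set.Ici 0))
    (hW_pos : ∀ x, 0 < x → 0 < W x)
    (CU CD : ℝ) (hC : 0 < CU + CD)
    (a' a : ℝ) (ha' : a' < a) (ha : a < abar)
    (hfin : ⊥ < GamInf W g CU CD a) :
    GamInf W g CU CD a' ≤ GamInf W g CU CD a +
        ((W ((a - a') / 2) * ∫ y in a'..((a + a') / 2), g y : ℝ) : EReal) ∧
    GamInf W g CU CD a' < GamInf W g CU CD a ∧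
    (∀ a₁ a₂ : ℝ, a₁ < a₂ → a₂ < abar →
      GamInf W g CU CD a₁ ≠ ⊥ → GamInf W g CU CD a₂ ≠ ⊥ →
      GamInf W g CU CD a₁ < GamInf W g CU CD a₂) := by
  obtain ⟨h1, h2⟩ := keyLemma g abar hg_meas hg_poly hg_neg W hW_cont hW_mono hW_pos CU CD
    a' a ha' ha hfin
  refine ⟨h1, h2, ?_⟩
  intro a₁ a₂ h12 h2bar _ h2bot
  exact (keyLemma g abar hg_meas hg_poly hg_neg W hW_cont hW_mono hW_pos CU CD
    a₁ a₂ h12 h2bar (bot_lt_iff_ne_bot.mpr h2bot)).2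
end

section
/- For every b ∈ ℝ there exists a unique a(b) ∈ (−∞, min(ā, b)) such that Γ(a(b), b) = 0. Moreover Γ(a, b) < 0 for every a < a(b), Γ(a, b) > 0 for every a with a(b) < a < min(ā, b), and Γ(a, b) > 0 for every a ∈ [min(ā, b), b]. -/
open MeasureTheory Filter Set
open Topology

lemma deriv_le_slope_right {f : ℝ → ℝ} {y g' z : ℝ} (hy : HasDerivAt f g' y) (hyz : y < z)
    (hbound : ∀ w ∈ Set.Ioo y z, (f w - f y) / (w - y) ≤ (f z - f y) / (z - y)) :
    g' ≤ (f z - f y) / (z - y) := by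
  have ht := hasDerivAt_iff_tendsto_slope.mp hy
  have ht' : Tendsto (slope f y) (𝓝[>] y) (𝓝 g') :=
    ht.mono_left (nhdsWithin_mono _ fun w hw => ne_of_gt hw)
  refine le_of_tendsto ht' ?_
  filter_upwards [Ioo_mem_nhdsGT_of_mem ⟨le_refl y, hyz⟩] with w hw
  rw [slope_def_field]
  exact hbound w hw

lemma slope_le_deriv_left {f : ℝ → ℝ} {y g' z : ℝ} (hz : HasDerivAt f g' z) (hyz : y < z)
    (hbound : ∀ w ∈ Set.Ioo y z, (f y - f z) / (y - z) ≤ (f w - f z) / (w - z)) :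
    (f y - f z) / (y - z) ≤ g' := by
  have ht := hasDerivAt_iff_tendsto_slope.mp hz
  have ht' : Tendsto (slope f z) (𝓝[<] z) (𝓝 g') :=
    ht.mono_left (nhdsWithin_mono _ fun w hw => ne_of_lt hw)
  refine ge_of_tendsto ht' ?_
  filter_upwards [Ioo_mem_nhdsLT_of_mem ⟨hyz, le_refl z⟩] with w hw
  rw [slope_def_field]
  exact hbound w hw

lemma deriv_nonneg_right {f : ℝ → ℝ} {y g' : ℝ} (hy : HasDerivAt f g' y)
    (hbound : ∀ w ∈ Set.Ioi y, 0 ≤ (f w - f y) / (w - y)) : 0 ≤ g' := by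
  have ht := hasDerivAt_iff_tendsto_slope.mp hy
  have ht' : Tendsto (slope f y) (𝓝[>] y) (𝓝 g') :=
    ht.mono_left (nhdsWithin_mono _ fun w hw => ne_of_gt hw)
  refine ge_of_tendsto ht' ?_
  filter_upwards [self_mem_nhdsWithin] with w hw
  rw [slope_def_field]
  exact hbound w hw

/-- For every `b` there is a unique `a(b) < min(ā, b)` with `Γ(a(b), b) = 0`; moreover
`Γ(·, b)` is negative below `a(b)` and positive above it (up to `b`). -/
theorem stmt8
    (Φ : ℝ) (hΦ : 0 < Φ)
    (f g : ℝ → ℝ) (abar c₀ x₀ : ℝ)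
    (hf_cont : Continuous f)
    (hf_pw : ∃ D : Set ℝ, D.Countable ∧ ∀ x ∉ D, HasDerivAt f (g x) x ∧ ContinuousAt g x)
    (hg_meas : Measurable g)
    (hf_poly : ∃ C : ℝ, ∃ n : ℕ, ∀ x : ℝ, |f x| ≤ C * (1 + |x|) ^ n)
    (hg_poly : ∃ C : ℝ, ∃ n : ℕ, ∀ x : ℝ, |g x| ≤ C * (1 + |x|) ^ n)
    (hf_inc : StrictMonoOn f (Set.Ioi abar))
    (hf_dec : StrictAntiOn f (Set.Iio abar))
    (hf_conv : ConvexOn ℝ (Set.Iio abar) f)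
    (hc₀ : 0 < c₀) (hx₀ : abar ≤ x₀)
    (hg_ge : ∀ x, x₀ ≤ x → c₀ ≤ g x)
    (W : ℝ → ℝ)
    (hW_neg : ∀ x, x < 0 → W x = 0)
    (hW_cont : ContinuousOn W (Set.Ici 0))
    (hW_mono : StrictMonoOn W (Set.Ici 0))
    (hW_pos : ∀ x, 0 < x → 0 < W x)
    (CU CD : ℝ) (hC : 0 < CU + CD) :
    ∀ b : ℝ, ∃ ab : ℝ, ab < min abar b ∧ Gam W g CU CD ab b = 0 ∧
      (∀ a, a < ab → Gam W g CU CD a b < 0) ∧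
      (∀ a, ab < a → a < min abar b → 0 < Gam W g CU CD a b) ∧
      (∀ a, min abar b ≤ a → a ≤ b → 0 < Gam W g CU CD a b) ∧
      (∀ a', a' < min abar b → Gam W g CU CD a' b = 0 → a' = ab) := by
  obtain ⟨D, hDcount, hDf⟩ := hf_pw
  obtain ⟨Cg, n, hCg⟩ := hg_poly
  -- the continuous extension of W
  set Wc : ℝ → ℝ := fun x => W (max x 0) with hWcdef
  have hWc_cont : Continuous Wc :=
    hW_cont.comp_continuous (continuous_id.max continuous_const) fun x => le_max_right x 0
  have hWeq : W = (Set.Ici (0:ℝ)).indicator Wc := by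
    funext x
    by_cases hx : (0:ℝ) ≤ x
    · simp [Set.indicator_of_mem (mem_Ici.mpr hx), hWcdef, max_eq_left hx]
    · simp [Set.indicator_of_notMem (by simpa using hx : x ∉ Set.Ici (0:ℝ)),
        hW_neg x (lt_of_not_ge hx)]
  have hWmeas : Measurable W := by
    rw [hWeq]; exact hWc_cont.measurable.indicator measurableSet_Ici
  have hW0 : 0 ≤ W 0 := by
    have hcw : ContinuousWithinAt W (Set.Ici 0) 0 := hW_cont 0 Set.self_mem_Ici
    have ht : Tendsto W (𝓝[>] (0:ℝ)) (𝓝 (W 0)) :=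
      hcw.tendsto.mono_left (nhdsWithin_mono _ Ioi_subset_Ici_self)
    refine ge_of_tendsto ht ?_
    filter_upwards [self_mem_nhdsWithin] with x hx
    exact (hW_pos x hx).le
  have hW_nonneg : ∀ x, 0 ≤ W x := by
    intro x
    rcases lt_trichotomy x 0 with h | h | h
    · exact le_of_eq (hW_neg x h).symm
    · exact h ▸ hW0
    · exact (hW_pos x h).le
  -- pointwise sign facts for g
  have hg_neg : ∀ y, y < abar → y ∉ D → g y < 0 := by
    intro y hy hyD
    obtain ⟨hyd, -⟩ := hDf y hyD
    set z := (y + abar) / 2 with hz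
    have hyz : y < z := by rw [hz]; linarith
    have hzab : z < abar := by rw [hz]; linarith
    have h1 : g y ≤ (f z - f y) / (z - y) := by
      refine deriv_le_slope_right hyd hyz ?_
      intro w hw
      exact hf_conv.secant_mono (mem_Iio.mpr hy) (mem_Iio.mpr (hw.2.trans hzab))
        (mem_Iio.mpr hzab) (ne_of_gt hw.1) (ne_of_gt (hyz)) hw.2.le
    have h2 : f z < f y := hf_dec (mem_Iio.mpr hy) (mem_Iio.mpr hzab) hyz
    have h3 : (f z - f y) / (z - y) < 0 := div_neg_of_neg_of_pos (by linarith) (by linarith)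
    linarith
  have hg_nonneg : ∀ y, abar < y → y ∉ D → 0 ≤ g y := by
    intro y hy hyD
    obtain ⟨hyd, -⟩ := hDf y hyD
    refine deriv_nonneg_right hyd ?_
    intro w hw
    have hw' : y < w := hw
    have := hf_inc (mem_Ioi.mpr hy) (mem_Ioi.mpr (hy.trans hw')) hw'
    exact div_nonneg (by linarith) (by linarith)
  have hg_mono : ∀ z, z < abar → z ∉ D → ∀ y, y < z → y ∉ D → g y ≤ g z := by
    intro z hzab hzD y hyz hyD
    obtain ⟨hyd, -⟩ := hDf y hyD
    obtain ⟨hzd, -⟩ := hDf z hzD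
    have hyab : y < abar := hyz.trans hzab
    have h1 : g y ≤ (f z - f y) / (z - y) := by
      refine deriv_le_slope_right hyd hyz ?_
      intro w hw
      exact hf_conv.secant_mono (mem_Iio.mpr hyab) (mem_Iio.mpr (hw.2.trans hzab))
        (mem_Iio.mpr hzab) (ne_of_gt hw.1) (ne_of_gt hyz) hw.2.le
    have h2 : (f y - f z) / (y - z) ≤ g z := by
      refine slope_le_deriv_left hzd hyz ?_
      intro w hw
      exact hf_conv.secant_mono (mem_Iio.mpr hzab) (mem_Iio.mpr hyab)
        (mem_Iio.mpr (hw.2.trans hzab)) (ne_of_lt hyz) (ne_of_lt hw.2) hw.1.le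
    have h3 : (f z - f y) / (z - y) = (f y - f z) / (y - z) := by
      rw [← neg_sub (f z) (f y), ← neg_sub z y, neg_div_neg_eq]
    linarith
  intro b
  set m : ℝ := min abar b with hm
  have hmabar : m ≤ abar := min_le_left _ _
  have hmb : m ≤ b := min_le_right _ _
  set F : ℝ → ℝ := fun y => W (b - y) * g y with hFdef
  have hFmeas : Measurable F := (hWmeas.comp (measurable_const.sub measurable_id)).mul hg_meas
  have hFint : ∀ u v : ℝ, IntervalIntegrable F volume u v := by
    intro u v
    set G : ℝ → ℝ := fun y => |Wc (b - y)| * (Cg * (1 + |y|) ^ n) with hG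
    have hGc : Continuous G :=
      ((hWc_cont.comp (continuous_const.sub continuous_id)).abs).mul
        (continuous_const.mul ((continuous_const.add continuous_abs).pow n))
    have hGint : IntervalIntegrable G volume u v := hGc.intervalIntegrable u v
    refine hGint.mono_fun' hFmeas.aestronglyMeasurable ?_
    refine Eventually.of_forall fun y => ?_
    show ‖F y‖ ≤ G y
    have h1 : |W (b - y)| ≤ |Wc (b - y)| := by
      by_cases hby : (0:ℝ) ≤ b - y
      · simp [hWcdef, max_eq_left hby]
      · rw [hW_neg _ (lt_of_not_ge hby)]; simp
    calc ‖F y‖ = |W (b - y)| * |g y| := by rw [Real.norm_eq_abs, hFdef, abs_mul]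
      _ ≤ |Wc (b - y)| * (Cg * (1 + |y|) ^ n) :=
          mul_le_mul h1 (hCg y) (abs_nonneg _) (abs_nonneg _)
      _ = G y := rfl
  have hGam : ∀ a, Gam W g CU CD a b = CD + CU + ∫ y in a..b, F y := fun a => rfl
  have hcont : Continuous fun a => Gam W g CU CD a b := by
    have h1 : Continuous fun a => ∫ y in b..a, F y := intervalIntegral.continuous_primitive hFint b
    have h2 : (fun a => Gam W g CU CD a b) = fun a => CD + CU + -(∫ y in b..a, F y) := by
      funext a
      rw [hGam a, intervalIntegral.integral_symm]
    rw [h2]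
    exact continuous_const.add h1.neg
  -- the null set
  set N : Set ℝ := D ∪ {abar, b} with hN
  have hN0 : volume N = 0 :=
    (hDcount.union ((Set.countable_singleton b).insert abar)).measure_zero _
  have haeN : ∀ᵐ y ∂(volume : Measure ℝ), y ∉ N := measure_eq_zero_iff_ae_notMem.mp hN0
  -- strict negativity of the integral over intervals below m
  have hIneg : ∀ a1 a2 : ℝ, a1 < a2 → a2 ≤ m → (∫ y in a1..a2, F y) < 0 := by
    intro a1 a2 h12 h2m
    have hInt : IntegrableOn F (Set.Ioc a1 a2) volume := (hFint a1 a2).1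
    have hnn : 0 ≤ᵐ[volume.restrict (Set.Ioc a1 a2)] fun y => -F y := by
      filter_upwards [ae_restrict_of_ae haeN, ae_restrict_mem measurableSet_Ioc] with y hyN hy
      have hyD : y ∉ D := fun h => hyN (Or.inl h)
      have hyab : y ≠ abar := fun h => hyN (Or.inr (Or.inl h))
      have hylt : y < abar := lt_of_le_of_ne (hy.2.trans (h2m.trans hmabar)) hyab
      have h1 := hg_neg y hylt hyD
      have h2 := hW_nonneg (b - y)
      exact neg_nonneg.mpr (mul_nonpos_of_nonneg_of_nonpos h2 h1.le)
    have hkey : 0 < ∫ y in Set.Ioc a1 a2, -F y := by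
      rw [setIntegral_pos_iff_support_of_nonneg_ae hnn hInt.neg]
      have hsub : Set.Ioc a1 a2 \ N ⊆ Function.support (fun y => -F y) ∩ Set.Ioc a1 a2 := by
        rintro y ⟨hy, hyN⟩
        refine ⟨?_, hy⟩
        have hyD : y ∉ D := fun h => hyN (Or.inl h)
        have hylt : y < abar :=
          lt_of_le_of_ne (hy.2.trans (h2m.trans hmabar)) (fun h => hyN (Or.inr (Or.inl h)))
        have hyb : y < b :=
          lt_of_le_of_ne (hy.2.trans (h2m.trans hmb)) (fun h => hyN (Or.inr (Or.inr h)))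
        have h1 : 0 < W (b - y) := hW_pos _ (by linarith)
        have h2 : g y < 0 := hg_neg y hylt hyD
        have h3 : F y < 0 := mul_neg_of_pos_of_neg h1 h2
        simp only [Function.mem_support]
        intro hzero
        have := neg_eq_zero.mp hzero
        linarith
      have hdiff : volume (Set.Ioc a1 a2 \ N) = volume (Set.Ioc a1 a2) := measure_diff_null hN0
      have hpos : (0:ENNReal) < volume (Set.Ioc a1 a2) := by
        rw [Real.volume_Ioc]
        simpa using h12
      calc (0:ENNReal) < volume (Set.Ioc a1 a2 \ N) := hdiff ▸ hpos
        _ ≤ volume (Function.support (fun y => -F y) ∩ Set.Ioc a1 a2) := measure_mono hsub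
    have hneg : ∫ y in Set.Ioc a1 a2, -F y = -∫ y in Set.Ioc a1 a2, F y := integral_neg _
    rw [intervalIntegral.integral_of_le h12.le]
    linarith [hkey, hneg.symm ▸ hkey]
  have hstrict : StrictMonoOn (fun a => Gam W g CU CD a b) (Set.Iic m) := by
    intro a1 h1 a2 h2 h12
    have hadd := intervalIntegral.integral_add_adjacent_intervals (hFint a1 a2) (hFint a2 b)
    have hI := hIneg a1 a2 h12 h2
    simp only [hGam]
    linarith [hadd]
  have hpos_right : ∀ a, m ≤ a → a ≤ b → 0 < Gam W g CU CD a b := by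
    intro a hma hab
    have hint : 0 ≤ ∫ y in a..b, F y := by
      apply intervalIntegral.integral_nonneg_of_ae_restrict hab
      filter_upwards [ae_restrict_of_ae haeN, ae_restrict_mem measurableSet_Icc] with y hyN hy
      have hyD : y ∉ D := fun h => hyN (Or.inl h)
      have hyab : y ≠ abar := fun h => hyN (Or.inr (Or.inl h))
      have hyb : y ≠ b := fun h => hyN (Or.inr (Or.inr h))
      rcases lt_or_gt_of_ne hyab with hlt | hgt
      · exfalso
        have h1 : m ≤ y := hma.trans hy.1
        have h2 : y < b := lt_of_le_of_ne hy.2 hyb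
        have h3 : y < m := lt_min hlt h2
        linarith
      · exact mul_nonneg (hW_nonneg _) (hg_nonneg y hgt hyD)
    rw [hGam a]
    linarith
  have hbelow : ∃ a₁, a₁ < m ∧ Gam W g CU CD a₁ b < 0 := by
    have hzex : ∃ z₁, z₁ < m ∧ z₁ ∉ D := by
      by_contra h
      push_neg at h
      have hsub : Set.Iio m ⊆ D := fun z hz => h z hz
      have hmle := measure_mono (μ := volume) hsub
      rw [Real.volume_Iio, hDcount.measure_zero] at hmle
      simp at hmle
    obtain ⟨z₁, hz₁m, hz₁D⟩ := hzex
    have hz₁ab : z₁ < abar := lt_of_lt_of_le hz₁m hmabar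
    have hz₁b : z₁ < b := lt_of_lt_of_le hz₁m hmb
    obtain ⟨δ, hδ⟩ : ∃ x : ℝ, x = -g z₁ := ⟨_, rfl⟩
    have hδpos : 0 < δ := by
      have := hg_neg z₁ hz₁ab hz₁D
      rw [hδ]; linarith
    obtain ⟨w₁, hw₁⟩ : ∃ x : ℝ, x = W (b - z₁) := ⟨_, rfl⟩
    have hw₁pos : 0 < w₁ := hw₁ ▸ hW_pos _ (by linarith)
    obtain ⟨K, hK⟩ : ∃ x : ℝ, x = ∫ y in z₁..b, F y := ⟨_, rfl⟩
    obtain ⟨S, hS⟩ : ∃ x : ℝ, x = CD + CU + K := ⟨_, rfl⟩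
    obtain ⟨a₁, ha₁⟩ : ∃ x : ℝ, x = z₁ - (1 + max 0 (S / (δ * w₁))) := ⟨_, rfl⟩
    have ha₁z : a₁ < z₁ := by
      have := le_max_left (0:ℝ) (S / (δ * w₁))
      rw [ha₁]; linarith
    refine ⟨a₁, ha₁z.trans hz₁m, ?_⟩
    have hboundae : F ≤ᵐ[volume.restrict (Set.Icc a₁ z₁)] fun _ => w₁ * (-δ) := by
      filter_upwards [ae_restrict_of_ae haeN, ae_restrict_mem measurableSet_Icc] with y hyN hy
      have hyD : y ∉ D := fun h => hyN (Or.inl h)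
      rcases eq_or_lt_of_le hy.2 with heq | hlt
      · rw [heq, hδ, hw₁]
        have hFz : F z₁ = W (b - z₁) * g z₁ := by rw [hFdef]
        rw [hFz]
        exact le_of_eq (by ring)
      · have hgy : g y ≤ -δ := by
          have := hg_mono z₁ hz₁ab hz₁D y hlt hyD
          rw [hδ]; linarith
        have hWy : w₁ ≤ W (b - y) := by
          rw [hw₁]
          have h0 : (0:ℝ) ≤ b - z₁ := by linarith
          have h0' : (0:ℝ) ≤ b - y := by linarith
          exact hW_mono.monotoneOn (mem_Ici.mpr h0) (mem_Ici.mpr h0') (by linarith)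
        calc F y = W (b - y) * g y := rfl
          _ ≤ w₁ * g y := mul_le_mul_of_nonpos_right hWy (by linarith)
          _ ≤ w₁ * (-δ) := mul_le_mul_of_nonneg_left hgy hw₁pos.le
    have hmono := intervalIntegral.integral_mono_ae_restrict ha₁z.le (hFint a₁ z₁)
      (intervalIntegrable_const) hboundae
    rw [intervalIntegral.integral_const] at hmono
    have hadd := intervalIntegral.integral_add_adjacent_intervals (hFint a₁ z₁) (hFint z₁ b)
    have hfinal : S < (z₁ - a₁) * (δ * w₁) := by
      have hz₁a₁ : z₁ - a₁ = 1 + max 0 (S / (δ * w₁)) := by rw [ha₁]; ring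
      have h1 : S / (δ * w₁) ≤ max 0 (S / (δ * w₁)) := le_max_right _ _
      have hP : 0 < δ * w₁ := mul_pos hδpos hw₁pos
      have h2 : (1 + S / (δ * w₁)) * (δ * w₁) = δ * w₁ + S := by field_simp
      have h3 : (1 + S / (δ * w₁)) * (δ * w₁) ≤ (z₁ - a₁) * (δ * w₁) :=
        mul_le_mul_of_nonneg_right (by linarith) hP.le
      linarith
    rw [hGam]
    have heqI : ∫ y in a₁..b, F y = (∫ y in a₁..z₁, F y) + K := by rw [hK, ← hadd]
    rw [heqI]
    have hsm : (z₁ - a₁) • (w₁ * -δ) = -((z₁ - a₁) * (δ * w₁)) := by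
      rw [smul_eq_mul]; ring
    rw [hsm] at hmono
    rw [hS] at hfinal
    linarith
  obtain ⟨a₁, ha₁m, ha₁neg⟩ := hbelow
  have hmpos : 0 < Gam W g CU CD m b := hpos_right m le_rfl hmb
  obtain ⟨ab, habmem, habeq⟩ :=
    intermediate_value_Ioo ha₁m.le hcont.continuousOn
      (show (0:ℝ) ∈ Set.Ioo (Gam W g CU CD a₁ b) (Gam W g CU CD m b) from ⟨ha₁neg, hmpos⟩)
  refine ⟨ab, habmem.2, habeq, ?_, ?_, hpos_right, ?_⟩
  · intro a ha
    have := hstrict (le_of_lt (ha.trans habmem.2) : a ∈ Set.Iic m)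
      (habmem.2.le : ab ∈ Set.Iic m) ha
    simpa [habeq] using this
  · intro a hab ham
    have := hstrict (habmem.2.le : ab ∈ Set.Iic m) (ham.le : a ∈ Set.Iic m) hab
    simpa [habeq] using this
  · intro a' ha' heq
    refine hstrict.injOn (ha'.le : a' ∈ Set.Iic m) (habmem.2.le : ab ∈ Set.Iic m) ?_
    show Gam W g CU CD a' b = Gam W g CU CD ab b
    rw [heq]; exact habeq.symm
end

section
/- (i) If b > b′ > b*, then a(b) < a(b′) < a*. (ii) If b > b*, then b̃(a(b)) ≤ b; in particular b″ ↦ Γ(a(b), b″) is strictly increasing on (b, ∞). -/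
open MeasureTheory Filter Set
open scoped Topology

/-! ### Auxiliary lemmas -/

lemma aux_W_monotone {W : ℝ → ℝ} (hW_neg : ∀ x, x < 0 → W x = 0)
    (hW_cont : ContinuousOn W (Set.Ici 0))
    (hW_mono : StrictMonoOn W (Set.Ici 0))
    (hW_pos : ∀ x, 0 < x → 0 < W x) : Monotone W := by
  have hW0 : 0 ≤ W 0 := by
    have ht : Tendsto W (𝓝[>] (0:ℝ)) (𝓝 (W 0)) :=
      (hW_cont 0 (Set.mem_Ici.2 le_rfl)).mono_left (nhdsWithin_mono 0 Ioi_subset_Ici_self)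
    refine ge_of_tendsto ht ?_
    filter_upwards [self_mem_nhdsWithin] with x hx
    exact (hW_pos x hx).le
  intro x y hxy
  rcases lt_or_ge x 0 with hx | hx
  · rw [hW_neg x hx]
    rcases lt_or_ge y 0 with hy | hy
    · rw [hW_neg y hy]
    · exact hW0.trans (hW_mono.monotoneOn (mem_Ici.2 le_rfl) (mem_Ici.2 hy) hy)
  · exact hW_mono.monotoneOn (mem_Ici.2 hx) (mem_Ici.2 (hx.trans hxy)) hxy

lemma aux_W_nonneg {W : ℝ → ℝ} (hW_neg : ∀ x, x < 0 → W x = 0)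
    (hWm : Monotone W) : ∀ t, 0 ≤ W t := by
  intro t
  rcases lt_or_ge t 0 with h | h
  · rw [hW_neg t h]
  · calc (0:ℝ) = W (-1) := (hW_neg (-1) (by norm_num)).symm
      _ ≤ W t := hWm (by linarith)

lemma aux_g_loc_bound {g : ℝ → ℝ}
    (hg_poly : ∃ C : ℝ, ∃ n : ℕ, ∀ x : ℝ, |g x| ≤ C * (1 + |x|) ^ n) (K : ℝ) :
    ∃ Cg : ℝ, 0 ≤ Cg ∧ ∀ y : ℝ, |y| ≤ K → |g y| ≤ Cg := by
  obtain ⟨C, n, h⟩ := hg_poly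
  have hC : 0 ≤ C := by
    have h0 := (abs_nonneg (g 0)).trans (h 0)
    simpa using h0
  refine ⟨C * (1 + |K|) ^ n, by positivity, fun y hy => (h y).trans ?_⟩
  have h1 : (1 + |y|) ^ n ≤ (1 + |K|) ^ n := by
    refine pow_le_pow_left₀ (by positivity) ?_ n
    have := le_abs_self K
    linarith
  exact mul_le_mul_of_nonneg_left h1 hC

lemma aux_intable {W g : ℝ → ℝ} (hWm : Monotone W) (hWnn : ∀ t, 0 ≤ W t)
    (hg_meas : Measurable g)
    (hg_poly : ∃ C : ℝ, ∃ n : ℕ, ∀ x : ℝ, |g x| ≤ C * (1 + |x|) ^ n)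
    (b u v : ℝ) :
    IntervalIntegrable (fun y => W (b - y) * g y) volume u v := by
  rw [intervalIntegrable_iff]
  obtain ⟨Cg, hCg0, hCg⟩ := aux_g_loc_bound hg_poly (|u| + |v|)
  have hmeas : Measurable fun y => W (b - y) * g y :=
    ((hWm.measurable).comp (measurable_const.sub measurable_id)).mul hg_meas
  refine Integrable.mono' (g := fun _ => W (b - min u v) * Cg) ?_
    hmeas.aestronglyMeasurable ?_
  · exact integrableOn_const measure_Ioc_lt_top.ne
  · refine (ae_restrict_mem measurableSet_uIoc).mono fun y hy => ?_
    rw [Set.mem_uIoc] at hy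
    have h1 : min u v < y := by
      rcases hy with h | h
      · exact lt_of_le_of_lt (min_le_left _ _) h.1
      · exact lt_of_le_of_lt (min_le_right _ _) h.1
    have h2 : y ≤ max u v := by
      rcases hy with h | h
      · exact h.2.trans (le_max_right _ _)
      · exact h.2.trans (le_max_left _ _)
    have habs : |y| ≤ |u| + |v| := by
      rw [abs_le]
      constructor
      · have hmin : -(|u| + |v|) ≤ min u v := by
          refine le_min ?_ ?_
          · have := neg_abs_le u; have := abs_nonneg v; linarith
          · have := neg_abs_le v; have := abs_nonneg u; linarith
        linarith
      · have hmax : max u v ≤ |u| + |v| := by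
          refine max_le ?_ ?_
          · have := le_abs_self u; have := abs_nonneg v; linarith
          · have := le_abs_self v; have := abs_nonneg u; linarith
        linarith
    rw [Real.norm_eq_abs, abs_mul, abs_of_nonneg (hWnn _)]
    exact mul_le_mul (hWm (by linarith)) (hCg y habs) (abs_nonneg _) (hWnn _)

lemma aux_gam_split {W g : ℝ → ℝ} (CU CD : ℝ)
    (hint : ∀ b u v : ℝ, IntervalIntegrable (fun y => W (b - y) * g y) volume u v)
    (a₁ a₂ b : ℝ) :
    Gam W g CU CD a₁ b = Gam W g CU CD a₂ b + ∫ y in a₁..a₂, W (b - y) * g y := by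
  have h := intervalIntegral.integral_add_adjacent_intervals (hint b a₁ a₂) (hint b a₂ b)
  simp only [Gam]
  linarith

lemma aux_g_neg {f g : ℝ → ℝ} {abar : ℝ}
    (hf_dec : StrictAntiOn f (Set.Iio abar))
    (hf_conv : ConvexOn ℝ (Set.Iio abar) f)
    {D : Set ℝ} (hD : ∀ x ∉ D, HasDerivAt f (g x) x ∧ ContinuousAt g x)
    {x : ℝ} (hx : x < abar) (hxD : x ∉ D) : g x < 0 := by
  set t := (x + abar) / 2 with hts
  have hxt : x < t := by rw [hts]; linarith
  have htb : t < abar := by rw [hts]; linarith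
  have hle : g x ≤ slope f x t :=
    hf_conv.le_slope_of_hasDerivAt (mem_Iio.2 hx) (mem_Iio.2 htb) hxt (hD x hxD).1
  have hslope : slope f x t < 0 := by
    rw [slope_def_field]
    apply div_neg_of_neg_of_pos
    · have := hf_dec (mem_Iio.2 hx) (mem_Iio.2 htb) hxt
      linarith
    · linarith
  linarith

lemma aux_int_neg {W g : ℝ → ℝ} {abar : ℝ} {D : Set ℝ} (hDc : D.Countable)
    (hWnn : ∀ t, 0 ≤ W t) (hW_pos : ∀ x, 0 < x → 0 < W x)
    (hint : ∀ b u v : ℝ, IntervalIntegrable (fun y => W (b - y) * g y) volume u v)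
    (hgneg : ∀ x, x < abar → x ∉ D → g x < 0)
    (a₁ a₂ b : ℝ) (h12 : a₁ < a₂) (h2 : a₂ < abar) (h2b : a₂ < b) :
    ∫ y in a₁..a₂, W (b - y) * g y < 0 := by
  rw [intervalIntegral.integral_of_le h12.le]
  have hDnull : ∀ᵐ y : ℝ, y ∉ D := hDc.ae_notMem _
  have hkey : 0 < ∫ y in Set.Ioc a₁ a₂, -(W (b - y) * g y) := by
    refine (setIntegral_pos_iff_support_of_nonneg_ae ?_ ?_).2 ?_
    · filter_upwards [ae_restrict_mem measurableSet_Ioc, ae_restrict_of_ae hDnull] with y hy hyD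
      have hg := hgneg y (lt_of_le_of_lt hy.2 h2) hyD
      have hw := hWnn (b - y)
      simp only [Pi.zero_apply]
      nlinarith
    · exact ((hint b a₁ a₂).1).neg
    · refine lt_of_lt_of_le ?_
        (measure_mono (?_ : Set.Ioc a₁ a₂ \ D ⊆ _))
      · rw [measure_diff_null (hDc.measure_zero _), Real.volume_Ioc]
        exact ENNReal.ofReal_pos.2 (by linarith)
      · rintro y ⟨hy, hyD⟩
        refine ⟨?_, hy⟩
        have hg := hgneg y (lt_of_le_of_lt hy.2 h2) hyD
        have hw := hW_pos (b - y) (by linarith [hy.2])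
        simp only [Function.mem_support]
        nlinarith
  have hneg : ∫ y in Set.Ioc a₁ a₂, -(W (b - y) * g y)
      = - ∫ y in Set.Ioc a₁ a₂, W (b - y) * g y := by
    exact integral_neg _
  linarith [hkey, hneg ▸ hkey]

lemma aux_gam_tendsto {W g : ℝ → ℝ} (CU CD : ℝ)
    (hWm : Monotone W) (hWnn : ∀ t, 0 ≤ W t)
    (hW_cont : ContinuousOn W (Set.Ici 0))
    (hg_meas : Measurable g)
    (hg_poly : ∃ C : ℝ, ∃ n : ℕ, ∀ x : ℝ, |g x| ≤ C * (1 + |x|) ^ n)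
    (a b' : ℝ) (hab : a < b') :
    Tendsto (fun t => Gam W g CU CD a t) (𝓝[>] b') (𝓝 (Gam W g CU CD a b')) := by
  obtain ⟨Cg, hCg0, hCg⟩ := aux_g_loc_bound hg_poly (|a| + |b'| + 1)
  set s : Set ℝ := Set.Ioc a (b' + 1) with hs
  set h : ℝ → ℝ → ℝ := fun t y => (Set.Ioc a t).indicator (fun z => W (t - z) * g z) y with hh
  have hB0 : 0 ≤ W (b' + 1 - a) * Cg := mul_nonneg (hWnn _) hCg0
  have habs : ∀ y ∈ s, |g y| ≤ Cg := by
    intro y hy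
    refine hCg y ?_
    rw [abs_le]
    constructor
    · have := neg_abs_le a; have := abs_nonneg b'; linarith [hy.1]
    · have := le_abs_self b'; have := abs_nonneg a; linarith [hy.2]
  have hmeas : ∀ t : ℝ, AEStronglyMeasurable (h t) (volume.restrict s) := by
    intro t
    refine Measurable.aestronglyMeasurable ?_
    exact ((((hWm.measurable).comp (measurable_const.sub measurable_id)).mul
      hg_meas).indicator measurableSet_Ioc)
  have hbound : ∀ᶠ t in 𝓝[>] b', ∀ᵐ y ∂volume.restrict s,
      ‖h t y‖ ≤ W (b' + 1 - a) * Cg := by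
    filter_upwards [Ioc_mem_nhdsGT (lt_add_one b')] with t ht
    refine (ae_restrict_mem measurableSet_Ioc).mono fun y hy => ?_
    by_cases hmem : y ∈ Set.Ioc a t
    · simp only [hh, Set.indicator_of_mem hmem]
      rw [Real.norm_eq_abs, abs_mul, abs_of_nonneg (hWnn _)]
      exact mul_le_mul (hWm (by linarith [hmem.1, ht.2])) (habs y hy)
        (abs_nonneg _) (hWnn _)
    · simp only [hh, Set.indicator_of_notMem hmem]
      simpa using hB0
  have hbi : Integrable (fun _ : ℝ => W (b' + 1 - a) * Cg) (volume.restrict s) := by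
    rw [hs]; exact integrableOn_const measure_Ioc_lt_top.ne
  have hlim : ∀ᵐ y ∂volume.restrict s,
      Tendsto (fun t => h t y) (𝓝[>] b') (𝓝 (h b' y)) := by
    have hne : ∀ᵐ y : ℝ ∂volume.restrict s, y ≠ b' := by
      refine ae_restrict_of_ae ?_
      rw [ae_iff]
      have hset : {y : ℝ | ¬ y ≠ b'} = {b'} := by ext z; simp
      rw [hset]
      exact measure_singleton b'
    filter_upwards [hne] with y hy
    rcases lt_trichotomy y b' with hlt | heq | hgt
    · rcases le_or_gt y a with hya | hya
      · have hz : ∀ t : ℝ, h t y = 0 := by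
          intro t
          simp only [hh]
          exact Set.indicator_of_notMem (fun hc => absurd hc.1 (not_lt.2 hya)) (fun z => W (t - z) * g z)
        simp only [hz]
        exact tendsto_const_nhds
      · have hW_at : ContinuousAt W (b' - y) :=
          hW_cont.continuousAt (Ici_mem_nhds (by linarith))
        have h1 : Tendsto (fun t : ℝ => W (t - y) * g y) (𝓝[>] b')
            (𝓝 (W (b' - y) * g y)) := by
          refine Tendsto.mono_left ?_ nhdsWithin_le_nhds
          have hsub : Tendsto (fun t : ℝ => t - y) (𝓝 b') (𝓝 (b' - y)) :=
            tendsto_id.sub_const y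
          exact (hW_at.tendsto.comp hsub).mul_const _
        have heq' : ∀ᶠ t in 𝓝[>] b', (fun t : ℝ => W (t - y) * g y) t = h t y := by
          filter_upwards [self_mem_nhdsWithin] with t ht
          have hmem : y ∈ Set.Ioc a t := ⟨hya, le_of_lt (hlt.trans ht)⟩
          simp only [hh]
          exact (Set.indicator_of_mem hmem (fun z => W (t - z) * g z)).symm
        have hb'eq : h b' y = W (b' - y) * g y := by
          have hmem : y ∈ Set.Ioc a b' := ⟨hya, hlt.le⟩
          simp only [hh]
          exact Set.indicator_of_mem hmem (fun z => W (b' - z) * g z)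
        rw [hb'eq]
        exact Tendsto.congr' heq' h1
    · exact absurd heq hy
    · have heq' : ∀ᶠ t in 𝓝[>] b', (fun _ : ℝ => (0:ℝ)) t = h t y := by
        filter_upwards [Ioo_mem_nhdsGT hgt] with t ht
        simp only [hh]
        exact (Set.indicator_of_notMem (fun hc => absurd hc.2 (not_le.2 ht.2)) (fun z => W (t - z) * g z)).symm
      have hb'eq : h b' y = 0 := by
        simp only [hh]
        exact Set.indicator_of_notMem (fun hc => absurd hc.2 (not_le.2 hgt)) (fun z => W (b' - z) * g z)
      rw [hb'eq]
      exact Tendsto.congr' heq' tendsto_const_nhds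
  have key := tendsto_integral_filter_of_dominated_convergence
    (μ := volume.restrict s) (F := h) (f := h b')
    (bound := fun _ => W (b' + 1 - a) * Cg)
    (Eventually.of_forall hmeas) hbound hbi hlim
  have hgam : ∀ t : ℝ, a < t → t ≤ b' + 1 →
      Gam W g CU CD a t = CD + CU + ∫ y in s, h t y := by
    intro t h1 h2
    simp only [Gam, hh]
    congr 1
    rw [setIntegral_indicator measurableSet_Ioc,
      Set.inter_eq_self_of_subset_right (Set.Ioc_subset_Ioc_right h2),
      intervalIntegral.integral_of_le h1.le]
  have hfin : Tendsto (fun t => CD + CU + ∫ y in s, h t y) (𝓝[>] b')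
      (𝓝 (CD + CU + ∫ y in s, h b' y)) := tendsto_const_nhds.add key
  rw [hgam b' hab (by linarith)]
  refine Tendsto.congr' ?_ hfin
  filter_upwards [Ioc_mem_nhdsGT (lt_add_one b')] with t ht
  exact (hgam t (hab.trans ht.1) ht.2).symm

theorem stmt9
    (Φ : ℝ) (hΦ : 0 < Φ)
    (f g : ℝ → ℝ) (abar c₀ x₀ : ℝ)
    (hf_cont : Continuous f)
    (hf_pw : ∃ D : Set ℝ, D.Countable ∧ ∀ x ∉ D, HasDerivAt f (g x) x ∧ ContinuousAt g x)
    (hg_meas : Measurable g)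
    (hf_poly : ∃ C : ℝ, ∃ n : ℕ, ∀ x : ℝ, |f x| ≤ C * (1 + |x|) ^ n)
    (hg_poly : ∃ C : ℝ, ∃ n : ℕ, ∀ x : ℝ, |g x| ≤ C * (1 + |x|) ^ n)
    (hf_inc : StrictMonoOn f (Set.Ioi abar))
    (hf_dec : StrictAntiOn f (Set.Iio abar))
    (hf_conv : ConvexOn ℝ (Set.Iio abar) f)
    (hc₀ : 0 < c₀) (hx₀ : abar ≤ x₀)
    (hg_ge : ∀ x, x₀ ≤ x → c₀ ≤ g x)
    (W : ℝ → ℝ)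
    (hW_neg : ∀ x, x < 0 → W x = 0)
    (hW_cont : ContinuousOn W (Set.Ici 0))
    (hW_mono : StrictMonoOn W (Set.Ici 0))
    (hW_pos : ∀ x, 0 < x → 0 < W x)
    (CU CD : ℝ) (hC : 0 < CU + CD)
    (aund : ℝ) (h_aund_lt : aund < abar) (h_aund : Psi Φ g aund = 0)
    -- the unimodality condition (Assumption 5.1 of the paper), with threshold `b̃(a) ∈ (a, ∞]`
    (btil : ℝ → EReal)
    (hbtil : ∀ a : ℝ, a < abar → (a : EReal) < btil a ∧
      (∀ b₁ b₂ : ℝ, a < b₁ → b₁ ≤ b₂ → (b₂ : EReal) < btil a →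
        Gam W g CU CD a b₂ ≤ Gam W g CU CD a b₁) ∧
      (∀ b₁ b₂ : ℝ, btil a < (b₁ : EReal) → b₁ < b₂ →
        Gam W g CU CD a b₁ < Gam W g CU CD a b₂))
    -- a Case-1 pair (a*, b*)
    (astar bstar : ℝ)
    (h₁ : aund < astar) (h₂ : astar < abar) (h₃ : abar < bstar)
    (h₄ : (bstar : EReal) = btil astar)
    (h₅ : Gam W g CU CD astar bstar = 0)
    (h₆ : ∀ x, astar ≤ x → 0 ≤ Gam W g CU CD astar x)
    -- the function b ↦ a(b): the unique root of Γ(·, b) below min(ā, b)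
    (ab : ℝ → ℝ)
    (hab : ∀ b : ℝ, ab b < min abar b ∧ Gam W g CU CD (ab b) b = 0) :
    (∀ b b' : ℝ, bstar < b' → b' < b → ab b < ab b' ∧ ab b' < astar) ∧
    (∀ b : ℝ, bstar < b → btil (ab b) ≤ (b : EReal) ∧
      StrictMonoOn (fun b2 => Gam W g CU CD (ab b) b2) (Set.Ioi b)) := by
  obtain ⟨D, hDc, hD⟩ := hf_pw
  have hWm : Monotone W := aux_W_monotone hW_neg hW_cont hW_mono hW_pos
  have hWnn : ∀ t, 0 ≤ W t := aux_W_nonneg hW_neg hWm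
  have hint : ∀ b u v : ℝ, IntervalIntegrable (fun y => W (b - y) * g y) volume u v :=
    fun b u v => aux_intable hWm hWnn hg_meas hg_poly b u v
  have hgneg : ∀ x, x < abar → x ∉ D → g x < 0 :=
    fun x hx hxD => aux_g_neg hf_dec hf_conv hD hx hxD
  have hlt : ∀ a₁ a₂ b : ℝ, a₁ < a₂ → a₂ < abar → a₂ < b →
      Gam W g CU CD a₁ b < Gam W g CU CD a₂ b := by
    intro a₁ a₂ b h12 h2 h2b
    have hsplit := aux_gam_split CU CD hint a₁ a₂ b
    have hneg := aux_int_neg hDc hWnn hW_pos hint hgneg a₁ a₂ b h12 h2 h2b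
    linarith
  have hle : ∀ a₁ a₂ b : ℝ, a₁ ≤ a₂ → a₂ < abar → a₂ < b →
      Gam W g CU CD a₁ b ≤ Gam W g CU CD a₂ b := by
    intro a₁ a₂ b h12 h2 h2b
    rcases eq_or_lt_of_le h12 with rfl | h
    · exact le_rfl
    · exact (hlt a₁ a₂ b h h2 h2b).le
  have habb : ∀ b, ab b < abar := fun b => lt_of_lt_of_le (hab b).1 (min_le_left _ _)
  have habb2 : ∀ b, ab b < b := fun b => lt_of_lt_of_le (hab b).1 (min_le_right _ _)
  -- Γ(a*, b) > 0 for b > b*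
  have hPos : ∀ b : ℝ, bstar < b → 0 < Gam W g CU CD astar b := by
    intro b hb
    set m := (bstar + b) / 2 with hm
    have hm1 : bstar < m := by rw [hm]; linarith
    have hm2 : m < b := by rw [hm]; linarith
    have h6m : 0 ≤ Gam W g CU CD astar m := h₆ m (by linarith)
    have hstrict := (hbtil astar h₂).2.2 m b
      (by rw [← h₄]; exact_mod_cast hm1) hm2
    linarith
  -- a(b) < a* for b > b*
  have hstep1 : ∀ b : ℝ, bstar < b → ab b < astar := by
    intro b hb
    by_contra hcon
    push_neg at hcon
    have h1 := hle astar (ab b) b hcon (habb b) (habb2 b)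
    have h2' := hPos b hb
    have h3' := (hab b).2
    linarith
  -- b̃(a(b)) ≤ b for b > b*
  have hstep2 : ∀ b : ℝ, bstar < b → btil (ab b) ≤ (b : EReal) := by
    intro b hb
    by_contra hcon
    push_neg at hcon
    have ha' := hstep1 b hb
    have hGbstar : Gam W g CU CD (ab b) bstar < 0 := by
      have := hlt (ab b) astar bstar ha' h₂ (h₂.trans h₃)
      linarith [h₅]
    have hni := (hbtil (ab b) (habb b)).2.1 bstar b
      ((habb b).trans h₃) hb.le hcon
    have := (hab b).2
    linarith
  -- Γ(a(b'), b) > 0 for b* < b' < b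
  have hPos2 : ∀ b' b : ℝ, bstar < b' → b' < b → 0 < Gam W g CU CD (ab b') b := by
    intro b' b hb' hbb
    set m := (b' + b) / 2 with hm
    have hm1 : b' < m := by rw [hm]; linarith
    have hm2 : m < b := by rw [hm]; linarith
    have hmono : ∀ x y : ℝ, b' < x → x < y →
        Gam W g CU CD (ab b') x < Gam W g CU CD (ab b') y := by
      intro x y hx hxy
      refine (hbtil (ab b') (habb b')).2.2 x y ?_ hxy
      exact lt_of_le_of_lt (hstep2 b' hb') (by exact_mod_cast hx)
    have hlim := aux_gam_tendsto CU CD hWm hWnn hW_cont hg_meas hg_poly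
      (ab b') b' (habb2 b')
    have hev : ∀ᶠ t in 𝓝[>] b',
        (fun t => Gam W g CU CD (ab b') t) t ≤ Gam W g CU CD (ab b') m := by
      filter_upwards [Ioo_mem_nhdsGT hm1] with t ht
      exact (hmono t m ht.1 ht.2).le
    have h0m : Gam W g CU CD (ab b') b' ≤ Gam W g CU CD (ab b') m :=
      le_of_tendsto hlim hev
    rw [(hab b').2] at h0m
    have := hmono m b hm1 hm2
    linarith
  constructor
  · intro b b' hb' hbb
    have hbstar : bstar < b := hb'.trans hbb
    refine ⟨?_, hstep1 b' hb'⟩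
    by_contra hcon
    push_neg at hcon
    have h1 := hle (ab b') (ab b) b hcon (habb b) (habb2 b)
    have h2' := hPos2 b' b hb' hbb
    have h3' := (hab b).2
    linarith
  · intro b hb
    refine ⟨hstep2 b hb, ?_⟩
    intro x hx y hy hxy
    refine (hbtil (ab b) (habb b)).2.2 x y ?_ hxy
    exact lt_of_le_of_lt (hstep2 b hb) (by exact_mod_cast hx)
end

section
/- For every b > b*, Γ(a(b), y) ≤ 0 for all y ∈ [b*, b]. -/
open MeasureTheory Filter Set Topology

private lemma Wg_intble (W g : ℝ → ℝ) (hWmono : Monotone W) (hWnn : ∀ x, 0 ≤ W x)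
    (hg_meas : Measurable g) (C : ℝ) (n : ℕ)
    (hgC : ∀ x : ℝ, |g x| ≤ C * (1 + |x|) ^ n) (e c d : ℝ) :
    IntervalIntegrable (fun u => W (e - u) * g u) volume c d := by
  have hC0 : 0 ≤ C := le_trans (abs_nonneg (g 0)) (by simpa using hgC 0)
  rw [intervalIntegrable_iff]
  set K := max |c| |d| with hK
  apply MeasureTheory.Measure.integrableOn_of_bounded
    (M := W (e - (c ⊓ d)) * (C * (1 + K) ^ n))
  · exact measure_Ioc_lt_top.ne
  · exact ((hWmono.measurable.comp (measurable_const.sub measurable_id)).mul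
      hg_meas).aestronglyMeasurable
  · filter_upwards [MeasureTheory.ae_restrict_mem measurableSet_uIoc] with u hu
    obtain ⟨hu1, hu2⟩ := hu
    have hKc : |c| ≤ K := le_max_left _ _
    have hKd : |d| ≤ K := le_max_right _ _
    have hcd1 : -K ≤ c ⊓ d := le_inf (by linarith [neg_abs_le c]) (by linarith [neg_abs_le d])
    have hcd2 : c ⊔ d ≤ K := sup_le (by linarith [le_abs_self c]) (by linarith [le_abs_self d])
    have huK : |u| ≤ K := abs_le.mpr ⟨by linarith, by linarith⟩
    rw [Real.norm_eq_abs, abs_mul, abs_of_nonneg (hWnn _)]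
    apply mul_le_mul
    · exact hWmono (by linarith : e - u ≤ e - (c ⊓ d))
    · calc |g u| ≤ C * (1 + |u|) ^ n := hgC u
        _ ≤ C * (1 + K) ^ n := by
            apply mul_le_mul_of_nonneg_left _ hC0
            exact pow_le_pow_left₀ (by positivity) (by linarith) n
    · exact abs_nonneg _
    · exact hWnn _

private lemma gam_tendsto (W g : ℝ → ℝ) (hWmono : Monotone W) (hWnn : ∀ x, 0 ≤ W x)
    (hW_cont : ContinuousOn W (Set.Ici 0)) (hg_meas : Measurable g)
    (C : ℝ) (n : ℕ) (hgC : ∀ x : ℝ, |g x| ≤ C * (1 + |x|) ^ n)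
    (a t : ℝ) (hat : a < t) :
    Filter.Tendsto (fun s => ∫ u in a..s, W (s - u) * g u) (nhdsWithin t (Set.Ioi t))
      (nhds (∫ u in a..t, W (t - u) * g u)) := by
  have hC0 : 0 ≤ C := le_trans (abs_nonneg (g 0)) (by simpa using hgC 0)
  set F : ℝ → ℝ → ℝ := fun s u => (Set.Ioc a s).indicator (fun u => W (s - u) * g u) u with hF
  set K := max |a| (|t| + 1) with hK
  set M := W (t + 1 - a) * (C * (1 + K) ^ n) with hM
  have hKnn : 0 ≤ K := le_trans (abs_nonneg a) (le_max_left _ _)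
  have hMnn : 0 ≤ M := mul_nonneg (hWnn _) (mul_nonneg hC0 (pow_nonneg (by linarith) n))
  have key : ∀ s : ℝ, a ≤ s → s ≤ t + 1 →
      (∫ u in a..s, W (s - u) * g u) = ∫ u in Set.Ioc a (t + 1), F s u := by
    intro s hs1 hs2
    rw [intervalIntegral.integral_of_le hs1, hF,
      MeasureTheory.setIntegral_indicator measurableSet_Ioc, Set.Ioc_inter_Ioc,
      sup_idem, inf_eq_right.mpr hs2]
  have hmeas : ∀ᶠ s in 𝓝[>] t,
      MeasureTheory.AEStronglyMeasurable (F s) (volume.restrict (Set.Ioc a (t + 1))) :=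
    Filter.Eventually.of_forall fun s =>
      ((((hWmono.measurable.comp (measurable_const.sub measurable_id)).mul hg_meas).indicator
        measurableSet_Ioc).aestronglyMeasurable)
  have hbound : ∀ᶠ s in 𝓝[>] t, ∀ᵐ u ∂(volume.restrict (Set.Ioc a (t + 1))), ‖F s u‖ ≤ M := by
    filter_upwards [Ioo_mem_nhdsGT_of_mem (Set.mem_Ico.mpr ⟨le_refl t, lt_add_one t⟩)] with s hs
    refine Filter.Eventually.of_forall fun u => ?_
    by_cases hu : u ∈ Set.Ioc a s
    · rw [hF]
      simp only [Set.indicator_of_mem hu]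
      rw [Real.norm_eq_abs, abs_mul, abs_of_nonneg (hWnn _)]
      obtain ⟨hu1, hu2⟩ := hu
      have h1 : -K ≤ u := by
        have := neg_abs_le a; have := le_max_left |a| (|t| + 1); linarith
      have h2 : u ≤ K := by
        have := le_abs_self t; have := le_max_right |a| (|t| + 1); linarith [hs.2]
      have huK : |u| ≤ K := abs_le.mpr ⟨h1, h2⟩
      rw [hM]
      apply mul_le_mul
      · exact hWmono (by linarith [hs.2] : s - u ≤ t + 1 - a)
      · calc |g u| ≤ C * (1 + |u|) ^ n := hgC u
          _ ≤ C * (1 + K) ^ n := by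
              apply mul_le_mul_of_nonneg_left _ hC0
              exact pow_le_pow_left₀ (by positivity) (by linarith) n
      · exact abs_nonneg _
      · exact hWnn _
    · rw [hF]
      simp only [Set.indicator_of_notMem hu]
      simpa using hMnn
  have hbint : MeasureTheory.Integrable (fun _ : ℝ => M)
      (volume.restrict (Set.Ioc a (t + 1))) :=
    MeasureTheory.integrableOn_const measure_Ioc_lt_top.ne
  have hlim : ∀ᵐ u ∂(volume.restrict (Set.Ioc a (t + 1))),
      Filter.Tendsto (fun s => F s u) (𝓝[>] t) (𝓝 (F t u)) := by
    have hne : ∀ᵐ u : ℝ, u ≠ t := by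
      have h0 : MeasureTheory.volume ({t} : Set ℝ) = 0 := measure_singleton t
      simpa [Set.mem_singleton_iff] using measure_eq_zero_iff_ae_notMem.mp h0
    filter_upwards [MeasureTheory.ae_restrict_of_ae hne] with u hu
    rcases le_or_gt u a with hua | hua
    · have h0 : ∀ s : ℝ, F s u = 0 := fun s =>
        Set.indicator_of_notMem (fun hmem => absurd hmem.1 (not_lt.mpr hua)) _
      simp only [h0]
      exact tendsto_const_nhds
    rcases lt_or_gt_of_ne hu with hut | hut
    · have hWc : ContinuousAt W (t - u) :=
        hW_cont.continuousAt (Ici_mem_nhds (by linarith))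
      have hbase : Filter.Tendsto (fun s : ℝ => s - u) (𝓝[>] t) (𝓝 (t - u)) :=
        ((continuous_sub_right u).tendsto t).mono_left nhdsWithin_le_nhds
      have hmain : Filter.Tendsto (fun s => W (s - u) * g u) (𝓝[>] t) (𝓝 (W (t - u) * g u)) :=
        (hWc.tendsto.comp hbase).mul_const _
      have heq : ∀ᶠ s in 𝓝[>] t, W (s - u) * g u = F s u := by
        filter_upwards [self_mem_nhdsWithin] with s hs
        exact (Set.indicator_of_mem
          (Set.mem_Ioc.mpr ⟨hua, by linarith [Set.mem_Ioi.mp hs]⟩)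
          (fun u => W (s - u) * g u)).symm
      have hFt : F t u = W (t - u) * g u :=
        Set.indicator_of_mem (Set.mem_Ioc.mpr ⟨hua, hut.le⟩) _
      rw [hFt]
      exact hmain.congr' heq
    · have h0t : F t u = 0 :=
        Set.indicator_of_notMem (fun hmem => absurd hmem.2 (not_le.mpr hut)) _
      have heq : ∀ᶠ s in 𝓝[>] t, (0 : ℝ) = F s u := by
        filter_upwards [Ioo_mem_nhdsGT_of_mem (Set.mem_Ico.mpr ⟨le_refl t, hut⟩)] with s hs
        have hnm : u ∉ Set.Ioc a s := fun hmem => absurd hmem.2 (not_le.mpr hs.2)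
        exact (Set.indicator_of_notMem hnm _).symm
      rw [h0t]
      exact tendsto_const_nhds.congr' heq
  have hdct := MeasureTheory.tendsto_integral_filter_of_dominated_convergence
    (μ := volume.restrict (Set.Ioc a (t + 1))) (F := F) (f := F t) (bound := fun _ => M)
    hmeas hbound hbint hlim
  rw [key t hat.le (by linarith)]
  refine hdct.congr' ?_
  filter_upwards [Ioo_mem_nhdsGT_of_mem (Set.mem_Ico.mpr ⟨le_refl t, lt_add_one t⟩)] with s hs
  exact (key s (by linarith [hs.1]) hs.2.le).symm

theorem stmt10
    (Φ : ℝ) (hΦ : 0 < Φ)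
    (f g : ℝ → ℝ) (abar c₀ x₀ : ℝ)
    (hf_cont : Continuous f)
    (hf_pw : ∃ D : Set ℝ, D.Countable ∧ ∀ x ∉ D, HasDerivAt f (g x) x ∧ ContinuousAt g x)
    (hg_meas : Measurable g)
    (hf_poly : ∃ C : ℝ, ∃ n : ℕ, ∀ x : ℝ, |f x| ≤ C * (1 + |x|) ^ n)
    (hg_poly : ∃ C : ℝ, ∃ n : ℕ, ∀ x : ℝ, |g x| ≤ C * (1 + |x|) ^ n)
    (hf_inc : StrictMonoOn f (Set.Ioi abar))
    (hf_dec : StrictAntiOn f (Set.Iio abar))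
    (hf_conv : ConvexOn ℝ (Set.Iio abar) f)
    (hc₀ : 0 < c₀) (hx₀ : abar ≤ x₀)
    (hg_ge : ∀ x, x₀ ≤ x → c₀ ≤ g x)
    (W : ℝ → ℝ)
    (hW_neg : ∀ x, x < 0 → W x = 0)
    (hW_cont : ContinuousOn W (Set.Ici 0))
    (hW_mono : StrictMonoOn W (Set.Ici 0))
    (hW_pos : ∀ x, 0 < x → 0 < W x)
    (CU CD : ℝ) (hC : 0 < CU + CD)
    (aund : ℝ) (h_aund_lt : aund < abar) (h_aund : Psi Φ g aund = 0)
    -- the unimodality condition (Assumption 5.1 of the paper), with threshold `b̃(a) ∈ (a, ∞]`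
    (btil : ℝ → EReal)
    (hbtil : ∀ a : ℝ, a < abar → (a : EReal) < btil a ∧
      (∀ b₁ b₂ : ℝ, a < b₁ → b₁ ≤ b₂ → (b₂ : EReal) < btil a →
        Gam W g CU CD a b₂ ≤ Gam W g CU CD a b₁) ∧
      (∀ b₁ b₂ : ℝ, btil a < (b₁ : EReal) → b₁ < b₂ →
        Gam W g CU CD a b₁ < Gam W g CU CD a b₂))
    -- a Case-1 pair (a*, b*)
    (astar bstar : ℝ)
    (h₁ : aund < astar) (h₂ : astar < abar) (h₃ : abar < bstar)
    (h₄ : (bstar : EReal) = btil astar)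
    (h₅ : Gam W g CU CD astar bstar = 0)
    (h₆ : ∀ x, astar ≤ x → 0 ≤ Gam W g CU CD astar x)
    -- the function b ↦ a(b): the unique root of Γ(·, b) below min(ā, b)
    (ab : ℝ → ℝ)
    (hab : ∀ b : ℝ, ab b < min abar b ∧ Gam W g CU CD (ab b) b = 0) :
    ∀ b : ℝ, bstar < b → ∀ y ∈ Set.Icc bstar b, Gam W g CU CD (ab b) y ≤ 0 := by
  obtain ⟨D, hDcount, hDprop⟩ := hf_pw
  obtain ⟨C, n, hgC⟩ := hg_poly
  -- W is nonnegative
  have hWnn : ∀ x : ℝ, 0 ≤ W x := by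
    have hW0 : 0 ≤ W 0 := by
      have hcw : Filter.Tendsto W (𝓝[Set.Ioi (0:ℝ)] 0) (𝓝 (W 0)) :=
        (hW_cont 0 Set.self_mem_Ici).tendsto.mono_left
          (nhdsWithin_mono 0 Set.Ioi_subset_Ici_self)
      refine ge_of_tendsto hcw ?_
      filter_upwards [self_mem_nhdsWithin] with x hx
      exact (hW_pos x hx).le
    intro x
    rcases lt_trichotomy x 0 with h | h | h
    · rw [hW_neg x h]
    · rw [h]; exact hW0
    · exact (hW_pos x h).le
  -- W is monotone on all of ℝ
  have hWmono : Monotone W := by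
    intro x y hxy
    rcases lt_or_ge x 0 with hx | hx
    · rw [hW_neg x hx]; exact hWnn y
    · exact hW_mono.monotoneOn (Set.mem_Ici.mpr hx) (Set.mem_Ici.mpr (le_trans hx hxy)) hxy
  -- integrability
  have hInt : ∀ e c d : ℝ, IntervalIntegrable (fun u => W (e - u) * g u) volume c d :=
    fun e c d => Wg_intble W g hWmono hWnn hg_meas C n hgC e c d
  -- splitting of Gam
  have hsplit : ∀ a₁ a₂ e : ℝ, Gam W g CU CD a₁ e
      = Gam W g CU CD a₂ e + ∫ u in a₁..a₂, W (e - u) * g u := by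
    intro a₁ a₂ e
    have h := intervalIntegral.integral_add_adjacent_intervals (hInt e a₁ a₂) (hInt e a₂ e)
    simp only [Gam]
    linarith
  -- g is nonpositive below abar (off D)
  have hg_np : ∀ x : ℝ, x < abar → x ∉ D → g x ≤ 0 := by
    intro x hx hxD
    have hder := (hDprop x hxD).1
    have hs : Filter.Tendsto (slope f x) (𝓝[>] x) (𝓝 (g x)) :=
      (hasDerivAt_iff_tendsto_slope.mp hder).mono_left
        (nhdsWithin_mono x fun z hz => Set.mem_compl_singleton_iff.mpr (ne_of_gt hz))
    refine le_of_tendsto hs ?_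
    filter_upwards [Ioo_mem_nhdsGT_of_mem (Set.mem_Ico.mpr ⟨le_refl x, hx⟩)] with z hz
    rw [slope_def_field]
    apply div_nonpos_of_nonpos_of_nonneg
    · have := hf_dec (Set.mem_Iio.mpr hx) (Set.mem_Iio.mpr hz.2) hz.1
      linarith
    · linarith [hz.1]
  -- integrals over intervals below abar are nonpositive
  have hint_np : ∀ a₁ a₂ e : ℝ, a₁ ≤ a₂ → a₂ < abar →
      (∫ u in a₁..a₂, W (e - u) * g u) ≤ 0 := by
    intro a₁ a₂ e h12 h2a
    rw [intervalIntegral.integral_of_le h12]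
    apply MeasureTheory.integral_nonpos_of_ae
    have hD0 : ∀ᵐ u : ℝ, u ∉ D := measure_eq_zero_iff_ae_notMem.mp (hDcount.measure_zero _)
    filter_upwards [MeasureTheory.ae_restrict_mem measurableSet_Ioc,
      MeasureTheory.ae_restrict_of_ae hD0] with u hu huD
    have hgu : g u ≤ 0 := hg_np u (lt_of_le_of_lt hu.2 h2a) huD
    exact mul_nonpos_iff.mpr (Or.inl ⟨hWnn _, hgu⟩)
  -- Gam is monotone in the first variable below abar
  have hGam_mono_a : ∀ a₁ a₂ e : ℝ, a₁ ≤ a₂ → a₂ < abar →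
      Gam W g CU CD a₁ e ≤ Gam W g CU CD a₂ e := by
    intro a₁ a₂ e h12 h2a
    have := hint_np a₁ a₂ e h12 h2a
    rw [hsplit a₁ a₂ e]
    linarith
  intro b hb y hy
  obtain ⟨ha'lt, ha'root⟩ := hab b
  have ha'abar : ab b < abar := lt_of_lt_of_le ha'lt (min_le_left _ _)
  have hGastarb : 0 < Gam W g CU CD astar b := by
    have hmid1 : bstar < (bstar + b) / 2 := by linarith
    have hmid2 : (bstar + b) / 2 < b := by linarith
    have hlt := (hbtil astar h₂).2.2 ((bstar + b) / 2) b
      (by rw [← h₄]; exact_mod_cast hmid1) hmid2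
    have := h₆ ((bstar + b) / 2) (by linarith)
    linarith
  have ha'le : ab b ≤ astar := by
    by_contra hcon
    push_neg at hcon
    have := hGam_mono_a astar (ab b) b hcon.le ha'abar
    rw [ha'root] at this
    linarith
  have hGbstar : Gam W g CU CD (ab b) bstar ≤ 0 := by
    have := hGam_mono_a (ab b) astar bstar ha'le h₂
    linarith [h₅]
  obtain ⟨ht1, ht2, ht3⟩ := hbtil (ab b) ha'abar
  obtain ⟨hy1, hy2⟩ := hy
  rcases eq_or_lt_of_le hy2 with hyb | hyb
  · rw [hyb]
    exact le_of_eq ha'root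
  · rcases lt_trichotomy ((y : ℝ) : EReal) (btil (ab b)) with hc | hc | hc
    · have := ht2 bstar y (lt_trans ha'abar h₃) hy1 hc
      linarith
    · -- the boundary case y = btil (ab b): use right-continuity
      have hay : ab b < y := lt_trans ha'abar (lt_of_lt_of_le h₃ hy1)
      have htendI := gam_tendsto W g hWmono hWnn hW_cont hg_meas C n hgC (ab b) y hay
      have htend : Filter.Tendsto (fun s => Gam W g CU CD (ab b) s) (𝓝[>] y)
          (𝓝 (Gam W g CU CD (ab b) y)) := by
        simp only [Gam]
        exact tendsto_const_nhds.add htendI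
      refine le_of_tendsto htend ?_
      filter_upwards [Ioo_mem_nhdsGT_of_mem (Set.mem_Ico.mpr ⟨le_refl y, hyb⟩)] with s hs
      have := ht3 s b (by rw [← hc]; exact_mod_cast hs.1) hs.2
      linarith
    · have := ht3 y b hc hyb
      linarith
end

section
/- Define g : ℝ → ℝ by g(y) := −C_U for y ≤ a*, g(y) := C_D − Γ(a*, y) for a* ≤ y ≤ b*, and g(y) := C_D for y ≥ b*. Then g is well defined (the three formulas agree at y = a* and y = b*) and g is nondecreasing on ℝ; moreover −C_U ≤ g(y) ≤ C_D for all y. (Here g is the derivative of the candidate value function v_{a*,b*}, so this expresses the convexity of v_{a*,b*} stated in Lemma 5.5 of the paper.) -/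
open MeasureTheory Filter Set Topology

theorem stmt12
    (Φ : ℝ) (hΦ : 0 < Φ)
    (f g : ℝ → ℝ) (abar c₀ x₀ : ℝ)
    (hf_cont : Continuous f)
    (hf_pw : ∃ D : Set ℝ, D.Countable ∧ ∀ x ∉ D, HasDerivAt f (g x) x ∧ ContinuousAt g x)
    (hg_meas : Measurable g)
    (hf_poly : ∃ C : ℝ, ∃ n : ℕ, ∀ x : ℝ, |f x| ≤ C * (1 + |x|) ^ n)
    (hg_poly : ∃ C : ℝ, ∃ n : ℕ, ∀ x : ℝ, |g x| ≤ C * (1 + |x|) ^ n)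
    (hf_inc : StrictMonoOn f (Set.Ioi abar))
    (hf_dec : StrictAntiOn f (Set.Iio abar))
    (hf_conv : ConvexOn ℝ (Set.Iio abar) f)
    (hc₀ : 0 < c₀) (hx₀ : abar ≤ x₀)
    (hg_ge : ∀ x, x₀ ≤ x → c₀ ≤ g x)
    (W : ℝ → ℝ)
    (hW_neg : ∀ x, x < 0 → W x = 0)
    (hW_cont : ContinuousOn W (Set.Ici 0))
    (hW_mono : StrictMonoOn W (Set.Ici 0))
    (hW_pos : ∀ x, 0 < x → 0 < W x)
    (CU CD : ℝ) (hC : 0 < CU + CD)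
    (aund : ℝ) (h_aund_lt : aund < abar) (h_aund : Psi Φ g aund = 0)
    -- the unimodality condition (Assumption 5.1 of the paper), with threshold `b̃(a) ∈ (a, ∞]`
    (btil : ℝ → EReal)
    (hbtil : ∀ a : ℝ, a < abar → (a : EReal) < btil a ∧
      (∀ b₁ b₂ : ℝ, a < b₁ → b₁ ≤ b₂ → (b₂ : EReal) < btil a →
        Gam W g CU CD a b₂ ≤ Gam W g CU CD a b₁) ∧
      (∀ b₁ b₂ : ℝ, btil a < (b₁ : EReal) → b₁ < b₂ →
        Gam W g CU CD a b₁ < Gam W g CU CD a b₂))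
    -- a Case-1 pair (a*, b*)
    (astar bstar : ℝ)
    (h₁ : aund < astar) (h₂ : astar < abar) (h₃ : abar < bstar)
    (h₄ : (bstar : EReal) = btil astar)
    (h₅ : Gam W g CU CD astar bstar = 0)
    (h₆ : ∀ x, astar ≤ x → 0 ≤ Gam W g CU CD astar x) :
    -- conclusion: the derivative `g = v'_{a*,b*}` of the candidate value function is
    -- well defined (the three formulas agree at `a*` and `b*`) and nondecreasing,
    -- with `-C_U ≤ g ≤ C_D`
    (CD - Gam W g CU CD astar astar = -CU) ∧
    (CD - Gam W g CU CD astar bstar = CD) ∧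
    (∀ G : ℝ → ℝ,
      (∀ y, y ≤ astar → G y = -CU) →
      (∀ y, astar ≤ y → y ≤ bstar → G y = CD - Gam W g CU CD astar y) →
      (∀ y, bstar ≤ y → G y = CD) →
      Monotone G ∧ ∀ y, -CU ≤ G y ∧ G y ≤ CD) := by
  obtain ⟨D, hDc, hD⟩ := hf_pw
  -- g is nonpositive off D on (-∞, abar)
  have gnp : ∀ u, u < abar → u ∉ D → g u ≤ 0 := by
    intro u hu hun
    obtain ⟨hder, -⟩ := hD u hun
    have hs := hasDerivAt_iff_tendsto_slope.mp hder
    have hs' : Tendsto (slope f u) (𝓝[>] u) (𝓝 (g u)) :=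
      hs.mono_left (nhdsWithin_mono _ (fun x hx => ne_of_gt hx))
    refine le_of_tendsto hs' ?_
    filter_upwards [Ioo_mem_nhdsGT_of_mem ⟨le_refl u, hu⟩] with x hx
    have hfx : f x < f u := hf_dec (show u ∈ Iio abar from hu) (show x ∈ Iio abar from hx.2) hx.1
    rw [slope_def_field]
    apply div_nonpos_of_nonpos_of_nonneg <;> linarith [hx.1]
  have gamSame : Gam W g CU CD astar astar = CD + CU := by
    simp [Gam]
  -- key lemma A : for astar < b < abar, Γ(astar,b) ≤ CD + CU
  have keyA : ∀ b : ℝ, astar < b → b < abar → Gam W g CU CD astar b ≤ CD + CU := by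
    intro b hab hb
    have hnull : volume (D ∪ {b} : Set ℝ) = 0 :=
      (hDc.union (Set.countable_singleton b)).measure_zero _
    have h1 : ∀ᵐ y ∂(volume : Measure ℝ), y ∉ (D ∪ {b} : Set ℝ) := by
      rw [ae_iff]
      convert hnull using 2
      ext y
      simp only [Set.mem_union, Set.mem_singleton_iff, Set.mem_setOf_eq, not_not]
    have hae : ∀ᵐ y ∂((volume : Measure ℝ).restrict (Icc astar b)),
        0 ≤ -(W (b - y) * g y) := by
      filter_upwards [ae_restrict_mem measurableSet_Icc, ae_restrict_of_ae h1] with y hy hyn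
      have hyD : y ∉ D := fun h => hyn (Or.inl h)
      have hyb : y ≠ b := fun h => hyn (Or.inr h)
      have hylt : y < b := lt_of_le_of_ne hy.2 hyb
      have hW' : 0 < W (b - y) := hW_pos _ (by linarith)
      have hg' : g y ≤ 0 := gnp y (by linarith) hyD
      nlinarith
    have h0 := intervalIntegral.integral_nonneg_of_ae_restrict (μ := volume)
      (f := fun y => -(W (b - y) * g y)) (le_of_lt hab) hae
    rw [intervalIntegral.integral_neg] at h0
    simp only [Gam]
    linarith
  obtain ⟨-, hni, -⟩ := hbtil astar h₂
  -- upper bound on Γ on [astar, bstar]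
  have keyUB : ∀ y, astar ≤ y → y ≤ bstar → Gam W g CU CD astar y ≤ CD + CU := by
    intro y hy1 hy2
    rcases eq_or_lt_of_le hy1 with rfl | hy1'
    · rw [gamSame]
    rcases eq_or_lt_of_le hy2 with rfl | hy2'
    · rw [h₅]; linarith
    have hyE : (y : EReal) < btil astar := by
      rw [← h₄]; exact_mod_cast hy2'
    rcases lt_or_ge y abar with hya | hya
    · exact keyA y hy1' hya
    · set ε := (astar + abar) / 2 with hε
      have hε1 : astar < ε := by rw [hε]; linarith
      have hε2 : ε < abar := by rw [hε]; linarith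
      calc Gam W g CU CD astar y ≤ Gam W g CU CD astar ε :=
            hni ε y hε1 (by linarith) hyE
        _ ≤ CD + CU := keyA ε hε1 hε2
  -- Γ is nonincreasing on [astar, bstar]
  have keyMono : ∀ y₁ y₂, astar ≤ y₁ → y₁ ≤ y₂ → y₂ ≤ bstar →
      Gam W g CU CD astar y₂ ≤ Gam W g CU CD astar y₁ := by
    intro y₁ y₂ ha h12 hb
    rcases eq_or_lt_of_le ha with rfl | ha'
    · rw [gamSame]; exact keyUB y₂ (le_trans ha h12) hb
    rcases eq_or_lt_of_le hb with rfl | hb'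
    · rw [h₅]; exact h₆ y₁ (le_of_lt ha')
    exact hni y₁ y₂ ha' h12 (by rw [← h₄]; exact_mod_cast hb')
  refine ⟨by rw [gamSame]; ring, by rw [h₅]; ring, ?_⟩
  intro G hG1 hG2 hG3
  have bounds : ∀ y, -CU ≤ G y ∧ G y ≤ CD := by
    intro y
    rcases le_or_gt y astar with hy | hy
    · rw [hG1 y hy]; exact ⟨le_refl _, by linarith⟩
    rcases le_or_gt y bstar with hy' | hy'
    · rw [hG2 y (le_of_lt hy) hy']
      have hub := keyUB y (le_of_lt hy) hy'
      have hlb := h₆ y (le_of_lt hy)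
      constructor <;> linarith
    · rw [hG3 y (le_of_lt hy')]; exact ⟨by linarith, le_refl _⟩
  refine ⟨?_, bounds⟩
  intro y₁ y₂ h12
  rcases le_or_gt y₁ astar with hy1 | hy1
  · rw [hG1 y₁ hy1]; exact (bounds y₂).1
  rcases le_or_gt bstar y₁ with hb1 | hb1
  · rw [hG3 y₁ hb1, hG3 y₂ (le_trans hb1 h12)]
  rcases le_or_gt bstar y₂ with hb2 | hb2
  · rw [hG3 y₂ hb2, hG2 y₁ (le_of_lt hy1) (le_of_lt hb1)]
    have := h₆ y₁ (le_of_lt hy1)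
    linarith
  · rw [hG2 y₁ (le_of_lt hy1) (le_of_lt hb1), hG2 y₂ (le_trans (le_of_lt hy1) h12) (le_of_lt hb2)]
    have := keyMono y₁ y₂ (le_of_lt hy1) h12 (le_of_lt hb2)
    linarith
end

section
/- For every a ≤ 0, lim_{b→∞} [ W̄(b) − e^{Φa} W̄(b − a) ] = (e^{Φa} − 1)/q. -/
open MeasureTheory Filter Set

/-- For the scale-function decomposition `W(y) = κ e^{Φy} - û(y)` (with `û` integrable of
total integral `1/q - κ/Φ`), for every `a ≤ 0`,
`W̄(b) - e^{Φa} W̄(b-a) → (e^{Φa} - 1)/q` as `b → ∞`. -/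
theorem stmt13
    (Φ q κ : ℝ) (hΦ : 0 < Φ) (hq : 0 < q) (hκ : 0 < κ)
    (uhat : ℝ → ℝ)
    (h_int : IntegrableOn uhat (Set.Ici 0))
    (h_val : ∫ y in Set.Ici 0, uhat y = 1 / q - κ / Φ)
    (W : ℝ → ℝ)
    (hW : ∀ y, 0 ≤ y → W y = κ * Real.exp (Φ * y) - uhat y)
    (hW_neg : ∀ y, y < 0 → W y = 0) :
    ∀ a : ℝ, a ≤ 0 →
      Tendsto (fun b => (∫ y in (0:ℝ)..b, W y) -
          Real.exp (Φ * a) * ∫ y in (0:ℝ)..(b - a), W y)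
        atTop (nhds ((Real.exp (Φ * a) - 1) / q)) := by
  intro a ha
  set I : ℝ := 1 / q - κ / Φ with hI
  set F : ℝ → ℝ := fun b => ∫ y in (0:ℝ)..b, uhat y with hFdef
  have hIoi : IntegrableOn uhat (Set.Ioi 0) := h_int.mono_set Set.Ioi_subset_Ici_self
  have hF : Tendsto F atTop (nhds I) := by
    have := MeasureTheory.intervalIntegral_tendsto_integral_Ioi 0 hIoi tendsto_id
    rwa [← MeasureTheory.integral_Ici_eq_integral_Ioi, h_val] at this
  have hexpint : ∀ b : ℝ, ∫ y in (0:ℝ)..b, Real.exp (Φ * y)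
      = (Real.exp (Φ * b) - 1) / Φ := by
    intro b
    have hd : ∀ y : ℝ, HasDerivAt (fun y => Real.exp (Φ * y) / Φ) (Real.exp (Φ * y)) y := by
      intro y
      have h1 : HasDerivAt (fun y : ℝ => Φ * y) Φ y := by
        simpa using (hasDerivAt_id y).const_mul Φ
      have h2 := (Real.hasDerivAt_exp (Φ * y)).comp y h1
      have h3 := h2.div_const Φ
      simpa [mul_comm, mul_div_assoc, mul_div_cancel_left₀ _ hΦ.ne'] using h3
    rw [intervalIntegral.integral_eq_sub_of_hasDerivAt (fun y _ => hd y)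
        ((Real.continuous_exp.comp (continuous_const.mul continuous_id)).intervalIntegrable 0 b)]
    simp [Real.exp_zero]
    ring
  have key : ∀ b : ℝ, 0 ≤ b → (∫ y in (0:ℝ)..b, W y)
      = κ * (Real.exp (Φ * b) - 1) / Φ - F b := by
    intro b hb
    have hu : IntervalIntegrable uhat volume 0 b := by
      rw [intervalIntegrable_iff, Set.uIoc_of_le hb]
      exact h_int.mono_set (fun x hx => le_of_lt hx.1)
    have he : IntervalIntegrable (fun y => κ * Real.exp (Φ * y)) volume 0 b :=
      (continuous_const.mul
        (Real.continuous_exp.comp (continuous_const.mul continuous_id))).intervalIntegrable 0 b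
    rw [show (∫ y in (0:ℝ)..b, W y)
        = ∫ y in (0:ℝ)..b, (κ * Real.exp (Φ * y) - uhat y) from
      intervalIntegral.integral_congr (fun y hy => by
        rw [Set.uIcc_of_le hb] at hy
        exact hW y hy.1),
      intervalIntegral.integral_sub he hu,
      intervalIntegral.integral_const_mul, hexpint b]
    ring_nf
    rfl
  have hlim : Tendsto (fun b => (Real.exp (Φ * a) - 1) * κ / Φ - F b
      + Real.exp (Φ * a) * F (b - a)) atTop
      (nhds ((Real.exp (Φ * a) - 1) * κ / Φ - I + Real.exp (Φ * a) * I)) := by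
    have h2 : Tendsto (fun b : ℝ => F (b - a)) atTop (nhds I) :=
      hF.comp (tendsto_atTop_add_const_right atTop (-a) tendsto_id)
    exact ((tendsto_const_nhds.sub hF).add (tendsto_const_nhds.mul h2))
  have heq : (Real.exp (Φ * a) - 1) * κ / Φ - I + Real.exp (Φ * a) * I
      = (Real.exp (Φ * a) - 1) / q := by
    rw [hI]; field_simp; ring
  rw [← heq]
  refine hlim.congr' ?_
  filter_upwards [eventually_ge_atTop (0:ℝ)] with b hb
  have hba : (0:ℝ) ≤ b - a := by linarith
  rw [key b hb, key (b - a) hba]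
  have hexp : Real.exp (Φ * a) * Real.exp (Φ * (b - a)) = Real.exp (Φ * b) := by
    rw [← Real.exp_add]; ring_nf
  linear_combination (κ/Φ) * hexp
end

section
/- lim_{b→∞} Γ(a̲, b)/b = −2α⁺/q; in particular Γ(a̲, b) → −∞ as b → ∞, so for the quadratic running cost Case 1 of the paper always holds (the curve b ↦ Γ(a̲, b) takes arbitrarily negative values). -/
open MeasureTheory Filter Set

set_option maxHeartbeats 1000000

/-- Quadratic running cost: `Γ(a̲, b)/b → -2α⁺/q`, so `Γ(a̲, b) → -∞` as `b → ∞`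
(Case 1 of the paper always holds). -/
theorem stmt15
    (Φ q κ αm αp CU CD : ℝ)
    (hΦ : 0 < Φ) (hq : 0 < q) (hαm : 0 < αm) (hαp : 0 < αp)
    (hC : 0 < CU + CD)
    -- the derivative of `f̃(x) = f_Q(x) + q C_U x` for the quadratic running cost `f_Q`
    (g : ℝ → ℝ)
    (hg : ∀ x : ℝ, g x = 2 * ((if x < 0 then αm else αp) * x) + q * CU)
    -- the scale-function decomposition `W(y) = κ e^{Φy} - û(y)`
    (uhat : ℝ → ℝ)
    (h_int : IntegrableOn uhat (Set.Ici 0))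
    (h_val : ∫ y in Set.Ici 0, uhat y = 1 / q - κ / Φ)
    (hκ : 0 < κ)
    (W : ℝ → ℝ)
    (hW : ∀ y, 0 ≤ y → W y = κ * Real.exp (Φ * y) - uhat y)
    (hW_neg : ∀ y, y < 0 → W y = 0)
    -- `a̲` is the unique zero of `Ψ`
    (aund : ℝ) (h_aund : Psi Φ g aund = 0) :
    Tendsto (fun b => Gam W g CU CD aund b / b) atTop (nhds (-(2 * αp) / q)) ∧
    Tendsto (fun b => Gam W g CU CD aund b) atTop atBot := by
  have hΦ' : Φ ≠ 0 := ne_of_gt hΦ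
  set M : ℝ := max αm αp with hM
  have hM0 : 0 < M := lt_max_of_lt_left hαm
  -- measurability of g
  have hgm : Measurable g := by
    have : g = fun x => 2 * ((if x < 0 then αm else αp) * x) + q * CU := funext hg
    rw [this]
    exact (((Measurable.ite measurableSet_Iio measurable_const measurable_const).mul
      measurable_id).const_mul 2).add_const _
  -- bound on g
  have hgb : ∀ x : ℝ, |g x| ≤ 2 * M * |x| + q * |CU| := by
    intro x
    rw [hg]
    have h1 : |2 * ((if x < 0 then αm else αp) * x) + q * CU| ≤
        |2 * ((if x < 0 then αm else αp) * x)| + |q * CU| := abs_add_le _ _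
    have h2 : |2 * ((if x < 0 then αm else αp) * x)| = 2 * (if x < 0 then αm else αp) * |x| := by
      rw [abs_mul, abs_mul]
      split <;> simp [abs_of_pos, hαm, hαp] <;> ring
    have h3 : |q * CU| = q * |CU| := by rw [abs_mul, abs_of_pos hq]
    have h4 : (if x < 0 then αm else αp) ≤ M := by split; exacts [le_max_left _ _, le_max_right _ _]
    nlinarith [abs_nonneg x]
  -- basic tendsto facts
  have hE0 : Tendsto (fun y : ℝ => Real.exp (-(Φ * y))) atTop (nhds 0) := by
    simpa [neg_mul] using tendsto_rpow_mul_exp_neg_mul_atTop_nhds_zero 0 Φ hΦ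
  have hyE0 : Tendsto (fun y : ℝ => y * Real.exp (-(Φ * y))) atTop (nhds 0) := by
    simpa [neg_mul, Real.rpow_one] using tendsto_rpow_mul_exp_neg_mul_atTop_nhds_zero 1 Φ hΦ
  -- antiderivative helper
  have hder : ∀ c d x : ℝ, HasDerivAt (fun y : ℝ => -(Real.exp (-(Φ * y)) * (c * y + d)))
      (Real.exp (-(Φ * x)) * (Φ * (c * x + d) - c)) x := by
    intro c d x
    have hE : HasDerivAt (fun y : ℝ => Real.exp (-(Φ * y))) (Real.exp (-(Φ * x)) * (-(Φ * 1))) x :=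
      (((hasDerivAt_id x).const_mul Φ).neg).exp
    have hP : HasDerivAt (fun y : ℝ => c * y + d) (c * 1) x :=
      ((hasDerivAt_id x).const_mul c).add_const d
    have := (hE.mul hP).neg
    refine HasDerivAt.congr_deriv this ?_
    ring
  -- tendsto of antiderivative to 0
  have htend0 : ∀ c d : ℝ, Tendsto (fun y : ℝ => -(Real.exp (-(Φ * y)) * (c * y + d)))
      atTop (nhds 0) := by
    intro c d
    have : (fun y : ℝ => Real.exp (-(Φ * y)) * (c * y + d)) =
        fun y => c * (y * Real.exp (-(Φ * y))) + d * Real.exp (-(Φ * y)) :=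
      funext fun y => by ring
    have h := ((hyE0.const_mul c).add (hE0.const_mul d))
    rw [← this] at h
    simpa using h.neg
  -- integrability of (y - s) * exp(-(Φ y)) on Ioi s
  have hlin_int : ∀ s : ℝ, IntegrableOn (fun y : ℝ => (y - s) * Real.exp (-(Φ * y))) (Ioi s) := by
    intro s
    have hderiv : ∀ x ∈ Ici s, HasDerivAt
        (fun y : ℝ => -(Real.exp (-(Φ * y)) * ((1/Φ) * y + (1/Φ^2 - s/Φ))))
        ((x - s) * Real.exp (-(Φ * x))) x := by
      intro x _
      have := hder (1/Φ) (1/Φ^2 - s/Φ) x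
      convert this using 1
      field_simp
      ring
    exact integrableOn_Ioi_deriv_of_nonneg' hderiv
      (fun x hx => mul_nonneg (by linarith [hx.out]) (Real.exp_pos _).le)
      (htend0 _ _)
  have hexp_int : ∀ s : ℝ, IntegrableOn (fun y : ℝ => Real.exp (-(Φ * y))) (Ioi s) := by
    intro s; simpa [neg_mul] using exp_neg_integrableOn_Ioi s hΦ
  -- integrability of eg on Ioi s
  have heg_int : ∀ s : ℝ, IntegrableOn (fun y : ℝ => Real.exp (-(Φ * y)) * g y) (Ioi s) := by
    intro s
    refine Integrable.mono' (g := fun y => 2 * M * ((y - s) * Real.exp (-(Φ * y)))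
        + (2 * M * |s| + q * |CU|) * Real.exp (-(Φ * y)))
      (((hlin_int s).const_mul _).add ((hexp_int s).const_mul _))
      ((((measurable_const.mul measurable_id).neg.exp).mul hgm).aestronglyMeasurable) ?_
    rw [ae_restrict_iff' measurableSet_Ioi]
    refine ae_of_all _ fun y hy => ?_
    have hy' : s < y := hy
    have hE : (0:ℝ) < Real.exp (-(Φ * y)) := Real.exp_pos _
    have habs : |y| ≤ (y - s) + |s| := by
      rcases abs_cases y with ⟨h, _⟩ | ⟨h, _⟩ <;> rcases abs_cases s with ⟨h2, _⟩ | ⟨h2, _⟩ <;>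
        linarith
    have h1 : ‖Real.exp (-(Φ * y)) * g y‖ = Real.exp (-(Φ * y)) * |g y| := by
      rw [Real.norm_eq_abs, abs_mul, abs_of_pos hE]
    beta_reduce
    rw [h1]
    have h2 : |g y| ≤ 2 * M * (y - s) + (2 * M * |s| + q * |CU|) := by nlinarith [hgb y]
    nlinarith [mul_le_mul_of_nonneg_left h2 hE.le]
  -- the explicit tail integral
  set X : ℝ → ℝ := fun b => 2 * αp / Φ * b + (q * CU / Φ + 2 * αp / Φ ^ 2) with hX
  have hIoi_val : ∀ b : ℝ, 0 ≤ b →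
      ∫ y in Ioi b, Real.exp (-(Φ * y)) * g y = Real.exp (-(Φ * b)) * X b := by
    intro b hb0
    have hderiv : ∀ x ∈ Ici b, HasDerivAt
        (fun y : ℝ => -(Real.exp (-(Φ * y)) * (2 * αp / Φ * y + (q * CU / Φ + 2 * αp / Φ ^ 2))))
        (Real.exp (-(Φ * x)) * g x) x := by
      intro x hx
      have hx0 : (0:ℝ) ≤ x := le_trans hb0 hx.out
      have := hder (2 * αp / Φ) (q * CU / Φ + 2 * αp / Φ ^ 2) x
      convert this using 2
      rw [hg x, if_neg (not_lt.2 hx0)]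
      field_simp
      ring
    have := integral_Ioi_of_hasDerivAt_of_tendsto' hderiv (heg_int b) (htend0 _ _)
    rw [this, hX]
    ring
  -- the Psi condition
  have hPsi0 : ∫ y in Ioi aund, Real.exp (-(Φ * y)) * g y = 0 := by
    have h1 : Psi Φ g aund =
        Real.exp (Φ * aund) * ∫ y in Ioi aund, Real.exp (-(Φ * y)) * g y := by
      rw [Psi, ← integral_const_mul]
      refine setIntegral_congr_fun measurableSet_Ioi fun y _ => ?_
      rw [← mul_assoc, ← Real.exp_add]
      ring_nf
    rw [h_aund] at h1
    have := (Real.exp_pos (Φ * aund)).ne'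
    rcases mul_eq_zero.1 h1.symm with h | h
    · exact absurd h this
    · exact h
  -- value of the interval integral
  have hI : ∀ b : ℝ, max aund 0 ≤ b →
      ∫ y in aund..b, Real.exp (-(Φ * y)) * g y = -(Real.exp (-(Φ * b)) * X b) := by
    intro b hb
    have hab : aund ≤ b := le_trans (le_max_left _ _) hb
    have hb0 : (0:ℝ) ≤ b := le_trans (le_max_right _ _) hb
    have hsplit : (∫ y in Ioc aund b, Real.exp (-(Φ * y)) * g y)
        + ∫ y in Ioi b, Real.exp (-(Φ * y)) * g y = 0 := by
      rw [← setIntegral_union Ioc_disjoint_Ioi_same measurableSet_Ioi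
        ((heg_int aund).mono_set Ioc_subset_Ioi_self) (heg_int b),
        Ioc_union_Ioi_eq_Ioi hab]
      exact hPsi0
    rw [intervalIntegral.integral_of_le hab]
    rw [hIoi_val b hb0] at hsplit
    linarith
  -- Gam formula
  have hGam : ∀ b : ℝ, max aund 0 ≤ b → Gam W g CU CD aund b
      = CD + CU - κ * X b - ∫ y in aund..b, uhat (b - y) * g y := by
    intro b hb
    have hab : aund ≤ b := le_trans (le_max_left _ _) hb
    have hb0 : (0:ℝ) ≤ b := le_trans (le_max_right _ _) hb
    set K : ℝ := 2 * M * (|aund| + |b|) + q * |CU| with hK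
    have hgK : ∀ y ∈ Ioc aund b, |g y| ≤ K := by
      intro y hy
      have h1 : |y| ≤ |aund| + |b| := by
        rw [abs_le]
        constructor
        · have := neg_abs_le aund
          have := abs_nonneg b
          linarith [hy.1]
        · have := le_abs_self b
          have := abs_nonneg aund
          linarith [hy.2]
      nlinarith [hgb y]
    -- integrability of the kappa part
    have h1int : IntegrableOn (fun y => κ * Real.exp (Φ * (b - y)) * g y) (Ioc aund b) := by
      refine Integrable.mono' (g := fun _ => κ * Real.exp (Φ * (b - aund)) * K)
        (integrableOn_const measure_Ioc_lt_top.ne)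
        (((((measurable_const.sub measurable_id).const_mul Φ).exp.const_mul κ).mul
          hgm).aestronglyMeasurable) ?_
      rw [ae_restrict_iff' measurableSet_Ioc]
      refine ae_of_all _ fun y hy => ?_
      have hEp : (0:ℝ) < Real.exp (Φ * (b - y)) := Real.exp_pos _
      have hEle : Real.exp (Φ * (b - y)) ≤ Real.exp (Φ * (b - aund)) := by
        apply Real.exp_le_exp.2
        nlinarith [hy.1]
      have : ‖κ * Real.exp (Φ * (b - y)) * g y‖ =
          κ * Real.exp (Φ * (b - y)) * |g y| := by
        rw [Real.norm_eq_abs, abs_mul, abs_mul, abs_of_pos hκ, abs_of_pos hEp]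
      beta_reduce
      rw [this]
      exact mul_le_mul (mul_le_mul_of_nonneg_left hEle hκ.le) (hgK y hy) (abs_nonneg _)
        (by positivity)
    -- integrability of the uhat part
    have h0ba : (0:ℝ) ≤ b - aund := by linarith
    have hu1 : IntervalIntegrable uhat volume 0 (b - aund) :=
      (intervalIntegrable_iff_integrableOn_Ioc_of_le h0ba).2
        (h_int.mono_set fun x hx => le_of_lt hx.1)
    have hu2 : IntervalIntegrable (fun y => uhat (b - y)) volume aund b := by
      have := (hu1.comp_sub_left b).symm
      simpa using this
    have huIoc : IntegrableOn (fun y => uhat (b - y)) (Ioc aund b) :=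
      (intervalIntegrable_iff_integrableOn_Ioc_of_le hab).1 hu2
    have h2int : IntegrableOn (fun y => uhat (b - y) * g y) (Ioc aund b) := by
      refine Integrable.mono' (g := fun y => |uhat (b - y)| * K)
        (huIoc.norm.mul_const K) (huIoc.aestronglyMeasurable.mul hgm.aestronglyMeasurable) ?_
      rw [ae_restrict_iff' measurableSet_Ioc]
      refine ae_of_all _ fun y hy => ?_
      rw [Real.norm_eq_abs, abs_mul]
      exact mul_le_mul_of_nonneg_left (hgK y hy) (abs_nonneg _)
    have h1ii : IntervalIntegrable (fun y => κ * Real.exp (Φ * (b - y)) * g y) volume aund b :=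
      (intervalIntegrable_iff_integrableOn_Ioc_of_le hab).2 h1int
    have h2ii : IntervalIntegrable (fun y => uhat (b - y) * g y) volume aund b :=
      (intervalIntegrable_iff_integrableOn_Ioc_of_le hab).2 h2int
    -- rewrite the integrand using the decomposition of W
    have hsplit : ∫ y in aund..b, W (b - y) * g y
        = (∫ y in aund..b, κ * Real.exp (Φ * (b - y)) * g y)
          - ∫ y in aund..b, uhat (b - y) * g y := by
      rw [← intervalIntegral.integral_sub h1ii h2ii]
      refine intervalIntegral.integral_congr fun y hy => ?_
      rw [uIcc_of_le hab] at hy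
      rw [hW (b - y) (by linarith [hy.2])]
      ring
    -- evaluate the kappa part
    have hkval : ∫ y in aund..b, κ * Real.exp (Φ * (b - y)) * g y = -(κ * X b) := by
      have hrw : (fun y => κ * Real.exp (Φ * (b - y)) * g y)
          = fun y => (κ * Real.exp (Φ * b)) * (Real.exp (-(Φ * y)) * g y) := by
        funext y
        rw [show Φ * (b - y) = Φ * b + -(Φ * y) by ring, Real.exp_add]
        ring
      rw [hrw, intervalIntegral.integral_const_mul, hI b hb]
      have hone : Real.exp (Φ * b) * Real.exp (-(Φ * b)) = 1 := by
        rw [← Real.exp_add]; simp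
      linear_combination (-(κ * X b)) * hone
    rw [Gam, hsplit, hkval]
    ring
  -- the rescaled uhat integral, as an integral over Ici 0
  set Fn : ℝ → ℝ → ℝ := fun b t =>
    (Ioc (0:ℝ) (b - aund)).indicator (fun t => uhat t * g (b - t) / b) t with hFn
  have hFn_eq : ∀ b : ℝ, max aund 0 ≤ b →
      (∫ t in Ici (0:ℝ), Fn b t) = (∫ y in aund..b, uhat (b - y) * g y) / b := by
    intro b hb
    have hab : aund ≤ b := le_trans (le_max_left _ _) hb
    have h0ba : (0:ℝ) ≤ b - aund := by linarith
    rw [hFn]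
    rw [setIntegral_indicator measurableSet_Ioc,
      show Ici (0:ℝ) ∩ Ioc 0 (b - aund) = Ioc 0 (b - aund) from
        inter_eq_self_of_subset_right (fun x hx => le_of_lt hx.1),
      ← intervalIntegral.integral_of_le h0ba, intervalIntegral.integral_div]
    congr 1
    have hc := intervalIntegral.integral_comp_sub_left (a := aund) (b := b)
      (fun t => uhat t * g (b - t)) b
    simp only [sub_sub_cancel, sub_self] at hc
    exact hc.symm
  -- dominated convergence
  set Cb : ℝ := 2 * M * (1 + |aund|) + q * |CU| with hCb
  have hlimJ : Tendsto (fun b => ∫ t in Ici (0:ℝ), Fn b t) atTop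
      (nhds ((1 / q - κ / Φ) * (2 * αp))) := by
    have hdct : Tendsto (fun b => ∫ t in Ici (0:ℝ), Fn b t) atTop
        (nhds (∫ t in Ici (0:ℝ), uhat t * (2 * αp))) := by
      refine tendsto_integral_filter_of_dominated_convergence
        (bound := fun t => |uhat t| * Cb) ?_ ?_ (h_int.norm.mul_const Cb) ?_
      · refine Eventually.of_forall fun b => ?_
        exact (((h_int.aestronglyMeasurable.aemeasurable.mul
          (hgm.comp (measurable_const.sub measurable_id)).aemeasurable).div
          aemeasurable_const).aestronglyMeasurable).indicator measurableSet_Ioc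
      · filter_upwards [eventually_ge_atTop (1:ℝ)] with b hb1
        refine ae_of_all _ fun t => ?_
        by_cases ht : t ∈ Ioc (0:ℝ) (b - aund)
        · simp only [hFn]
          rw [indicator_of_mem ht]
          have hb0 : (0:ℝ) < b := lt_of_lt_of_le one_pos hb1
          have habs : |b - t| ≤ (1 + |aund|) * b := by
            rw [abs_le]
            constructor
            · have h1 : -|aund| ≤ aund := neg_abs_le aund
              have h2 : |aund| ≤ |aund| * b := le_mul_of_one_le_right (abs_nonneg _) hb1
              have h3 : aund ≤ b - t := by linarith [ht.2]
              nlinarith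
            · nlinarith [ht.1, mul_nonneg (abs_nonneg aund) hb0.le]
          have hgle : |g (b - t)| ≤ Cb * b := by
            have := hgb (b - t)
            have h4 : q * |CU| ≤ q * |CU| * b :=
              le_mul_of_one_le_right (by positivity) hb1
            nlinarith
          have : ‖uhat t * g (b - t) / b‖ = |uhat t| * |g (b - t)| / b := by
            rw [Real.norm_eq_abs, abs_div, abs_mul, abs_of_pos hb0]
          rw [this, div_le_iff₀ hb0]
          calc |uhat t| * |g (b - t)| ≤ |uhat t| * (Cb * b) :=
                mul_le_mul_of_nonneg_left hgle (abs_nonneg _)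
            _ = |uhat t| * Cb * b := by ring
        · simp only [hFn]
          rw [indicator_of_notMem ht]
          simp only [norm_zero]
          positivity
      · have hne : ∀ᵐ t : ℝ ∂volume.restrict (Ici 0), t ≠ 0 := by
          refine ae_restrict_of_ae ?_
          rw [ae_iff]
          simp only [ne_eq, not_not, setOf_eq_eq_singleton]
          exact Real.volume_singleton
        filter_upwards [hne, ae_restrict_mem measurableSet_Ici] with t ht0 htmem
        have ht : (0:ℝ) < t := lt_of_le_of_ne htmem (Ne.symm ht0)
        have hinner : Tendsto (fun b : ℝ => (2 * αp * (b - t) + q * CU) / b) atTop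
            (nhds (2 * αp)) := by
          have heq : ∀ᶠ b : ℝ in atTop,
              2 * αp + (q * CU - 2 * αp * t) * b⁻¹ = (2 * αp * (b - t) + q * CU) / b := by
            filter_upwards [eventually_gt_atTop (0:ℝ)] with b hb
            field_simp
            ring
          have hlim : Tendsto (fun b : ℝ => 2 * αp + (q * CU - 2 * αp * t) * b⁻¹) atTop
              (nhds (2 * αp)) := by
            have := tendsto_inv_atTop_zero (𝕜 := ℝ)
            simpa using tendsto_const_nhds.add (this.const_mul (q * CU - 2 * αp * t))
          exact Tendsto.congr' heq hlim
        have h2 : Tendsto (fun b : ℝ => uhat t * ((2 * αp * (b - t) + q * CU) / b)) atTop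
            (nhds (uhat t * (2 * αp))) := hinner.const_mul (uhat t)
        refine Tendsto.congr' ?_ h2
        filter_upwards [eventually_ge_atTop (max (t + aund) t)] with b hb
        have hb1 : t + aund ≤ b := le_trans (le_max_left _ _) hb
        have hb2 : t ≤ b := le_trans (le_max_right _ _) hb
        have htmem' : t ∈ Ioc (0:ℝ) (b - aund) := ⟨ht, by linarith⟩
        simp only [hFn]
        rw [indicator_of_mem htmem', hg (b - t),
          if_neg (not_lt.2 (by linarith : (0:ℝ) ≤ b - t))]
        ring
    have hval : ∫ t in Ici (0:ℝ), uhat t * (2 * αp) = (1 / q - κ / Φ) * (2 * αp) := by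
      rw [integral_mul_const, h_val]
    rwa [hval] at hdct
  -- main limit
  have hmain : Tendsto (fun b => Gam W g CU CD aund b / b) atTop (nhds (-(2 * αp) / q)) := by
    have hXlim : Tendsto (fun b => X b / b) atTop (nhds (2 * αp / Φ)) := by
      have heq : ∀ᶠ b : ℝ in atTop,
          2 * αp / Φ + (q * CU / Φ + 2 * αp / Φ ^ 2) * b⁻¹ = X b / b := by
        filter_upwards [eventually_gt_atTop (0:ℝ)] with b hb
        rw [hX]
        field_simp
      refine Tendsto.congr' heq ?_
      have := tendsto_inv_atTop_zero (𝕜 := ℝ)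
      simpa using tendsto_const_nhds.add (this.const_mul (q * CU / Φ + 2 * αp / Φ ^ 2))
    have hT : Tendsto (fun b => (CD + CU) * b⁻¹ - κ * (X b / b) - ∫ t in Ici (0:ℝ), Fn b t)
        atTop (nhds (0 - κ * (2 * αp / Φ) - (1 / q - κ / Φ) * (2 * αp))) := by
      refine Tendsto.sub (Tendsto.sub ?_ (hXlim.const_mul κ)) hlimJ
      have := tendsto_inv_atTop_zero (𝕜 := ℝ)
      simpa using this.const_mul (CD + CU)
    have hval : 0 - κ * (2 * αp / Φ) - (1 / q - κ / Φ) * (2 * αp) = -(2 * αp) / q := by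
      field_simp
      ring
    rw [hval] at hT
    refine Tendsto.congr' ?_ hT
    filter_upwards [eventually_ge_atTop (max aund 0), eventually_gt_atTop (0:ℝ)] with b hb hb0
    rw [hGam b hb, hFn_eq b hb]
    field_simp
  refine ⟨hmain, ?_⟩
  have hneg : -(2 * αp) / q < 0 := div_neg_of_neg_of_pos (by linarith) hq
  have hprod : Tendsto (fun b => Gam W g CU CD aund b / b * b) atTop atBot :=
    Tendsto.neg_mul_atTop hneg hmain tendsto_id
  refine Tendsto.congr' ?_ hprod
  filter_upwards [eventually_gt_atTop (0:ℝ)] with b hb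
  exact div_mul_cancel₀ _ (ne_of_gt hb)
end

section
/- Set a̲ := Φ^{−1} log( (α⁻ − q C_U)/(α⁻ + α⁺) ) < 0 and, for b > a̲, define γ(a̲, b) := (q C_U − α⁻) W(b − a̲) + (α⁻ + α⁺) W(b). Then γ(a̲, b) ≤ 0 for every b > a̲. -/
open MeasureTheory Filter Set

/-- Linear running cost: with `a̲ = Φ⁻¹ log((α⁻ - q C_U)/(α⁻ + α⁺)) < 0`,
`γ(a̲, b) = (q C_U - α⁻) W(b - a̲) + (α⁻ + α⁺) W(b) ≤ 0` for every `b > a̲`. -/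
theorem stmt17
    (Φ q αm αp CU : ℝ)
    (hΦ : 0 < Φ) (hq : 0 < q) (hαm : 0 < αm) (hαp : 0 < αp)
    (h₁ : 0 < q * CU + αp) (h₂ : q * CU - αm < 0)
    (W : ℝ → ℝ)
    (hW_neg : ∀ x, x < 0 → W x = 0)
    (hW_nonneg : ∀ x, 0 ≤ x → 0 ≤ W x)
    (hW_exp : MonotoneOn (fun x => Real.exp (-(Φ * x)) * W x) (Set.Ici 0))
    (aund : ℝ) (haund : aund = Φ⁻¹ * Real.log ((αm - q * CU) / (αm + αp))) :
    aund < 0 ∧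
    ∀ b : ℝ, aund < b →
      (q * CU - αm) * W (b - aund) + (αm + αp) * W b ≤ 0 := by
  have hden : 0 < αm + αp := by linarith
  have hr : 0 < (αm - q * CU) / (αm + αp) := div_pos (by linarith) hden
  have hr1 : (αm - q * CU) / (αm + αp) < 1 := (div_lt_one hden).2 (by linarith)
  have hlog : Real.log ((αm - q * CU) / (αm + αp)) < 0 := Real.log_neg hr hr1
  have haund0 : aund < 0 := by
    rw [haund]; exact mul_neg_of_pos_of_neg (inv_pos.2 hΦ) hlog
  have hexp : Real.exp (Φ * aund) = (αm - q * CU) / (αm + αp) := by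
    rw [haund, ← mul_assoc, mul_inv_cancel₀ hΦ.ne', one_mul, Real.exp_log hr]
  refine ⟨haund0, fun b hb => ?_⟩
  have hba : 0 ≤ b - aund := by linarith
  have hWba : 0 ≤ W (b - aund) := hW_nonneg _ hba
  rcases lt_or_ge b 0 with hb0 | hb0
  · rw [hW_neg b hb0]
    nlinarith
  · have h := hW_exp (show b ∈ Set.Ici (0:ℝ) from hb0)
      (show b - aund ∈ Set.Ici (0:ℝ) from hba) (by linarith)
    simp only at h
    have e1 : Real.exp (Φ * b) * Real.exp (-(Φ * b)) = 1 := by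
      rw [← Real.exp_add]; simp
    have e2 : Real.exp (Φ * b) * Real.exp (-(Φ * (b - aund))) = Real.exp (Φ * aund) := by
      rw [← Real.exp_add]; ring_nf
    have key : W b ≤ Real.exp (Φ * aund) * W (b - aund) := by
      have h2 := mul_le_mul_of_nonneg_left h (Real.exp_pos (Φ * b)).le
      rw [← mul_assoc, e1, one_mul, ← mul_assoc, e2] at h2
      exact h2
    rw [hexp] at key
    have key2 : (αm + αp) * W b ≤ (αm - q * CU) * W (b - aund) := by
      have h3 := mul_le_mul_of_nonneg_left key hden.le
      have hmul : (αm + αp) * ((αm - q * CU) / (αm + αp) * W (b - aund))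
          = (αm - q * CU) * W (b - aund) := by
        field_simp
      linarith [hmul ▸ h3]
    linarith
end
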